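/- arXiv:2312.03944 — 3 statements merged into one kernel-verified Lean document; each statement's English description precedes it below -/
import Mathlib

section
/- Let E_q = ∫_ℝ y·q(y) dy. (i) If ℓ_− ∈ ℝ and φ_− : ℝ → ℝ is a nondecreasing function satisfying φ_−(x) = g((q_{ℓ_−} * φ_−)(x)) for all x, with lim_{x→−∞} φ_−(x) = 0 and lim_{x→+∞} φ_−(x) = θ, then ℓ_− > E_q. (ii) If ℓ_+ ∈ ℝ and φ_+ : ℝ → ℝ is a nondecreasing function satisfying φ_+(x) = g((q_{ℓ_+} * φ_+)(x)) for all x, with lim_{x→−∞} φ_+(x) = θ and lim_{x→+∞} φ_+(x) = 1, then ℓ_+ < E_q. In particular, ℓ_− > ℓ_+. -/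
open MeasureTheory Filter Topology

/-- Convolution `(q * u)(x) = ∫ q(y) u(x - y) dy`. -/
noncomputable def conv (q u : ℝ → ℝ) (x : ℝ) : ℝ := ∫ y : ℝ, q y * u (x - y)

/-- The shifted kernel `q_ℓ(x) = q(x + ℓ)`. -/
def qshift (q : ℝ → ℝ) (ℓ : ℝ) (x : ℝ) : ℝ := q (x + ℓ)

/-- The bistable setting: a `C¹` compactly supported probability density `q`, and a
polynomial `P` (the recursion polynomial, i.e. `g` on `[0,1]`) with `P(0) = 0`, `P(1) = 1`,
`0 < P < 1` and `P' > 0` on `(0,1)`; the nonlinearity `f(x) = P(x) - x` has a unique zero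
`θ ∈ (0,1)` and `f'(0) < 0`, `f'(1) < 0` (equivalently `P'(0) < 1`, `P'(1) < 1`). -/
structure BistableSetting where
  q : ℝ → ℝ
  P : Polynomial ℝ
  θ : ℝ
  hq_diff : ContDiff ℝ 1 q
  hq_supp : HasCompactSupport q
  hq_nonneg : ∀ x, 0 ≤ q x
  hq_int : ∫ x : ℝ, q x = 1
  hP0 : P.eval 0 = 0
  hP1 : P.eval 1 = 1
  hP_range : ∀ x ∈ Set.Ioo (0 : ℝ) 1, 0 < P.eval x ∧ P.eval x < 1
  hP_mono : ∀ x ∈ Set.Ioo (0 : ℝ) 1, 0 < (Polynomial.derivative P).eval x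
  hθ_mem : θ ∈ Set.Ioo (0 : ℝ) 1
  hθ_zero : P.eval θ = θ
  hθ_unique : ∀ x ∈ Set.Ioo (0 : ℝ) 1, P.eval x = x → x = θ
  hf'0 : (Polynomial.derivative P).eval 0 < 1
  hf'1 : (Polynomial.derivative P).eval 1 < 1

/-- The nonlinearity `g`, equal to the polynomial `P` on `[0,1]` and extended linearly:
`g(x) = x + f'(0)·x` for `x < 0` and `g(x) = x + f'(1)(x-1)` for `x > 1`. -/
noncomputable def BistableSetting.g (S : BistableSetting) (x : ℝ) : ℝ :=
  if x < 0 then (Polynomial.derivative S.P).eval 0 * x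
  else if x ≤ 1 then S.P.eval x
  else 1 + (Polynomial.derivative S.P).eval 1 * (x - 1)

/-- A traveling wave with speed `ℓ`: a nondecreasing `C¹` function `φ` with
`φ = g(q_ℓ * φ)`, `φ(-∞) = 0` and `φ(+∞) = 1`. -/
structure IsTravelingWave (S : BistableSetting) (ℓ : ℝ) (φ : ℝ → ℝ) : Prop where
  mono : Monotone φ
  smooth : ContDiff ℝ 1 φ
  wave_eq : ∀ x, φ x = S.g (conv (qshift S.q ℓ) φ x)
  limit_bot : Tendsto φ atBot (𝓝 0)
  limit_top : Tendsto φ atTop (𝓝 1)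

section TWaux

set_option maxHeartbeats 1000000

open intervalIntegral Set

lemma tw_cont_conv {q φ : ℝ → ℝ} (hqc : Continuous q) (hqs : HasCompactSupport q)
    (hφmes : Measurable φ) {C : ℝ} (hC : ∀ x, |φ x| ≤ C) :
    Continuous fun x => ∫ z, q z * φ (x - z) := by
  have key : ∀ x : ℝ, ∫ z, q z * φ (x - z) = ∫ u, q (x - u) * φ u := by
    intro x
    have h1 : (fun z => q z * φ (x - z)) = fun z => (fun u => q (x - u) * φ u) (x - z) := by
      funext z; simp [sub_sub_cancel]
    rw [h1]
    calc ∫ z, (fun u => q (x - u) * φ u) (x - z)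
        = ∫ z, (fun w => (fun u => q (x - u) * φ u) (x + w)) (-z) := by
          simp only [sub_eq_add_neg]
      _ = ∫ w, (fun u => q (x - u) * φ u) (x + w) :=
          integral_neg_eq_self (fun w => (fun u => q (x - u) * φ u) (x + w)) volume
      _ = ∫ u, q (x - u) * φ u :=
          integral_add_left_eq_self (fun u => q (x - u) * φ u) x
  have heq : (fun x => ∫ z, q z * φ (x - z)) = fun x => ∫ u, q (x - u) * φ u := funext key
  rw [heq]
  obtain ⟨z₀, hz₀⟩ := hqc.abs.exists_forall_ge_of_hasCompactSupport hqs.abs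
  set Cq := |q z₀| with hCq
  obtain ⟨r, hr⟩ := hqs.isBounded.subset_closedBall 0
  set R := max r 0 with hR
  have hqzero : ∀ u : ℝ, R < |u| → q u = 0 := by
    intro u hu
    by_contra h
    have hmem : u ∈ tsupport q := subset_tsupport q (by simpa [Function.support] using h)
    have := hr hmem
    rw [Metric.mem_closedBall, Real.dist_eq, sub_zero] at this
    exact absurd (this.trans (le_max_left _ _)) (not_le.2 hu)
  rw [continuous_iff_continuousAt]
  intro x₀
  refine continuousAt_of_dominated (F := fun x u => q (x - u) * φ u)
    (bound := (Icc (x₀ - (R + 1)) (x₀ + (R + 1))).indicator fun _ => Cq * C) ?_ ?_ ?_ ?_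
  · exact .of_forall fun x =>
      (((hqc.comp (continuous_const.sub continuous_id)).measurable).mul hφmes).aestronglyMeasurable
  · filter_upwards [Metric.ball_mem_nhds x₀ one_pos] with x hx
    refine .of_forall fun u => ?_
    rw [Metric.mem_ball, Real.dist_eq] at hx
    by_cases hu : u ∈ Icc (x₀ - (R + 1)) (x₀ + (R + 1))
    · rw [Set.indicator_of_mem hu]
      have h1 : |q (x - u)| ≤ Cq := hz₀ (x - u)
      calc ‖q (x - u) * φ u‖ = |q (x - u)| * |φ u| := abs_mul _ _
        _ ≤ Cq * C := mul_le_mul h1 (hC u) (abs_nonneg _) ((abs_nonneg _).trans h1)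
    · rw [Set.indicator_of_notMem hu]
      have hRlt : R < |x - u| := by
        have hax := abs_lt.1 hx
        simp only [Set.mem_Icc, not_and_or, not_le] at hu
        rcases hu with hu | hu
        · have : R < x - u := by linarith
          exact this.trans_le (le_abs_self _)
        · have : R < u - x := by linarith
          calc R < u - x := this
            _ ≤ |u - x| := le_abs_self _
            _ = |x - u| := abs_sub_comm _ _
      rw [hqzero _ hRlt, zero_mul, norm_zero]
  · exact (integrable_indicator_iff measurableSet_Icc).2
      (integrableOn_const measure_Icc_lt_top.ne)
  · exact .of_forall fun u =>
      ((hqc.comp (continuous_id.sub continuous_const)).mul continuous_const).continuousAt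

lemma tw_key {q φ : ℝ → ℝ} (hqc : Continuous q) (hqs : HasCompactSupport q)
    (hq0 : ∀ x, 0 ≤ q x) (hq1 : ∫ x, q x = 1) (ℓ A B : ℝ)
    (hφm : Monotone φ) (hA : Tendsto φ atBot (𝓝 A)) (hB : Tendsto φ atTop (𝓝 B))
    (hψc : Continuous fun x => ∫ z, q z * φ (x + ℓ - z)) :
    Tendsto (fun n : ℕ => ∫ x in (-(n : ℝ))..(n : ℝ), ((∫ z, q z * φ (x + ℓ - z)) - φ x))
      atTop (𝓝 ((B - A) * (ℓ - ∫ y, y * q y))) := by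
  have hφmes : Measurable φ := hφm.measurable
  have hφA : ∀ x, A ≤ φ x := fun x =>
    le_of_tendsto hA (eventually_atBot.2 ⟨x, fun y hy => hφm hy⟩)
  have hφB : ∀ x, φ x ≤ B := fun x =>
    ge_of_tendsto hB (eventually_atTop.2 ⟨x, fun y hy => hφm hy⟩)
  set C := max |A| |B| with hCdef
  have hC : ∀ x, |φ x| ≤ C := fun x => abs_le.2
    ⟨by have h1 := hφA x; have h2 := neg_abs_le A; have := le_max_left |A| |B|; linarith,
     by have h1 := hφB x; have h2 := le_abs_self B; have := le_max_right |A| |B|; linarith⟩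
  have hC0 : 0 ≤ C := (abs_nonneg _).trans (hC 0)
  have hqint : Integrable q := hqc.integrable_of_hasCompactSupport hqs
  obtain ⟨r, hr⟩ := hqs.isBounded.subset_closedBall 0
  set R := max r 0 with hR
  have hR0 : 0 ≤ R := le_max_right _ _
  have hRz : ∀ z : ℝ, q z ≠ 0 → |z| ≤ R := by
    intro z hz
    have hmem : z ∈ tsupport q := subset_tsupport q (by simpa [Function.support] using hz)
    have := hr hmem
    rw [Metric.mem_closedBall, Real.dist_eq, sub_zero] at this
    exact this.trans (le_max_left _ _)
  set M := |ℓ| + R with hM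
  have hM0 : 0 ≤ M := add_nonneg (abs_nonneg _) hR0
  have hint_z : ∀ c : ℝ, Integrable fun z => q z * φ (c - z) := by
    intro c
    have h := hqint.bdd_mul
      ((hφmes.comp (measurable_const.sub measurable_id)).aestronglyMeasurable)
      (.of_forall fun z => by simpa using hC (c - z))
    simpa [mul_comm] using h
  have hφii : ∀ a b : ℝ, IntervalIntegrable φ volume a b := fun a b => hφm.intervalIntegrable
  set F : ℝ → ℝ := fun t => ∫ x in (0 : ℝ)..t, φ x with hF
  have hFc : Continuous F := intervalIntegral.continuous_primitive hφii 0
  have hFd : ∀ u v : ℝ, F v - F u = ∫ x in u..v, φ x := fun u v =>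
    integral_interval_sub_left (hφii 0 v) (hφii 0 u)
  -- the identity
  have hiden : ∀ n : ℕ, (∫ x in (-(n : ℝ))..(n : ℝ), ((∫ z, q z * φ (x + ℓ - z)) - φ x))
      = ∫ z, q z * ((F ((n : ℝ) + (ℓ - z)) - F (n : ℝ))
          - (F (-(n : ℝ) + (ℓ - z)) - F (-(n : ℝ)))) := by
    intro n
    set a : ℝ := -(n : ℝ) with ha
    set b : ℝ := (n : ℝ) with hb
    have hab : a ≤ b := by
      rw [ha, hb]; have : (0:ℝ) ≤ (n:ℝ) := Nat.cast_nonneg n; linarith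
    have hmes : AEStronglyMeasurable (fun p : ℝ × ℝ => q p.2 * φ (p.1 + ℓ - p.2))
        ((volume.restrict (Set.Ioc a b)).prod volume) :=
      ((hqc.measurable.comp measurable_snd).mul
        (hφmes.comp ((measurable_fst.add_const ℓ).sub measurable_snd))).aestronglyMeasurable
    have hprod : Integrable (fun p : ℝ × ℝ => q p.2 * φ (p.1 + ℓ - p.2))
        ((volume.restrict (Set.Ioc a b)).prod volume) := by
      refine (integrable_prod_iff hmes).2 ⟨.of_forall fun x => hint_z (x + ℓ), ?_⟩
      refine Integrable.mono' (integrable_const C) hmes.norm.integral_prod_right'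
        (.of_forall fun x => ?_)
      have h1 : ∀ z : ℝ, ‖q z * φ (x + ℓ - z)‖ ≤ q z * C := by
        intro z
        rw [norm_mul, Real.norm_of_nonneg (hq0 z)]
        exact mul_le_mul_of_nonneg_left (by simpa using hC (x + ℓ - z)) (hq0 z)
      calc ‖∫ z, ‖q z * φ (x + ℓ - z)‖‖
          = ∫ z, ‖q z * φ (x + ℓ - z)‖ :=
            Real.norm_of_nonneg (integral_nonneg fun z => norm_nonneg _)
        _ ≤ ∫ z, q z * C := integral_mono (hint_z (x + ℓ)).norm (hqint.mul_const C) h1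
        _ = C := by rw [MeasureTheory.integral_mul_const, hq1, one_mul]
    have hswap : (∫ x in a..b, (∫ z, q z * φ (x + ℓ - z)))
        = ∫ z, q z * (F (b + (ℓ - z)) - F (a + (ℓ - z))) := by
      rw [intervalIntegral.integral_of_le hab, MeasureTheory.integral_integral_swap hprod]
      congr 1
      funext z
      rw [MeasureTheory.integral_const_mul, ← intervalIntegral.integral_of_le hab]
      congr 1
      have harg : (fun x : ℝ => φ (x + ℓ - z)) = fun x : ℝ => φ (x + (ℓ - z)) := by
        funext x; ring_nf
      rw [harg, intervalIntegral.integral_comp_add_right, ← hFd]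
    rw [intervalIntegral.integral_sub ((hψc.intervalIntegrable a b)) (hφii a b), hswap,
      ← hFd a b]
    have hKint : Integrable fun z => q z * (F b - F a) := hqint.mul_const _
    have hWint : Integrable fun z => q z * (F (b + (ℓ - z)) - F (a + (ℓ - z))) := by
      refine Continuous.integrable_of_hasCompactSupport
        (hqc.mul ((hFc.comp (continuous_const.add (continuous_const.sub continuous_id))).sub
          (hFc.comp (continuous_const.add (continuous_const.sub continuous_id))))) ?_
      exact hqs.mul_right
    have hqK : (∫ z, q z * (F b - F a)) = F b - F a := by
      rw [MeasureTheory.integral_mul_const, hq1, one_mul]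
    rw [← hqK, ← integral_sub hWint hKint]
    congr 1
    funext z
    ring
  -- value of the target as an integral
  have hzq : Integrable fun z => z * q z :=
    (continuous_id.mul hqc).integrable_of_hasCompactSupport hqs.mul_left
  have hTrep : (∫ z, q z * ((B - A) * (ℓ - z))) = (B - A) * (ℓ - ∫ y, y * q y) := by
    have h1 : (fun z => q z * ((B - A) * (ℓ - z)))
        = fun z => (B - A) * (ℓ * q z - z * q z) := by funext z; ring
    rw [h1, MeasureTheory.integral_const_mul,
      integral_sub (hqint.const_mul ℓ) hzq, MeasureTheory.integral_const_mul, hq1, mul_one]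
  -- the bound
  set K : ℕ → ℝ := fun n => M * (B - φ ((n : ℝ) - M)) + M * (φ (-(n : ℝ) + M) - A) with hK
  have hbound : ∀ n : ℕ,
      ‖(∫ z, q z * ((F ((n : ℝ) + (ℓ - z)) - F (n : ℝ))
          - (F (-(n : ℝ) + (ℓ - z)) - F (-(n : ℝ))))) - (B - A) * (ℓ - ∫ y, y * q y)‖
        ≤ K n := by
    intro n
    set a : ℝ := -(n : ℝ) with ha
    set b : ℝ := (n : ℝ) with hb
    rw [← hTrep]
    have hWint : Integrable fun z =>
        q z * ((F (b + (ℓ - z)) - F b) - (F (a + (ℓ - z)) - F a)) := by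
      refine Continuous.integrable_of_hasCompactSupport
        (hqc.mul (((hFc.comp (continuous_const.add (continuous_const.sub continuous_id))).sub
            continuous_const).sub
          ((hFc.comp (continuous_const.add (continuous_const.sub continuous_id))).sub
            continuous_const))) hqs.mul_right
    have hLint : Integrable fun z => q z * ((B - A) * (ℓ - z)) :=
      Continuous.integrable_of_hasCompactSupport
        (hqc.mul (continuous_const.mul (continuous_const.sub continuous_id))) hqs.mul_right
    rw [← integral_sub hWint hLint]
    refine le_trans (norm_integral_le_integral_norm _) ?_
    have hptw : ∀ z : ℝ,
        ‖q z * ((F (b + (ℓ - z)) - F b) - (F (a + (ℓ - z)) - F a))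
          - q z * ((B - A) * (ℓ - z))‖ ≤ q z * K n := by
      intro z
      rw [← mul_sub, norm_mul, Real.norm_of_nonneg (hq0 z)]
      by_cases hz : q z = 0
      · rw [hz, zero_mul, zero_mul]
      · refine mul_le_mul_of_nonneg_left ?_ (hq0 z)
        have hzR := hRz z hz
        set c : ℝ := ℓ - z with hc
        have hcM : |c| ≤ M := by
          rw [hc, hM, sub_eq_add_neg]
          calc |ℓ + -z| ≤ |ℓ| + |(-z)| := abs_add_le _ _
            _ = |ℓ| + |z| := by rw [abs_neg]
            _ ≤ |ℓ| + R := by linarith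
        have hD1 : ‖(F (b + c) - F b) - B * c‖ ≤ (B - φ (b - M)) * M := by
          have e1 : (F (b + c) - F b) - B * c = ∫ x in b..(b + c), (φ x - B) := by
            rw [intervalIntegral.integral_sub (hφii b (b+c)) intervalIntegrable_const,
              ← hFd b (b + c), intervalIntegral.integral_const]
            simp [smul_eq_mul]; ring
          rw [e1]
          have hbd : ∀ x ∈ Set.uIoc b (b + c), ‖φ x - B‖ ≤ B - φ (b - M) := by
            intro x hx
            have hxlb : b - M ≤ x := by
              have h1 : min b (b + c) < x := hx.1
              have h2 : b - M ≤ min b (b + c) :=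
                le_min (by linarith) (by have := neg_abs_le c; linarith)
              linarith
            have h3 : φ (b - M) ≤ φ x := hφm hxlb
            have h4 : φ x ≤ B := hφB x
            rw [Real.norm_eq_abs]
            exact abs_le.2 ⟨by linarith, by linarith⟩
          calc ‖∫ x in b..(b + c), (φ x - B)‖ ≤ (B - φ (b - M)) * |b + c - b| :=
              intervalIntegral.norm_integral_le_of_norm_le_const hbd
            _ = (B - φ (b - M)) * |c| := by ring_nf
            _ ≤ (B - φ (b - M)) * M :=
              mul_le_mul_of_nonneg_left hcM (by have := hφB (b - M); linarith)
        have hD2 : ‖(F (a + c) - F a) - A * c‖ ≤ (φ (a + M) - A) * M := by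
          have e1 : (F (a + c) - F a) - A * c = ∫ x in a..(a + c), (φ x - A) := by
            rw [intervalIntegral.integral_sub (hφii a (a+c)) intervalIntegrable_const,
              ← hFd a (a + c), intervalIntegral.integral_const]
            simp [smul_eq_mul]; ring
          rw [e1]
          have hbd : ∀ x ∈ Set.uIoc a (a + c), ‖φ x - A‖ ≤ φ (a + M) - A := by
            intro x hx
            have hxub : x ≤ a + M := by
              have h1 : x ≤ max a (a + c) := hx.2
              have h2 : max a (a + c) ≤ a + M :=
                max_le (by linarith) (by have := le_abs_self c; linarith)
              linarith
            have h3 : φ x ≤ φ (a + M) := hφm hxub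
            have h4 : A ≤ φ x := hφA x
            rw [Real.norm_eq_abs]
            exact abs_le.2 ⟨by linarith, by linarith⟩
          calc ‖∫ x in a..(a + c), (φ x - A)‖ ≤ (φ (a + M) - A) * |a + c - a| :=
              intervalIntegral.norm_integral_le_of_norm_le_const hbd
            _ = (φ (a + M) - A) * |c| := by ring_nf
            _ ≤ (φ (a + M) - A) * M :=
              mul_le_mul_of_nonneg_left hcM (by have := hφA (a + M); linarith)
        have hsplit : (F (b + c) - F b) - (F (a + c) - F a) - (B - A) * c
            = ((F (b + c) - F b) - B * c) - ((F (a + c) - F a) - A * c) := by ring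
        calc ‖(F (b + c) - F b) - (F (a + c) - F a) - (B - A) * c‖
            = ‖((F (b + c) - F b) - B * c) - ((F (a + c) - F a) - A * c)‖ := by rw [hsplit]
          _ ≤ ‖(F (b + c) - F b) - B * c‖ + ‖(F (a + c) - F a) - A * c‖ := norm_sub_le _ _
          _ ≤ (B - φ (b - M)) * M + (φ (a + M) - A) * M := add_le_add hD1 hD2
          _ = K n := by rw [hK]; ring
    calc (∫ z, ‖q z * ((F (b + (ℓ - z)) - F b) - (F (a + (ℓ - z)) - F a))
            - q z * ((B - A) * (ℓ - z))‖)
        ≤ ∫ z, q z * K n := integral_mono (hWint.sub hLint).norm (hqint.mul_const _) hptw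
      _ = K n := by rw [MeasureTheory.integral_mul_const, hq1, one_mul]
  -- conclusion
  have l0 : Tendsto (fun n : ℕ => (n : ℝ)) atTop atTop := tendsto_natCast_atTop_atTop
  have l1' : Tendsto (fun n : ℕ => (n : ℝ) - M) atTop atTop := by
    simpa [sub_eq_add_neg] using tendsto_atTop_add_const_right atTop (-M) l0
  have l2' : Tendsto (fun n : ℕ => -(n : ℝ) + M) atTop atBot := by
    have h1 : Tendsto (fun n : ℕ => -(n : ℝ)) atTop atBot := tendsto_neg_atTop_atBot.comp l0
    simpa using tendsto_atBot_add_const_right atTop M h1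
  have l1 : Tendsto (fun n : ℕ => φ ((n : ℝ) - M)) atTop (𝓝 B) := hB.comp l1'
  have l2 : Tendsto (fun n : ℕ => φ (-(n : ℝ) + M)) atTop (𝓝 A) := hA.comp l2'
  have hK0 : Tendsto K atTop (𝓝 0) := by
    have h1 : Tendsto K atTop (𝓝 (M * (B - B) + M * (A - A))) :=
      (((tendsto_const_nhds.sub l1).const_mul M).add ((l2.sub tendsto_const_nhds).const_mul M))
    simpa using h1
  have h0 : Tendsto (fun n : ℕ => (∫ x in (-(n : ℝ))..(n : ℝ),
      ((∫ z, q z * φ (x + ℓ - z)) - φ x)) - (B - A) * (ℓ - ∫ y, y * q y)) atTop (𝓝 0) :=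
    squeeze_zero_norm (fun n => by rw [hiden n]; exact hbound n) hK0
  have h2 := h0.add_const ((B - A) * (ℓ - ∫ y, y * q y))
  simpa using h2

lemma tw_conv_shift (q φ : ℝ → ℝ) (ℓ x : ℝ) :
    conv (qshift q ℓ) φ x = ∫ z, q z * φ (x + ℓ - z) := by
  unfold conv qshift
  calc ∫ y, q (y + ℓ) * φ (x - y)
      = ∫ y, (fun z => q z * φ (x + ℓ - z)) (y + ℓ) := by
        congr 1; funext y
        show q (y + ℓ) * φ (x - y) = q (y + ℓ) * φ (x + ℓ - (y + ℓ))
        congr 2; ring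
    _ = ∫ z, q z * φ (x + ℓ - z) := integral_add_right_eq_self (fun z => q z * φ (x + ℓ - z)) ℓ

lemma tw_pos_limit {d : ℝ → ℝ} (hdc : Continuous d) (hd0 : ∀ x, 0 ≤ d x) {x₀ L : ℝ}
    (hx : 0 < d x₀)
    (hL : Tendsto (fun n : ℕ => ∫ x in (-(n : ℝ))..(n : ℝ), d x) atTop (𝓝 L)) : 0 < L := by
  have hopen : IsOpen {x | d x₀ / 2 < d x} := isOpen_lt continuous_const hdc
  obtain ⟨δ, hδ, hball⟩ := Metric.isOpen_iff.1 hopen x₀ (by simpa using half_lt_self hx)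
  set ε := ∫ x in (x₀ - δ/2)..(x₀ + δ/2), d x with hε
  have hεpos : 0 < ε := by
    refine intervalIntegral_pos_of_pos_on (hdc.intervalIntegrable _ _) ?_ (by linarith)
    intro x hxm
    have hmem : x ∈ Metric.ball x₀ δ := by
      rw [Metric.mem_ball, Real.dist_eq]
      rcases hxm with ⟨h1, h2⟩
      rw [abs_lt]; constructor <;> linarith
    have := hball hmem
    have h2 : d x₀ / 2 < d x := this
    linarith
  have hev : ∀ᶠ n : ℕ in atTop, ε ≤ ∫ x in (-(n : ℝ))..(n : ℝ), d x := by
    filter_upwards [eventually_ge_atTop ⌈|x₀| + δ⌉₊] with n hn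
    have hn' : |x₀| + δ ≤ (n : ℝ) := (Nat.le_ceil _).trans (by exact_mod_cast hn)
    have hb1 : -(n : ℝ) ≤ x₀ - δ/2 := by
      have := neg_abs_le x₀; linarith
    have hb2 : x₀ + δ/2 ≤ (n : ℝ) := by
      have := le_abs_self x₀; linarith
    have i1 : (∫ x in (-(n:ℝ))..(x₀ - δ/2), d x) + ∫ x in (x₀ - δ/2)..(n:ℝ), d x
        = ∫ x in (-(n:ℝ))..(n:ℝ), d x :=
      intervalIntegral.integral_add_adjacent_intervals
        (hdc.intervalIntegrable _ _) (hdc.intervalIntegrable _ _)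
    have i2 : (∫ x in (x₀ - δ/2)..(x₀ + δ/2), d x) + ∫ x in (x₀ + δ/2)..(n:ℝ), d x
        = ∫ x in (x₀ - δ/2)..(n:ℝ), d x :=
      intervalIntegral.integral_add_adjacent_intervals
        (hdc.intervalIntegrable _ _) (hdc.intervalIntegrable _ _)
    have p1 : 0 ≤ ∫ x in (-(n:ℝ))..(x₀ - δ/2), d x :=
      intervalIntegral.integral_nonneg hb1 (fun u _ => hd0 u)
    have p2 : 0 ≤ ∫ x in (x₀ + δ/2)..(n:ℝ), d x :=
      intervalIntegral.integral_nonneg hb2 (fun u _ => hd0 u)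
    linarith
  exact lt_of_lt_of_le hεpos (ge_of_tendsto hL hev)

lemma tw_exists_eq {φ : ℝ → ℝ} (hφc : Continuous φ) {A B c : ℝ}
    (hA : Tendsto φ atBot (𝓝 A)) (hB : Tendsto φ atTop (𝓝 B))
    (h1 : A < c) (h2 : c < B) : ∃ x, φ x = c := by
  obtain ⟨b, hb⟩ : ∃ b, c < φ b := (hB.eventually (eventually_gt_nhds h2)).exists
  obtain ⟨a, ha, hab⟩ : ∃ a, φ a < c ∧ a ≤ b :=
    ((hA.eventually (eventually_lt_nhds h1)).and (eventually_le_atBot b)).exists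
  obtain ⟨x, _, hx⟩ := intermediate_value_Icc hab hφc.continuousOn
    (⟨ha.le, hb.le⟩ : c ∈ Icc (φ a) (φ b))
  exact ⟨x, hx⟩

namespace BistableSetting

variable (S : BistableSetting)

lemma theta_pos : 0 < S.θ := S.hθ_mem.1
lemma theta_lt_one : S.θ < 1 := S.hθ_mem.2

lemma P_strictMono : StrictMonoOn (fun x => S.P.eval x) (Icc (0:ℝ) 1) := by
  apply strictMonoOn_of_deriv_pos (convex_Icc 0 1)
    (S.P.continuous).continuousOn
  intro x hx
  rw [interior_Icc] at hx
  rw [Polynomial.deriv]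
  exact S.hP_mono x hx

lemma deriv0_nonneg : 0 ≤ (Polynomial.derivative S.P).eval 0 := by
  have h := S.P.hasDerivAt (0 : ℝ)
  rw [hasDerivAt_iff_tendsto_slope] at h
  have h' : Tendsto (slope (fun x => S.P.eval x) 0) (𝓝[>] 0)
      (𝓝 ((Polynomial.derivative S.P).eval 0)) :=
    h.mono_left (nhdsWithin_mono _ fun x hx => ne_of_gt hx)
  refine ge_of_tendsto h' ?_
  filter_upwards [Ioo_mem_nhdsGT_of_mem (Set.left_mem_Ico.2 one_pos)] with x hx
  rw [slope_def_field]
  have hPx := (S.hP_range x hx).1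
  rw [S.hP0]
  exact div_nonneg (by linarith) (by simpa using hx.1.le)

lemma deriv1_nonneg : 0 ≤ (Polynomial.derivative S.P).eval 1 := by
  have h := S.P.hasDerivAt (1 : ℝ)
  rw [hasDerivAt_iff_tendsto_slope] at h
  have h' : Tendsto (slope (fun x => S.P.eval x) 1) (𝓝[<] 1)
      (𝓝 ((Polynomial.derivative S.P).eval 1)) :=
    h.mono_left (nhdsWithin_mono _ fun x hx => ne_of_lt hx)
  refine ge_of_tendsto h' ?_
  filter_upwards [Ioo_mem_nhdsLT_of_mem (Set.right_mem_Ioc.2 one_pos)] with x hx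
  rw [slope_def_field]
  have hPx := (S.hP_range x hx).2
  rw [S.hP1]
  exact div_nonneg_of_nonpos (by linarith) (by linarith [hx.2])

/-- `P x < x` on `(0, θ)`. -/
lemma P_lt_self : ∀ x ∈ Ioo (0:ℝ) S.θ, S.P.eval x < x := by
  have hθ0 := S.theta_pos
  have hθ1 := S.theta_lt_one
  -- a witness near 0
  have hw : ∃ x₁ ∈ Ioo (0:ℝ) S.θ, S.P.eval x₁ < x₁ := by
    have hd : HasDerivAt (fun x => S.P.eval x - x)
        ((Polynomial.derivative S.P).eval 0 - 1) 0 := (S.P.hasDerivAt 0).sub (hasDerivAt_id 0)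
    rw [hasDerivAt_iff_tendsto_slope] at hd
    have hd' : Tendsto (slope (fun x => S.P.eval x - x) 0) (𝓝[>] 0)
        (𝓝 ((Polynomial.derivative S.P).eval 0 - 1)) :=
      hd.mono_left (nhdsWithin_mono _ fun x hx => ne_of_gt hx)
    have hev1 : ∀ᶠ x in 𝓝[>] (0:ℝ), slope (fun x => S.P.eval x - x) 0 x < 0 :=
      hd'.eventually_lt_const (by linarith [S.hf'0])
    have hev2 : Ioo (0:ℝ) S.θ ∈ 𝓝[>] (0:ℝ) :=
      Ioo_mem_nhdsGT_of_mem (Set.left_mem_Ico.2 hθ0)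
    obtain ⟨x₁, hs, hx₁⟩ := (hev1.and hev2).exists
    refine ⟨x₁, hx₁, ?_⟩
    rw [slope_def_field, S.hP0] at hs
    have hx₁0 : 0 < x₁ := hx₁.1
    have := (div_neg_iff).1 (by simpa using hs)
    rcases this with ⟨_, h2⟩ | ⟨h1, _⟩
    · linarith
    · linarith
  obtain ⟨x₁, hx₁, hPx₁⟩ := hw
  intro x hx
  by_contra hcon
  push_neg at hcon
  have hx01 : x ∈ Ioo (0:ℝ) 1 := ⟨hx.1, hx.2.trans hθ1⟩
  have hne : S.P.eval x ≠ x := fun h => absurd (S.hθ_unique x hx01 h) (ne_of_lt hx.2)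
  have hgt : x < S.P.eval x := lt_of_le_of_ne hcon (Ne.symm hne)
  have hcont : Continuous fun t => S.P.eval t - t := (S.P.continuous).sub continuous_id
  rcases lt_trichotomy x x₁ with hlt | heq | hgt'
  · -- f x > 0 > f x₁, x < x₁
    obtain ⟨y, hy, hy0⟩ := intermediate_value_Ioo' hlt.le hcont.continuousOn
      (⟨by linarith, by linarith⟩ :
        (0:ℝ) ∈ Ioo (S.P.eval x₁ - x₁) (S.P.eval x - x))
    replace hy0 : S.P.eval y - y = 0 := hy0
    exact absurd (S.hθ_unique y ⟨hx.1.trans hy.1, (hy.2.trans hx₁.2).trans hθ1⟩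
      (by linarith)) (ne_of_lt (hy.2.trans hx₁.2))
  · subst heq; linarith
  · obtain ⟨y, hy, hy0⟩ := intermediate_value_Ioo hgt'.le hcont.continuousOn
      (⟨by linarith, by linarith⟩ :
        (0:ℝ) ∈ Ioo (S.P.eval x₁ - x₁) (S.P.eval x - x))
    replace hy0 : S.P.eval y - y = 0 := hy0
    exact absurd (S.hθ_unique y ⟨hx₁.1.trans hy.1, (hy.2.trans hx.2).trans hθ1⟩
      (by linarith)) (ne_of_lt (hy.2.trans hx.2))

/-- `x < P x` on `(θ, 1)`. -/
lemma self_lt_P : ∀ x ∈ Ioo S.θ 1, x < S.P.eval x := by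
  have hθ0 := S.theta_pos
  have hθ1 := S.theta_lt_one
  have hw : ∃ x₁ ∈ Ioo S.θ 1, x₁ < S.P.eval x₁ := by
    have hd : HasDerivAt (fun x => S.P.eval x - x)
        ((Polynomial.derivative S.P).eval 1 - 1) 1 := (S.P.hasDerivAt 1).sub (hasDerivAt_id 1)
    rw [hasDerivAt_iff_tendsto_slope] at hd
    have hd' : Tendsto (slope (fun x => S.P.eval x - x) 1) (𝓝[<] 1)
        (𝓝 ((Polynomial.derivative S.P).eval 1 - 1)) :=
      hd.mono_left (nhdsWithin_mono _ fun x hx => ne_of_lt hx)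
    have hev1 : ∀ᶠ x in 𝓝[<] (1:ℝ), slope (fun x => S.P.eval x - x) 1 x < 0 :=
      hd'.eventually_lt_const (by linarith [S.hf'1])
    have hev2 : Ioo S.θ 1 ∈ 𝓝[<] (1:ℝ) :=
      Ioo_mem_nhdsLT_of_mem (Set.right_mem_Ioc.2 hθ1)
    obtain ⟨x₁, hs, hx₁⟩ := (hev1.and hev2).exists
    refine ⟨x₁, hx₁, ?_⟩
    rw [slope_def_field] at hs
    have hnum : 0 < S.P.eval x₁ - x₁ := by
      rw [S.hP1] at hs
      have hden : x₁ - 1 < 0 := by linarith [hx₁.2]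
      have := (div_neg_iff).1 hs
      rcases this with ⟨h1, h2⟩ | ⟨h1, h2⟩
      · linarith
      · linarith
    linarith
  obtain ⟨x₁, hx₁, hPx₁⟩ := hw
  intro x hx
  by_contra hcon
  push_neg at hcon
  have hx01 : x ∈ Ioo (0:ℝ) 1 := ⟨hθ0.trans hx.1, hx.2⟩
  have hne : S.P.eval x ≠ x := fun h => absurd (S.hθ_unique x hx01 h) (ne_of_gt hx.1)
  have hlt2 : S.P.eval x < x := lt_of_le_of_ne hcon hne
  have hcont : Continuous fun t => S.P.eval t - t := (S.P.continuous).sub continuous_id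
  rcases lt_trichotomy x x₁ with hlt | heq | hgt'
  · obtain ⟨y, hy, hy0⟩ := intermediate_value_Ioo hlt.le hcont.continuousOn
      (⟨by linarith, by linarith⟩ :
        (0:ℝ) ∈ Ioo (S.P.eval x - x) (S.P.eval x₁ - x₁))
    replace hy0 : S.P.eval y - y = 0 := hy0
    exact absurd (S.hθ_unique y ⟨hθ0.trans (hx.1.trans hy.1), hy.2.trans hx₁.2⟩
      (by linarith)) (ne_of_gt (hx.1.trans hy.1))
  · rw [heq] at hlt2; linarith
  · obtain ⟨y, hy, hy0⟩ := intermediate_value_Ioo' hgt'.le hcont.continuousOn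
      (⟨by linarith, by linarith⟩ :
        (0:ℝ) ∈ Ioo (S.P.eval x - x) (S.P.eval x₁ - x₁))
    replace hy0 : S.P.eval y - y = 0 := hy0
    exact absurd (S.hθ_unique y ⟨hθ0.trans (hx₁.1.trans hy.1), hy.2.trans hx.2⟩
      (by linarith)) (ne_of_gt (hx₁.1.trans hy.1))

lemma g_eq_P {t : ℝ} (h0 : 0 ≤ t) (h1 : t ≤ 1) : S.g t = S.P.eval t := by
  unfold BistableSetting.g
  rw [if_neg (not_lt.2 h0), if_pos h1]

lemma g_cont : Continuous S.g := by
  have hfun : S.g = fun x => if x ≤ 0 then (Polynomial.derivative S.P).eval 0 * x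
      else if x ≤ 1 then S.P.eval x
      else 1 + (Polynomial.derivative S.P).eval 1 * (x - 1) := by
    funext x
    unfold BistableSetting.g
    rcases lt_trichotomy x 0 with h | h | h
    · rw [if_pos h, if_pos h.le]
    · subst h
      rw [if_neg (lt_irrefl 0), if_pos le_rfl, if_pos zero_le_one, S.hP0, mul_zero]
    · rw [if_neg (not_lt.2 h.le), if_neg (not_le.2 h)]
  rw [hfun]
  refine Continuous.if_le ?_ ?_ continuous_id continuous_const ?_
  · exact continuous_const.mul continuous_id
  · refine Continuous.if_le ?_ ?_ continuous_id continuous_const ?_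
    · exact S.P.continuous
    · exact continuous_const.add (continuous_const.mul (continuous_id.sub continuous_const))
    · intro x hx
      rw [hx, S.hP1, sub_self, mul_zero, add_zero]
  · intro x hx
    rw [hx, mul_zero]
    rw [if_pos (zero_le_one), S.hP0]

lemma g_nonpos {t : ℝ} (ht : t ≤ 0) : S.g t ≤ 0 := by
  unfold BistableSetting.g
  split_ifs with h1 h2
  · exact mul_nonpos_of_nonneg_of_nonpos S.deriv0_nonneg h1.le
  · have : t = 0 := le_antisymm ht (not_lt.1 h1)
    rw [this, S.hP0]
  · linarith [not_le.1 h2]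

lemma g_le_theta {t : ℝ} (ht : t ≤ S.θ) : S.g t ≤ S.θ := by
  rcases lt_or_ge t 0 with h | h
  · exact (S.g_nonpos h.le).trans S.theta_pos.le
  · rw [S.g_eq_P h (ht.trans S.theta_lt_one.le)]
    rcases eq_or_lt_of_le ht with h2 | h2
    · rw [h2, S.hθ_zero]
    · have := S.P_strictMono ⟨h, (ht.trans S.theta_lt_one.le)⟩
        ⟨S.theta_pos.le, S.theta_lt_one.le⟩ h2
      simp only at this
      rw [S.hθ_zero] at this
      exact this.le

lemma g_ge_theta {t : ℝ} (ht : S.θ ≤ t) : S.θ ≤ S.g t := by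
  rcases le_or_gt t 1 with h | h
  · rw [S.g_eq_P (S.theta_pos.le.trans ht) h]
    rcases eq_or_lt_of_le ht with h2 | h2
    · rw [← h2, S.hθ_zero]
    · have := S.P_strictMono ⟨S.theta_pos.le, S.theta_lt_one.le⟩
        ⟨S.theta_pos.le.trans ht, h⟩ h2
      simp only at this
      rw [S.hθ_zero] at this
      exact this.le
  · unfold BistableSetting.g
    rw [if_neg (by linarith : ¬ t < 0), if_neg (not_le.2 h)]
    have h1 : 0 ≤ (Polynomial.derivative S.P).eval 1 * (t - 1) :=
      mul_nonneg S.deriv1_nonneg (by linarith)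
    linarith [S.theta_lt_one]

lemma g_ge_one {t : ℝ} (ht : 1 ≤ t) : 1 ≤ S.g t := by
  rcases eq_or_lt_of_le ht with h | h
  · rw [← h, S.g_eq_P zero_le_one le_rfl, S.hP1]
  · unfold BistableSetting.g
    rw [if_neg (by linarith : ¬ t < 0), if_neg (not_le.2 h)]
    have h1 : 0 ≤ (Polynomial.derivative S.P).eval 1 * (t - 1) :=
      mul_nonneg S.deriv1_nonneg (by linarith)
    linarith

lemma g_le_self {t : ℝ} (ht : t ∈ Icc (0:ℝ) S.θ) : S.g t ≤ t := by
  rcases eq_or_lt_of_le ht.1 with h0 | h0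
  · rw [← h0, S.g_eq_P le_rfl zero_le_one, S.hP0]
  rcases eq_or_lt_of_le ht.2 with h1 | h1
  · rw [h1, S.g_eq_P S.theta_pos.le S.theta_lt_one.le, S.hθ_zero]
  · rw [S.g_eq_P ht.1 (ht.2.trans S.theta_lt_one.le)]
    exact (S.P_lt_self t ⟨h0, h1⟩).le

lemma g_lt_self {t : ℝ} (ht : t ∈ Ioo (0:ℝ) S.θ) : S.g t < t := by
  rw [S.g_eq_P ht.1.le (ht.2.trans S.theta_lt_one).le]
  exact S.P_lt_self t ht

lemma g_ge_self {t : ℝ} (ht : t ∈ Icc S.θ 1) : t ≤ S.g t := by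
  rcases eq_or_lt_of_le ht.1 with h0 | h0
  · rw [← h0, S.g_eq_P S.theta_pos.le S.theta_lt_one.le, S.hθ_zero]
  rcases eq_or_lt_of_le ht.2 with h1 | h1
  · rw [h1, S.g_eq_P zero_le_one le_rfl, S.hP1]
  · rw [S.g_eq_P (S.theta_pos.le.trans ht.1) ht.2]
    exact (S.self_lt_P t ⟨h0, h1⟩).le

lemma g_gt_self {t : ℝ} (ht : t ∈ Ioo S.θ 1) : t < S.g t := by
  rw [S.g_eq_P (S.theta_pos.trans ht.1).le ht.2.le]
  exact S.self_lt_P t ht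

end BistableSetting

end TWaux

/-- Speed comparison: any nondecreasing traveling wave connecting `0` to `θ` moves faster
than the mean `E_q = ∫ y q(y) dy` of the step density, and any nondecreasing traveling
wave connecting `θ` to `1` moves slower; in particular `ℓ₋ > ℓ₊`. -/
theorem traveling_wave_speed_comparison (S : BistableSetting) :
    (∀ (ℓm : ℝ) (φm : ℝ → ℝ), Monotone φm →
        (∀ x, φm x = S.g (conv (qshift S.q ℓm) φm x)) →
        Tendsto φm atBot (𝓝 0) → Tendsto φm atTop (𝓝 S.θ) →
        (∫ y : ℝ, y * S.q y) < ℓm) ∧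
    (∀ (ℓp : ℝ) (φp : ℝ → ℝ), Monotone φp →
        (∀ x, φp x = S.g (conv (qshift S.q ℓp) φp x)) →
        Tendsto φp atBot (𝓝 S.θ) → Tendsto φp atTop (𝓝 1) →
        ℓp < ∫ y : ℝ, y * S.q y) := by
  have hqc : Continuous S.q := S.hq_diff.continuous
  have hθ0 := S.theta_pos
  have hθ1 := S.theta_lt_one
  have hqint : Integrable S.q := hqc.integrable_of_hasCompactSupport S.hq_supp
  constructor
  · -- lower wave: 0 → θ
    intro ℓ φ hmono hwave hbot htop
    have hφmes : Measurable φ := hmono.measurable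
    have hφ0 : ∀ x, 0 ≤ φ x := fun x =>
      le_of_tendsto hbot (eventually_atBot.2 ⟨x, fun y hy => hmono hy⟩)
    have hφθ : ∀ x, φ x ≤ S.θ := fun x =>
      ge_of_tendsto htop (eventually_atTop.2 ⟨x, fun y hy => hmono hy⟩)
    have hCb : ∀ x, |φ x| ≤ S.θ := fun x => abs_le.2 ⟨by linarith [hφ0 x], hφθ x⟩
    have hψc : Continuous fun x => ∫ z, S.q z * φ (x + ℓ - z) :=
      (tw_cont_conv hqc S.hq_supp hφmes hCb).comp (continuous_id.add continuous_const)
    have hwave' : ∀ x, φ x = S.g (∫ z, S.q z * φ (x + ℓ - z)) := fun x => by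
      rw [hwave x, tw_conv_shift]
    have hφc : Continuous φ := by
      have h : φ = fun x => S.g (∫ z, S.q z * φ (x + ℓ - z)) := funext hwave'
      rw [h]; exact S.g_cont.comp hψc
    have hint_z : ∀ x : ℝ, Integrable fun z => S.q z * φ (x + ℓ - z) := by
      intro x
      have h := hqint.bdd_mul
        ((hφmes.comp (measurable_const.sub measurable_id)).aestronglyMeasurable)
        (.of_forall fun z => by simpa using hCb (x + ℓ - z))
      simpa [mul_comm] using h
    have hψ0 : ∀ x, 0 ≤ ∫ z, S.q z * φ (x + ℓ - z) := fun x =>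
      integral_nonneg fun z => mul_nonneg (S.hq_nonneg z) (hφ0 _)
    have hψθ : ∀ x, (∫ z, S.q z * φ (x + ℓ - z)) ≤ S.θ := by
      intro x
      calc (∫ z, S.q z * φ (x + ℓ - z)) ≤ ∫ z, S.q z * S.θ :=
          integral_mono (hint_z x) (hqint.mul_const _)
            (fun z => mul_le_mul_of_nonneg_left (hφθ _) (S.hq_nonneg z))
        _ = S.θ := by rw [integral_mul_const, S.hq_int, one_mul]
    have hle : ∀ x, φ x ≤ ∫ z, S.q z * φ (x + ℓ - z) := fun x => by
      rw [hwave' x]; exact S.g_le_self ⟨hψ0 x, hψθ x⟩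
    obtain ⟨x₀, hx₀⟩ := tw_exists_eq hφc hbot htop
      (by linarith : (0:ℝ) < S.θ/2) (by linarith : S.θ/2 < S.θ)
    have hψx₀ : (∫ z, S.q z * φ (x₀ + ℓ - z)) ∈ Set.Ioo 0 S.θ := by
      constructor
      · by_contra h
        push_neg at h
        have h2 := S.g_nonpos h
        rw [← hwave' x₀, hx₀] at h2
        linarith
      · by_contra h
        push_neg at h
        have h2 := S.g_ge_theta h
        rw [← hwave' x₀, hx₀] at h2
        linarith
    have hstrict : φ x₀ < ∫ z, S.q z * φ (x₀ + ℓ - z) := by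
      rw [hwave' x₀]; exact S.g_lt_self hψx₀
    have hkey := tw_key hqc S.hq_supp S.hq_nonneg S.hq_int ℓ 0 S.θ hmono hbot htop hψc
    have hpos := tw_pos_limit (hψc.sub hφc) (fun x => sub_nonneg.2 (hle x))
      (sub_pos.2 hstrict) hkey
    by_contra hcon
    push_neg at hcon
    have hnp : (S.θ - 0) * (ℓ - ∫ y, y * S.q y) ≤ 0 :=
      mul_nonpos_of_nonneg_of_nonpos (by linarith) (by linarith)
    linarith
  · -- upper wave: θ → 1
    intro ℓ φ hmono hwave hbot htop
    have hφmes : Measurable φ := hmono.measurable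
    have hφθ : ∀ x, S.θ ≤ φ x := fun x =>
      le_of_tendsto hbot (eventually_atBot.2 ⟨x, fun y hy => hmono hy⟩)
    have hφ1 : ∀ x, φ x ≤ 1 := fun x =>
      ge_of_tendsto htop (eventually_atTop.2 ⟨x, fun y hy => hmono hy⟩)
    have hCb : ∀ x, |φ x| ≤ 1 := fun x => abs_le.2 ⟨by linarith [hφθ x], hφ1 x⟩
    have hψc : Continuous fun x => ∫ z, S.q z * φ (x + ℓ - z) :=
      (tw_cont_conv hqc S.hq_supp hφmes hCb).comp (continuous_id.add continuous_const)
    have hwave' : ∀ x, φ x = S.g (∫ z, S.q z * φ (x + ℓ - z)) := fun x => by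
      rw [hwave x, tw_conv_shift]
    have hφc : Continuous φ := by
      have h : φ = fun x => S.g (∫ z, S.q z * φ (x + ℓ - z)) := funext hwave'
      rw [h]; exact S.g_cont.comp hψc
    have hint_z : ∀ x : ℝ, Integrable fun z => S.q z * φ (x + ℓ - z) := by
      intro x
      have h := hqint.bdd_mul
        ((hφmes.comp (measurable_const.sub measurable_id)).aestronglyMeasurable)
        (.of_forall fun z => by simpa using hCb (x + ℓ - z))
      simpa [mul_comm] using h
    have hψθ : ∀ x, S.θ ≤ ∫ z, S.q z * φ (x + ℓ - z) := by
      intro x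
      calc S.θ = ∫ z, S.q z * S.θ := by rw [integral_mul_const, S.hq_int, one_mul]
        _ ≤ ∫ z, S.q z * φ (x + ℓ - z) :=
          integral_mono (hqint.mul_const _) (hint_z x)
            (fun z => mul_le_mul_of_nonneg_left (hφθ _) (S.hq_nonneg z))
    have hψ1 : ∀ x, (∫ z, S.q z * φ (x + ℓ - z)) ≤ 1 := by
      intro x
      calc (∫ z, S.q z * φ (x + ℓ - z)) ≤ ∫ z, S.q z * 1 :=
          integral_mono (hint_z x) (hqint.mul_const _)
            (fun z => mul_le_mul_of_nonneg_left (hφ1 _) (S.hq_nonneg z))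
        _ = 1 := by rw [integral_mul_const, S.hq_int, one_mul]
    have hle : ∀ x, (∫ z, S.q z * φ (x + ℓ - z)) ≤ φ x := fun x => by
      rw [hwave' x]; exact S.g_ge_self ⟨hψθ x, hψ1 x⟩
    obtain ⟨x₀, hx₀⟩ := tw_exists_eq hφc hbot htop
      (by linarith : S.θ < (S.θ + 1)/2) (by linarith : (S.θ + 1)/2 < 1)
    have hψx₀ : (∫ z, S.q z * φ (x₀ + ℓ - z)) ∈ Set.Ioo S.θ 1 := by
      constructor
      · by_contra h
        push_neg at h
        have h2 := S.g_le_theta h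
        rw [← hwave' x₀, hx₀] at h2
        linarith
      · by_contra h
        push_neg at h
        have h2 := S.g_ge_one h
        rw [← hwave' x₀, hx₀] at h2
        linarith
    have hstrict : (∫ z, S.q z * φ (x₀ + ℓ - z)) < φ x₀ := by
      conv_rhs => rw [hwave' x₀]
      exact S.g_gt_self hψx₀
    have hkey := tw_key hqc S.hq_supp S.hq_nonneg S.hq_int ℓ S.θ 1 hmono hbot htop hψc
    have hflip : ∀ n : ℕ, (∫ x in (-(n:ℝ))..(n:ℝ), (φ x - ∫ z, S.q z * φ (x + ℓ - z)))
        = -(∫ x in (-(n:ℝ))..(n:ℝ), ((∫ z, S.q z * φ (x + ℓ - z)) - φ x)) := by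
      intro n
      rw [← intervalIntegral.integral_neg]
      congr 1
      funext x
      ring
    have hkey' : Tendsto (fun n : ℕ => ∫ x in (-(n:ℝ))..(n:ℝ),
        (φ x - ∫ z, S.q z * φ (x + ℓ - z))) atTop
        (𝓝 (-((1 - S.θ) * (ℓ - ∫ y, y * S.q y)))) := by
      refine Tendsto.congr (fun n => (hflip n).symm) hkey.neg
    have hpos := tw_pos_limit (hφc.sub hψc) (fun x => sub_nonneg.2 (hle x))
      (sub_pos.2 hstrict) hkey'
    by_contra hcon
    push_neg at hcon
    have hnn : 0 ≤ (1 - S.θ) * (ℓ - ∫ y, y * S.q y) :=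
      mul_nonneg (by linarith) (by linarith)
    linarith
end

section
/- Let φ be a traveling wave with speed ℓ. Then there exist constants β_0^+ > 0, δ_0^+ > 0, β_0^− > 0, δ_0^− > 0, independent of the initial shifts, such that: for every ξ_0^+ ∈ ℝ there is a bounded nondecreasing sequence (ξ_n^+)_{n≥0} starting at ξ_0^+ for which w̄_n(x) := φ(x − nℓ + ξ_n^+) + β_0^+ e^{−δ_0^+ n} satisfies w̄_{n+1}(x) ≥ g((q * w̄_n)(x)) for all n ≥ 0 and x ∈ ℝ; and for every ξ_0^− ∈ ℝ there is a bounded nonincreasing sequence (ξ_n^−)_{n≥0} starting at ξ_0^− for which w_̲n(x) := φ(x − nℓ + ξ_n^−) − β_0^− e^{−δ_0^− n} satisfies w_̲{n+1}(x) ≤ g((q * w_̲n)(x)) for all n ≥ 0 and x ∈ ℝ. -/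
open MeasureTheory Filter Topology

namespace TWaux

variable (S : BistableSetting)

noncomputable def dP (t : ℝ) : ℝ := (Polynomial.derivative S.P).eval t

lemma g_eq_P {s : ℝ} (h0 : 0 ≤ s) (h1 : s ≤ 1) : S.g s = S.P.eval s := by
  unfold BistableSetting.g
  rw [if_neg (by linarith), if_pos h1]

lemma g_eq_low {s : ℝ} (h : s ≤ 0) : S.g s = dP S 0 * s := by
  unfold BistableSetting.g dP
  rcases lt_or_eq_of_le h with h' | h'
  · rw [if_pos h']
  · subst h'; rw [if_neg (by linarith), if_pos (by norm_num), S.hP0, mul_zero]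

lemma g_eq_high {s : ℝ} (h : 1 ≤ s) : S.g s = 1 + dP S 1 * (s - 1) := by
  unfold BistableSetting.g dP
  rcases lt_or_eq_of_le h with h' | h'
  · rw [if_neg (by linarith), if_neg (by linarith)]
  · subst h'; rw [if_neg (by norm_num), if_pos le_rfl, S.hP1]; ring

lemma g_zero : S.g 0 = 0 := by rw [g_eq_P S le_rfl zero_le_one, S.hP0]
lemma g_one : S.g 1 = 1 := by rw [g_eq_P S zero_le_one le_rfl, S.hP1]

lemma dP_cont : Continuous (dP S) := by
  unfold dP
  exact (Polynomial.derivative S.P).continuous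

lemma seq_aux : Tendsto (fun n : ℕ => (1:ℝ)/(n+1) * (1/2)) atTop (𝓝 0) := by
  have := tendsto_one_div_add_atTop_nhds_zero_nat.mul_const (1/2 : ℝ)
  simpa using this

lemma seq_aux_mem (n : ℕ) : (0:ℝ) < 1/(n+1) * (1/2) ∧ (1:ℝ)/(n+1) * (1/2) < 1 := by
  constructor
  · positivity
  · have h1 : (1:ℝ)/(n+1) ≤ 1 := by
      rw [div_le_one (by positivity)]
      exact le_add_of_nonneg_left (Nat.cast_nonneg n)
    nlinarith

lemma dP0_nonneg : 0 ≤ dP S 0 := by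
  have hlim : Tendsto (fun n : ℕ => dP S ((1:ℝ)/(n+1) * (1/2))) atTop (𝓝 (dP S 0)) := by
    have := ((dP_cont S).tendsto 0).comp (seq_aux)
    exact this
  refine ge_of_tendsto hlim (Eventually.of_forall fun n => ?_)
  exact (S.hP_mono _ ⟨(seq_aux_mem n).1, (seq_aux_mem n).2⟩).le

lemma dP1_nonneg : 0 ≤ dP S 1 := by
  have hc : Tendsto (fun n : ℕ => (1:ℝ) - 1/(n+1) * (1/2)) atTop (𝓝 1) := by
    have := seq_aux.const_sub 1
    simpa using this
  have hlim : Tendsto (fun n : ℕ => dP S ((1:ℝ) - 1/(n+1) * (1/2))) atTop (𝓝 (dP S 1)) := by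
    have := ((dP_cont S).tendsto 1).comp hc
    exact this
  refine ge_of_tendsto hlim (Eventually.of_forall fun n => ?_)
  have h1 := (seq_aux_mem n).1
  have h2 : (1:ℝ)/(n+1) * (1/2) < 1 := (seq_aux_mem n).2
  exact (S.hP_mono _ ⟨by linarith, by linarith⟩).le

lemma eval_sub_le {a b M : ℝ} (hab : a ≤ b)
    (hM : ∀ t ∈ Set.Icc a b, dP S t ≤ M) :
    S.P.eval b - S.P.eval a ≤ M * (b - a) := by
  set F : ℝ → ℝ := fun t => M * t - S.P.eval t with hF
  have hder : ∀ t : ℝ, HasDerivAt F (M - dP S t) t := by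
    intro t
    have := ((hasDerivAt_id t).const_mul M).sub (S.P.hasDerivAt t)
    exact this.congr_deriv (by simp [dP])
  have hmono : MonotoneOn F (Set.Icc a b) := by
    apply monotoneOn_of_deriv_nonneg (convex_Icc a b)
      (fun t _ => ((hder t).continuousAt).continuousWithinAt)
      (fun t ht => ((hder t).differentiableAt).differentiableWithinAt)
    intro t ht
    rw [interior_Icc] at ht
    rw [(hder t).deriv]
    have := hM t ⟨ht.1.le, ht.2.le⟩
    linarith
  have := hmono (Set.left_mem_Icc.mpr hab) (Set.right_mem_Icc.mpr hab) hab
  simp only [hF] at this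
  linarith

lemma eval_sub_ge {a b m : ℝ} (hab : a ≤ b)
    (hm : ∀ t ∈ Set.Icc a b, m ≤ dP S t) :
    m * (b - a) ≤ S.P.eval b - S.P.eval a := by
  set F : ℝ → ℝ := fun t => S.P.eval t - m * t with hF
  have hder : ∀ t : ℝ, HasDerivAt F (dP S t - m) t := by
    intro t
    have := (S.P.hasDerivAt t).sub ((hasDerivAt_id t).const_mul m)
    exact this.congr_deriv (by simp [dP])
  have hmono : MonotoneOn F (Set.Icc a b) := by
    apply monotoneOn_of_deriv_nonneg (convex_Icc a b)
      (fun t _ => ((hder t).continuousAt).continuousWithinAt)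
      (fun t ht => ((hder t).differentiableAt).differentiableWithinAt)
    intro t ht
    rw [interior_Icc] at ht
    rw [(hder t).deriv]
    have := hm t ⟨ht.1.le, ht.2.le⟩
    linarith
  have := hmono (Set.left_mem_Icc.mpr hab) (Set.right_mem_Icc.mpr hab) hab
  simp only [hF] at this
  linarith

lemma g_sub_le {a b M : ℝ} (hab : a ≤ b) (hM0 : dP S 0 ≤ M) (hM1 : dP S 1 ≤ M)
    (hMP : ∀ t, 0 ≤ t → t ≤ 1 → a ≤ t → t ≤ b → dP S t ≤ M) :
    S.g b - S.g a ≤ M * (b - a) := by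
  set x1 : ℝ := min (max a 0) b with hx1def
  set x2 : ℝ := min (max a 1) b with hx2def
  have hax1 : a ≤ x1 := le_min (le_max_left _ _) hab
  have hx12 : x1 ≤ x2 := min_le_min (max_le_max le_rfl zero_le_one) le_rfl
  have hx2b : x2 ≤ b := min_le_right _ _
  have B1 : S.g x1 - S.g a ≤ M * (x1 - a) := by
    rcases le_or_gt 0 a with h0a | h0a
    · have hx1a : x1 = a := by rw [hx1def, max_eq_left h0a, min_eq_left hab]
      rw [hx1a]; simp
    · have hx10 : x1 ≤ 0 := le_trans (min_le_left _ _) (le_of_eq (max_eq_right h0a.le))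
      rw [g_eq_low S hx10, g_eq_low S h0a.le]
      have heq : dP S 0 * x1 - dP S 0 * a = dP S 0 * (x1 - a) := by ring
      rw [heq]
      exact mul_le_mul_of_nonneg_right hM0 (by linarith)
  have B3 : S.g b - S.g x2 ≤ M * (b - x2) := by
    rcases le_or_gt b 1 with hb1 | hb1
    · have hx2b' : x2 = b := by rw [hx2def, min_eq_right (le_trans hb1 (le_max_right a 1))]
      rw [hx2b']; simp
    · have hx2eq : x2 = max a 1 := by rw [hx2def, min_eq_left (max_le hab hb1.le)]
      have hx21 : 1 ≤ x2 := by rw [hx2eq]; exact le_max_right _ _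
      rw [g_eq_high S hx21, g_eq_high S hb1.le]
      have heq : (1 + dP S 1 * (b - 1)) - (1 + dP S 1 * (x2 - 1)) = dP S 1 * (b - x2) := by ring
      rw [heq]
      exact mul_le_mul_of_nonneg_right hM1 (by linarith)
  have B2 : S.g x2 - S.g x1 ≤ M * (x2 - x1) := by
    rcases eq_or_lt_of_le hx12 with heq | hlt
    · rw [heq]; simp
    · have h0x1 : 0 ≤ x1 := by
        by_contra hc
        push_neg at hc
        have hb : x1 = b := by
          rcases le_total (max a 0) b with hle | hle
          · exfalso
            rw [hx1def, min_eq_left hle] at hc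
            exact absurd hc (not_lt.mpr (le_max_right a 0))
          · rw [hx1def, min_eq_right hle]
        have hx2b'' : x2 = b := le_antisymm hx2b (hb ▸ hx12)
        rw [hb, hx2b''] at hlt; exact lt_irrefl _ hlt
      have hx21 : x2 ≤ 1 := by
        by_contra hc
        push_neg at hc
        have h1 : 1 < max a 1 := lt_of_lt_of_le hc (min_le_left _ _)
        have ha1 : 1 < a := by
          rcases le_total a 1 with hle | hle
          · rw [max_eq_right hle] at h1; exact absurd h1 (lt_irrefl 1)
          · rw [max_eq_left hle] at h1; exact h1
        have hmm : max a 0 = max a 1 := by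
          rw [max_eq_left (by linarith : (0:ℝ) ≤ a), max_eq_left (by linarith : (1:ℝ) ≤ a)]
        rw [hx1def, hx2def, hmm] at hlt; exact lt_irrefl _ hlt
      rw [g_eq_P S (le_trans h0x1 hx12) hx21, g_eq_P S h0x1 (le_trans hx12 hx21)]
      exact eval_sub_le S hx12 (fun t ht => hMP t (le_trans h0x1 ht.1) (le_trans ht.2 hx21)
        (le_trans hax1 ht.1) (le_trans ht.2 hx2b))
  nlinarith [B1, B2, B3]

lemma g_sub_ge {a b m : ℝ} (h0 : 0 ≤ a) (hab : a ≤ b) (h1 : b ≤ 1)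
    (hm : ∀ t ∈ Set.Icc a b, m ≤ dP S t) :
    m * (b - a) ≤ S.g b - S.g a := by
  rw [g_eq_P S h0 (hab.trans h1), g_eq_P S (h0.trans hab) h1]
  exact eval_sub_ge S hab hm

end TWaux

namespace TWaux2
open TWaux

variable {S : BistableSetting} {ℓ : ℝ} {φ : ℝ → ℝ}

lemma q_cont (S : BistableSetting) : Continuous S.q := S.hq_diff.continuous

lemma q_integrable (S : BistableSetting) : Integrable S.q :=
  (q_cont S).integrable_of_hasCompactSupport S.hq_supp

lemma integ_mul (S : BistableSetting) {f : ℝ → ℝ} (hf : Continuous f) :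
    Integrable (fun y => S.q y * f y) :=
  ((q_cont S).mul hf).integrable_of_hasCompactSupport (S.hq_supp.mul_right)

/-- continuous nonneg with zero integral vanishes -/
lemma vanish {f : ℝ → ℝ} (hc : Continuous f) (h0 : ∀ y, 0 ≤ f y) (hi : Integrable f)
    (hz : ∫ y, f y = 0) : ∀ y, f y = 0 := by
  have hae := (integral_eq_zero_iff_of_nonneg h0 hi).mp hz
  have : f = fun _ => 0 := (Continuous.ae_eq_iff_eq volume hc continuous_const).mp hae
  intro y; rw [this]

lemma qpos_exists (S : BistableSetting) : ∃ y₀, 0 < S.q y₀ := by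
  by_contra hc
  push_neg at hc
  have hz : ∀ y, S.q y = 0 := fun y => le_antisymm (hc y) (S.hq_nonneg y)
  have : (∫ y, S.q y) = 0 := by
    have : S.q = fun _ => 0 := funext hz
    rw [this]; simp
  rw [S.hq_int] at this; norm_num at this

lemma qpos_interval (S : BistableSetting) :
    ∃ a b : ℝ, a < b ∧ ∀ y ∈ Set.Ioo a b, 0 < S.q y := by
  obtain ⟨y₀, hy₀⟩ := qpos_exists S
  have hc := (q_cont S).continuousAt (x := y₀)
  rw [Metric.continuousAt_iff] at hc
  obtain ⟨δ, hδ, hball⟩ := hc (S.q y₀ / 2) (by linarith)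
  refine ⟨y₀ - δ/2, y₀ + δ/2, by linarith, fun y hy => ?_⟩
  have hdist : dist y y₀ < δ := by
    rw [Real.dist_eq, abs_lt]
    constructor <;> [linarith [hy.1]; linarith [hy.2]]
  have := hball hdist
  rw [Real.dist_eq, abs_lt] at this
  linarith [this.1]

variable (h : IsTravelingWave S ℓ φ)
include h

lemma phi_cont : Continuous φ := h.smooth.continuous

lemma phi01 (x : ℝ) : 0 ≤ φ x ∧ φ x ≤ 1 :=
  ⟨Monotone.le_of_tendsto h.mono h.limit_bot x, Monotone.ge_of_tendsto h.mono h.limit_top x⟩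

/-- the unshifted convolution -/
noncomputable def psi (S : BistableSetting) (φ : ℝ → ℝ) (x : ℝ) : ℝ := ∫ y, S.q y * φ (x - y)

omit h in
lemma psi_mono' (hφc : Continuous φ) (hφm : Monotone φ) : Monotone (psi S φ) := by
  intro a b hab
  apply integral_mono (integ_mul S (hφc.comp (continuous_const.sub continuous_id)))
    (integ_mul S (hφc.comp (continuous_const.sub continuous_id)))
  intro y
  exact mul_le_mul_of_nonneg_left (hφm (by linarith : a - y ≤ b - y)) (S.hq_nonneg y)

lemma psi_mono : Monotone (psi S φ) := psi_mono' (phi_cont h) h.mono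

lemma psi_le_one (x : ℝ) : psi S φ x ≤ 1 := by
  have : psi S φ x ≤ ∫ y, S.q y := by
    apply integral_mono (integ_mul S ((phi_cont h).comp (continuous_const.sub continuous_id)))
      (q_integrable S)
    intro y
    calc S.q y * φ (x - y) ≤ S.q y * 1 :=
          mul_le_mul_of_nonneg_left (phi01 h (x-y)).2 (S.hq_nonneg y)
    _ = S.q y := mul_one _
  rw [S.hq_int] at this; exact this

lemma psi_nonneg (x : ℝ) : 0 ≤ psi S φ x :=
  integral_nonneg fun y => mul_nonneg (S.hq_nonneg y) (phi01 h (x-y)).1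

lemma conv_qshift (z : ℝ) : conv (qshift S.q ℓ) φ z = psi S φ (z + ℓ) := by
  unfold conv qshift psi
  have : (∫ y, S.q (y + ℓ) * φ (z - y)) = ∫ y, S.q y * φ (z + ℓ - y) := by
    have := MeasureTheory.integral_add_right_eq_self (μ := volume) (fun y => S.q y * φ (z + ℓ - y)) ℓ
    rw [← this]
    congr 1
    funext y
    congr 2
    ring
  rw [this]

lemma wave (z : ℝ) : φ z = S.g (psi S φ (z + ℓ)) := by
  rw [h.wave_eq z, conv_qshift h]

/-- the convolution appearing in the theorem -/
lemma conv_shift_add (x c B : ℝ) :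
    conv S.q (fun y => φ (y + c) + B) x = psi S φ (x + c) + B := by
  unfold conv psi
  have h1 : (fun y => S.q y * (φ (x - y + c) + B)) =
      fun y => S.q y * φ (x + c - y) + S.q y * B := by
    funext y
    rw [mul_add]
    congr 2
    ring
  calc (∫ y, S.q y * (φ (x - y + c) + B))
      = ∫ y, (S.q y * φ (x + c - y) + S.q y * B) := by rw [h1]
    _ = (∫ y, S.q y * φ (x + c - y)) + ∫ y, S.q y * B := by
        apply integral_add (integ_mul S ((phi_cont h).comp (continuous_const.sub continuous_id)))
          ((q_integrable S).mul_const B)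
    _ = (∫ y, S.q y * φ (x + c - y)) + B := by
        rw [integral_mul_const, S.hq_int, one_mul]

lemma phi_hasDeriv (x : ℝ) : HasDerivAt φ (deriv φ x) x :=
  ((h.smooth.differentiable one_ne_zero) x).hasDerivAt

lemma deriv_cont : Continuous (deriv φ) := h.smooth.continuous_deriv le_rfl

lemma deriv_nonneg (x : ℝ) : 0 ≤ deriv φ x := by
  have hs := hasDerivAt_iff_tendsto_slope.mp (phi_hasDeriv h x)
  refine ge_of_tendsto hs (Eventually.of_forall fun y => ?_)
  rw [slope_def_field]
  rcases lt_trichotomy x y with hlt | heq | hgt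
  · exact div_nonneg (sub_nonneg.mpr (h.mono hlt.le)) (by linarith)
  · subst heq; simp
  · rw [← neg_div_neg_eq, neg_sub, neg_sub]
    exact div_nonneg (sub_nonneg.mpr (h.mono hgt.le)) (by linarith)

end TWaux2

namespace TWaux2
open TWaux

variable {S : BistableSetting} {ℓ : ℝ} {φ : ℝ → ℝ}

lemma exists_L (S : BistableSetting) : ∃ L : ℝ, 1 ≤ L ∧ dP S 0 ≤ L ∧ dP S 1 ≤ L ∧
    ∀ t ∈ Set.Icc (0:ℝ) 1, dP S t ≤ L := by
  obtain ⟨t₀, ht₀, hmax⟩ := isCompact_Icc.exists_isMaxOn (Set.nonempty_Icc.mpr zero_le_one)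
    (dP_cont S).continuousOn
  refine ⟨max (dP S t₀) 1, le_max_right _ _, ?_, ?_, fun t ht => ?_⟩
  · exact le_trans (hmax (Set.mem_Icc.mpr ⟨le_rfl, zero_le_one⟩)) (le_max_left _ _)
  · exact le_trans (hmax (Set.mem_Icc.mpr ⟨zero_le_one, le_rfl⟩)) (le_max_left _ _)
  · exact le_trans (hmax ht) (le_max_left _ _)

lemma exists_Mq (S : BistableSetting) : ∃ M : ℝ, 0 ≤ M ∧ ∀ y, S.q y ≤ M := by
  obtain ⟨y₀, hy₀⟩ := (q_cont S).exists_forall_ge_of_hasCompactSupport S.hq_supp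
  exact ⟨S.q y₀, S.hq_nonneg y₀, hy₀⟩

variable (h : IsTravelingWave S ℓ φ)
include h


lemma integ_phi (c : ℝ) : Integrable (fun y => S.q y * φ (c - y)) :=
  integ_mul S (f := fun y => φ (c - y)) ((phi_cont h).comp (continuous_const.sub continuous_id))

lemma integ_one_sub_phi (c : ℝ) : Integrable (fun y => S.q y * (1 - φ (c - y))) := by
  have heq : (fun y => S.q y * (1 - φ (c - y))) =
      fun y => S.q y - S.q y * φ (c - y) := by funext y; ring
  rw [heq]
  exact (q_integrable S).sub (integ_phi h c)

lemma one_sub_psi (c : ℝ) : (∫ y, S.q y * (1 - φ (c - y))) = 1 - psi S φ c := by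
  have heq : (fun y => S.q y * (1 - φ (c - y))) =
      fun y => S.q y - S.q y * φ (c - y) := by funext y; ring
  rw [heq, integral_sub (q_integrable S) (integ_phi h c), S.hq_int]
  rfl

lemma psi_eq_zero_of_phi_eq_zero {w : ℝ} (hw : φ w = 0) : psi S φ (w + ℓ) = 0 := by
  rcases eq_or_lt_of_le (psi_nonneg h (w + ℓ)) with heq | hpos
  · exact heq.symm
  rcases eq_or_lt_of_le (psi_le_one h (w + ℓ)) with heq1 | hlt1
  · exfalso
    have := wave h w
    rw [heq1, g_one] at this
    rw [hw] at this; norm_num at this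
  · exfalso
    have hwv := wave h w
    rw [g_eq_P S (psi_nonneg h _) (psi_le_one h _)] at hwv
    have := (S.hP_range _ ⟨hpos, hlt1⟩).1
    rw [← hwv, hw] at this
    exact lt_irrefl _ this

lemma zero_step {w : ℝ} (hw : φ w = 0) : ∀ y, 0 < S.q y → φ (w + ℓ - y) = 0 := by
  have h0 := psi_eq_zero_of_phi_eq_zero h hw
  have hvan := vanish (f := fun y => S.q y * φ (w + ℓ - y))
    ((q_cont S).mul ((phi_cont h).comp (continuous_const.sub continuous_id)))
    (fun y => mul_nonneg (S.hq_nonneg y) (phi01 h _).1)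
    (integ_phi h (w + ℓ)) h0
  intro y hy
  have := hvan y
  rcases mul_eq_zero.mp this with h1 | h2
  · exact absurd h1 (ne_of_gt hy)
  · exact h2

lemma psi_eq_one_of_phi_eq_one {w : ℝ} (hw : φ w = 1) : psi S φ (w + ℓ) = 1 := by
  rcases eq_or_lt_of_le (psi_le_one h (w + ℓ)) with heq | hlt
  · exact heq
  rcases eq_or_lt_of_le (psi_nonneg h (w + ℓ)) with heq0 | hpos
  · exfalso
    have := wave h w
    rw [← heq0, g_zero] at this
    rw [hw] at this; norm_num at this
  · exfalso
    have hwv := wave h w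
    rw [g_eq_P S (psi_nonneg h _) (psi_le_one h _)] at hwv
    have := (S.hP_range _ ⟨hpos, hlt⟩).2
    rw [← hwv, hw] at this
    exact lt_irrefl _ this

lemma one_step {w : ℝ} (hw : φ w = 1) : ∀ y, 0 < S.q y → φ (w + ℓ - y) = 1 := by
  have h1 := psi_eq_one_of_phi_eq_one h hw
  have hint : Integrable (fun y => S.q y * (1 - φ (w + ℓ - y))) := integ_one_sub_phi h (w + ℓ)
  have hzero : (∫ y, S.q y * (1 - φ (w + ℓ - y))) = 0 := by
    rw [one_sub_psi h (w + ℓ), h1]; ring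
  have hvan := vanish (f := fun y => S.q y * (1 - φ (w + ℓ - y)))
    ((q_cont S).mul (continuous_const.sub ((phi_cont h).comp (continuous_const.sub continuous_id))))
    (fun y => mul_nonneg (S.hq_nonneg y) (by linarith [(phi01 h (w + ℓ - y)).2]))
    hint hzero
  intro y hy
  have := hvan y
  rcases mul_eq_zero.mp this with h1' | h2
  · exact absurd h1' (ne_of_gt hy)
  · linarith

theorem phi_pos (x : ℝ) : 0 < φ x := by
  by_contra hc
  push_neg at hc
  have hx0 : φ x = 0 := le_antisymm hc (phi01 h x).1
  clear hc
  by_cases hcase : ∃ y₁, 0 < S.q y₁ ∧ y₁ < ℓ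
  · obtain ⟨y₁, hq₁, hy₁⟩ := hcase
    set ε := ℓ - y₁ with hε
    have hεpos : 0 < ε := by rw [hε]; linarith
    have hind : ∀ k : ℕ, φ (x + k * ε) = 0 := by
      intro k
      induction k with
      | zero => simpa using hx0
      | succ n ih =>
        have := zero_step h ih y₁ hq₁
        have harg : x + n * ε + ℓ - y₁ = x + (n + 1 : ℕ) * ε := by
          push_cast; rw [hε]; ring
        rw [harg] at this
        exact this
    have htt : Tendsto (fun k : ℕ => x + k * ε) atTop atTop := by
      apply tendsto_atTop_add_const_left
      exact Tendsto.atTop_mul_const hεpos tendsto_natCast_atTop_atTop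
    have h1 : Tendsto (fun k : ℕ => φ (x + k * ε)) atTop (𝓝 1) := h.limit_top.comp htt
    have h2 : Tendsto (fun k : ℕ => φ (x + k * ε)) atTop (𝓝 0) := by
      have : (fun k : ℕ => φ (x + k * ε)) = fun _ => 0 := funext hind
      rw [this]; exact tendsto_const_nhds
    have := tendsto_nhds_unique h1 h2
    norm_num at this
  · push_neg at hcase
    have hq0 : ∀ y, y < ℓ → S.q y = 0 := by
      intro y hy
      by_contra hne
      have : 0 < S.q y := lt_of_le_of_ne (S.hq_nonneg y) (Ne.symm hne)
      exact absurd hy (not_lt.mpr (hcase y this))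
    -- sup of the zero set
    set Z := {z : ℝ | φ z = 0} with hZ
    have hZne : Z.Nonempty := ⟨x, hx0⟩
    have hZclosed : IsClosed Z := isClosed_eq (phi_cont h) continuous_const
    obtain ⟨B, hB⟩ : ∃ B, ∀ z ≥ B, (1:ℝ)/2 < φ z := by
      have := h.limit_top.eventually (eventually_gt_nhds (by norm_num : (1:ℝ)/2 < 1))
      rw [eventually_atTop] at this
      exact this
    have hZbdd : BddAbove Z := by
      refine ⟨B, fun z hz => ?_⟩
      by_contra hzB
      push_neg at hzB
      have := hB z hzB.le
      rw [hz] at this; norm_num at this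
    set w := sSup Z with hw
    have hwZ : w ∈ Z := hZclosed.csSup_mem hZne hZbdd
    have hφw : φ w = 0 := hwZ
    have hzero_left : ∀ z ≤ w, φ z = 0 := fun z hz =>
      le_antisymm (hφw ▸ h.mono hz) (phi01 h z).1
    obtain ⟨L, hL1, hL0, hLd1, hLP⟩ := exists_L S
    obtain ⟨Mq, hMq0, hMqb⟩ := exists_Mq S
    set t := min 1 (1/(2*L*(Mq+1))) with ht
    have htpos : 0 < t := by
      apply lt_min one_pos
      positivity
    have ht2 : t ≤ 1/(2*L*(Mq+1)) := min_le_right _ _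
    -- key integral bound
    have hkey : psi S φ (w + t + ℓ) ≤ (Mq * φ (w + t)) * t := by
      have hpt : ∀ y, S.q y * φ (w + t + ℓ - y) ≤
          (Set.Icc ℓ (ℓ + t)).indicator (fun _ => Mq * φ (w + t)) y := by
        intro y
        by_cases hy1 : y < ℓ
        · rw [hq0 y hy1, zero_mul]
          exact Set.indicator_nonneg (fun _ _ => mul_nonneg hMq0 (phi01 h _).1) y
        push_neg at hy1
        by_cases hy2 : y ≤ ℓ + t
        · rw [Set.indicator_of_mem (Set.mem_Icc.mpr ⟨hy1, hy2⟩)]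
          apply mul_le_mul (hMqb y) (h.mono (by linarith)) (phi01 h _).1 hMq0
        · push_neg at hy2
          rw [Set.indicator_of_notMem (by rw [Set.mem_Icc]; push_neg; intro _; linarith),
            hzero_left _ (by linarith), mul_zero]
      have hintl := integ_phi h (w + t + ℓ)
      have hintr : Integrable ((Set.Icc ℓ (ℓ + t)).indicator (fun _ => Mq * φ (w + t))) := by
        rw [integrable_indicator_iff measurableSet_Icc]
        exact integrableOn_const (by rw [Real.volume_Icc]; exact ENNReal.ofReal_ne_top)
      have := integral_mono hintl hintr hpt
      rw [integral_indicator measurableSet_Icc, setIntegral_const, Real.volume_real_Icc_of_le (by linarith : ℓ ≤ ℓ + t)] at this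
      unfold psi
      calc (∫ y, S.q y * φ (w + t + ℓ - y)) ≤ (ℓ + t - ℓ) • (Mq * φ (w + t)) := this
        _ = (Mq * φ (w + t)) * t := by rw [smul_eq_mul]; ring
    have hkey2 : φ (w + t) ≤ L * psi S φ (w + t + ℓ) := by
      have hwv := wave h (w + t)
      have := g_sub_le S (psi_nonneg h (w + t + ℓ)) hL0 hLd1
        (fun u hu0 hu1 _ _ => hLP u ⟨hu0, hu1⟩)
      rw [g_zero] at this
      rw [hwv]
      linarith
    have hcontr : φ (w + t) ≤ (1/2) * φ (w + t) := by
      have hφt0 : 0 ≤ φ (w + t) := (phi01 h _).1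
      have c1 : φ (w + t) ≤ L * ((Mq * φ (w + t)) * t) :=
        le_trans hkey2 (mul_le_mul_of_nonneg_left hkey (by linarith))
      have c2 : L * ((Mq * φ (w + t)) * t) ≤ (1/2) * φ (w + t) := by
        have hLMq : 0 < 2*L*(Mq+1) := by positivity
        have : L * Mq * t ≤ 1/2 := by
          calc L * Mq * t ≤ L * Mq * (1/(2*L*(Mq+1))) := by
                apply mul_le_mul_of_nonneg_left ht2 (by positivity)
            _ ≤ 1/2 := by
                rw [mul_one_div, div_le_div_iff₀ (by positivity) (by norm_num)]
                nlinarith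
        nlinarith
      linarith
    have : φ (w + t) = 0 := by
      have := (phi01 h (w + t)).1
      linarith
    have : w + t ≤ w := le_csSup hZbdd this
    linarith

theorem phi_lt_one (x : ℝ) : φ x < 1 := by
  by_contra hc
  push_neg at hc
  have hx1 : φ x = 1 := le_antisymm (phi01 h x).2 hc
  clear hc
  by_cases hcase : ∃ y₁, 0 < S.q y₁ ∧ ℓ < y₁
  · obtain ⟨y₁, hq₁, hy₁⟩ := hcase
    set ε := y₁ - ℓ with hε
    have hεpos : 0 < ε := by rw [hε]; linarith
    have hind : ∀ k : ℕ, φ (x - k * ε) = 1 := by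
      intro k
      induction k with
      | zero => simpa using hx1
      | succ n ih =>
        have := one_step h ih y₁ hq₁
        have harg : x - n * ε + ℓ - y₁ = x - (n + 1 : ℕ) * ε := by
          push_cast; rw [hε]; ring
        rw [harg] at this
        exact this
    have htt : Tendsto (fun k : ℕ => x - k * ε) atTop atBot := by
      apply tendsto_atBot_add_const_left
      rw [show (fun k : ℕ => -(k * ε)) = fun k : ℕ => (k:ℝ) * (-ε) by funext k; ring]
      exact Tendsto.atTop_mul_const_of_neg (by linarith) tendsto_natCast_atTop_atTop
    have h1 : Tendsto (fun k : ℕ => φ (x - k * ε)) atTop (𝓝 0) := by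
      have := h.limit_bot.comp htt
      exact this.congr (fun k => by simp [sub_eq_add_neg])
    have h2 : Tendsto (fun k : ℕ => φ (x - k * ε)) atTop (𝓝 1) := by
      have : (fun k : ℕ => φ (x - k * ε)) = fun _ => 1 := funext hind
      rw [this]; exact tendsto_const_nhds
    have := tendsto_nhds_unique h1 h2
    norm_num at this
  · push_neg at hcase
    have hq0 : ∀ y, ℓ < y → S.q y = 0 := by
      intro y hy
      by_contra hne
      have : 0 < S.q y := lt_of_le_of_ne (S.hq_nonneg y) (Ne.symm hne)
      exact absurd hy (not_lt.mpr (hcase y this))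
    set Z := {z : ℝ | φ z = 1} with hZ
    have hZne : Z.Nonempty := ⟨x, hx1⟩
    have hZclosed : IsClosed Z := isClosed_eq (phi_cont h) continuous_const
    obtain ⟨B, hB⟩ : ∃ B, ∀ z ≤ B, φ z < (1:ℝ)/2 := by
      have := h.limit_bot.eventually (eventually_lt_nhds (by norm_num : (0:ℝ) < 1/2))
      rw [eventually_atBot] at this
      exact this
    have hZbdd : BddBelow Z := by
      refine ⟨B, fun z hz => ?_⟩
      by_contra hzB
      push_neg at hzB
      have := hB z hzB.le
      rw [hz] at this; norm_num at this
    set w := sInf Z with hw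
    have hwZ : w ∈ Z := hZclosed.csInf_mem hZne hZbdd
    have hφw : φ w = 1 := hwZ
    have hone_right : ∀ z, w ≤ z → φ z = 1 := fun z hz =>
      le_antisymm (phi01 h z).2 (hφw ▸ h.mono hz)
    obtain ⟨L, hL1, hL0, hLd1, hLP⟩ := exists_L S
    obtain ⟨Mq, hMq0, hMqb⟩ := exists_Mq S
    set t := min 1 (1/(2*L*(Mq+1))) with ht
    have htpos : 0 < t := by
      apply lt_min one_pos
      positivity
    have ht2 : t ≤ 1/(2*L*(Mq+1)) := min_le_right _ _
    have hkey : 1 - psi S φ (w - t + ℓ) ≤ (Mq * (1 - φ (w - t))) * t := by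
      rw [← one_sub_psi h (w - t + ℓ)]
      have hpt : ∀ y, S.q y * (1 - φ (w - t + ℓ - y)) ≤
          (Set.Icc (ℓ - t) ℓ).indicator (fun _ => Mq * (1 - φ (w - t))) y := by
        intro y
        by_cases hy1 : ℓ < y
        · rw [hq0 y hy1, zero_mul]
          exact Set.indicator_nonneg
            (fun _ _ => mul_nonneg hMq0 (by linarith [(phi01 h (w - t)).2])) y
        push_neg at hy1
        by_cases hy2 : ℓ - t ≤ y
        · rw [Set.indicator_of_mem (Set.mem_Icc.mpr ⟨hy2, hy1⟩)]
          apply mul_le_mul (hMqb y) ?_ (by linarith [(phi01 h (w - t + ℓ - y)).2]) hMq0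
          have := h.mono (by linarith : w - t ≤ w - t + ℓ - y)
          linarith
        · push_neg at hy2
          rw [Set.indicator_of_notMem (by rw [Set.mem_Icc]; push_neg; intro hy3; linarith),
            hone_right _ (by linarith), sub_self, mul_zero]
      have hintl : Integrable (fun y => S.q y * (1 - φ (w - t + ℓ - y))) :=
        integ_one_sub_phi h (w - t + ℓ)
      have hintr : Integrable ((Set.Icc (ℓ - t) ℓ).indicator (fun _ => Mq * (1 - φ (w - t)))) := by
        rw [integrable_indicator_iff measurableSet_Icc]
        exact integrableOn_const (by rw [Real.volume_Icc]; exact ENNReal.ofReal_ne_top)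
      have := integral_mono hintl hintr hpt
      rw [integral_indicator measurableSet_Icc, setIntegral_const, Real.volume_real_Icc_of_le (by linarith : ℓ - t ≤ ℓ)] at this
      calc (∫ y, S.q y * (1 - φ (w - t + ℓ - y)))
          ≤ (ℓ - (ℓ - t)) • (Mq * (1 - φ (w - t))) := this
        _ = (Mq * (1 - φ (w - t))) * t := by rw [smul_eq_mul]; ring
    have hkey2 : 1 - φ (w - t) ≤ L * (1 - psi S φ (w - t + ℓ)) := by
      have hwv := wave h (w - t)
      have := g_sub_le S (psi_le_one h (w - t + ℓ)) hL0 hLd1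
        (fun u hu0 hu1 _ _ => hLP u ⟨hu0, hu1⟩)
      rw [g_one] at this
      rw [hwv]
      linarith
    have hcontr : 1 - φ (w - t) ≤ (1/2) * (1 - φ (w - t)) := by
      have hφt0 : 0 ≤ 1 - φ (w - t) := by linarith [(phi01 h (w - t)).2]
      have c1 : 1 - φ (w - t) ≤ L * ((Mq * (1 - φ (w - t))) * t) :=
        le_trans hkey2 (mul_le_mul_of_nonneg_left hkey (by linarith))
      have c2 : L * ((Mq * (1 - φ (w - t))) * t) ≤ (1/2) * (1 - φ (w - t)) := by
        have : L * Mq * t ≤ 1/2 := by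
          calc L * Mq * t ≤ L * Mq * (1/(2*L*(Mq+1))) := by
                apply mul_le_mul_of_nonneg_left ht2 (by positivity)
            _ ≤ 1/2 := by
                rw [mul_one_div, div_le_div_iff₀ (by positivity) (by norm_num)]
                nlinarith
        nlinarith
      linarith
    have hft : φ (w - t) = 1 := by
      have := (phi01 h (w - t)).2
      linarith
    have : w ≤ w - t := csInf_le hZbdd hft
    linarith

lemma psi_pos (x : ℝ) : 0 < psi S φ x := by
  rcases eq_or_lt_of_le (psi_nonneg h x) with heq | hpos
  · exfalso
    obtain ⟨y₀, hy₀⟩ := qpos_exists S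
    have hvan := vanish (f := fun y => S.q y * φ (x - y))
      ((q_cont S).mul ((phi_cont h).comp (continuous_const.sub continuous_id)))
      (fun y => mul_nonneg (S.hq_nonneg y) (phi01 h _).1)
      (integ_phi h x) heq.symm
    have := hvan y₀
    rcases mul_eq_zero.mp this with h1 | h2
    · exact absurd h1 (ne_of_gt hy₀)
    · exact absurd h2 (ne_of_gt (phi_pos h _))
  · exact hpos

lemma psi_lt_one (x : ℝ) : psi S φ x < 1 := by
  rcases eq_or_lt_of_le (psi_le_one h x) with heq | hlt
  · exfalso
    have hzero : (∫ y, S.q y * (1 - φ (x - y))) = 0 := by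
      rw [one_sub_psi h x, heq]; ring
    obtain ⟨y₀, hy₀⟩ := qpos_exists S
    have hvan := vanish (f := fun y => S.q y * (1 - φ (x - y)))
      ((q_cont S).mul (continuous_const.sub ((phi_cont h).comp (continuous_const.sub continuous_id))))
      (fun y => mul_nonneg (S.hq_nonneg y) (by linarith [(phi01 h (x - y)).2]))
      (integ_one_sub_phi h x)
      hzero
    have := hvan y₀
    rcases mul_eq_zero.mp this with h1 | h2
    · exact absurd h1 (ne_of_gt hy₀)
    · have := phi_lt_one h (x - y₀); linarith
  · exact hlt

end TWaux2

namespace TWaux2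
open TWaux

variable {S : BistableSetting} {ℓ : ℝ} {φ : ℝ → ℝ}

lemma P_strictMono (S : BistableSetting) :
    StrictMonoOn (fun t => S.P.eval t) (Set.Icc (0:ℝ) 1) := by
  apply strictMonoOn_of_deriv_pos (convex_Icc 0 1) (S.P.continuous).continuousOn
  · intro t ht
    rw [interior_Icc] at ht
    rw [(S.P.hasDerivAt t).deriv]
    exact S.hP_mono t ht

variable (h : IsTravelingWave S ℓ φ)
include h

lemma const_of_deriv_zero_Ioo {a b : ℝ}
    (hd : ∀ w ∈ Set.Ioo a b, deriv φ w = 0) :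
    ∀ w₁ ∈ Set.Ioo a b, ∀ w₂ ∈ Set.Ioo a b, φ w₁ = φ w₂ := by
  have key : ∀ w₁ ∈ Set.Ioo a b, ∀ w₂ ∈ Set.Ioo a b, w₁ ≤ w₂ → φ w₂ ≤ φ w₁ := by
    intro w₁ hw₁ w₂ hw₂ hle
    have hanti : AntitoneOn φ (Set.Icc w₁ w₂) := by
      apply antitoneOn_of_deriv_nonpos (convex_Icc w₁ w₂) (phi_cont h).continuousOn
        (fun t _ => ((phi_hasDeriv h t).differentiableAt).differentiableWithinAt)
      intro t ht
      rw [interior_Icc] at ht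
      have : t ∈ Set.Ioo a b := ⟨lt_of_lt_of_le hw₁.1 ht.1.le, lt_of_le_of_lt ht.2.le hw₂.2⟩
      rw [hd t this]
    exact hanti (Set.left_mem_Icc.mpr hle) (Set.right_mem_Icc.mpr hle) hle
  intro w₁ hw₁ w₂ hw₂
  rcases le_total w₁ w₂ with hle | hle
  · exact le_antisymm (h.mono hle) (key w₁ hw₁ w₂ hw₂ hle)
  · exact (le_antisymm (h.mono hle) (key w₂ hw₂ w₁ hw₁ hle)).symm

/-- difference of psi values as an integral -/
lemma psi_diff (x₁ x₂ : ℝ) :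
    psi S φ x₂ - psi S φ x₁ = ∫ y, S.q y * (φ (x₂ - y) - φ (x₁ - y)) := by
  have heq : (fun y => S.q y * (φ (x₂ - y) - φ (x₁ - y))) =
      fun y => S.q y * φ (x₂ - y) - S.q y * φ (x₁ - y) := by funext y; ring
  rw [heq, integral_sub (integ_phi h x₂) (integ_phi h x₁)]
  rfl

/-- if psi takes equal values at `x₁+ℓ ≤ x₂+ℓ`, then φ is flat on `supp q` translates -/
lemma vanish_diff {x₁ x₂ : ℝ} (hle : x₁ ≤ x₂)
    (hψ : psi S φ (x₂ + ℓ) = psi S φ (x₁ + ℓ)) :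
    ∀ y, 0 < S.q y → φ (x₂ + ℓ - y) = φ (x₁ + ℓ - y) := by
  have hzero : (∫ y, S.q y * (φ (x₂ + ℓ - y) - φ (x₁ + ℓ - y))) = 0 := by
    rw [← psi_diff h (x₁ + ℓ) (x₂ + ℓ), hψ, sub_self]
  have hvan := vanish (f := fun y => S.q y * (φ (x₂ + ℓ - y) - φ (x₁ + ℓ - y)))
    ((q_cont S).mul (((phi_cont h).comp (continuous_const.sub continuous_id)).sub
      ((phi_cont h).comp (continuous_const.sub continuous_id))))
    (fun y => mul_nonneg (S.hq_nonneg y) (sub_nonneg.mpr (h.mono (by linarith))))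
    (by
      have heq : (fun y => S.q y * (φ (x₂ + ℓ - y) - φ (x₁ + ℓ - y))) =
          fun y => S.q y * φ (x₂ + ℓ - y) - S.q y * φ (x₁ + ℓ - y) := by funext y; ring
      rw [heq]
      exact (integ_phi h (x₂ + ℓ)).sub (integ_phi h (x₁ + ℓ)))
    hzero
  intro y hy
  have := hvan y
  rcases mul_eq_zero.mp this with h1 | h2
  · exact absurd h1 (ne_of_gt hy)
  · linarith

/-- plateau propagation step -/
lemma plateau_step {a b α β : ℝ} (hab : a < b) (hαβ : α < β)
    (hq : ∀ y ∈ Set.Ioo α β, 0 < S.q y)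
    (hconst : ∀ w₁ ∈ Set.Ioo a b, ∀ w₂ ∈ Set.Ioo a b, φ w₁ = φ w₂) :
    ∀ w₁ ∈ Set.Ioo (a + ℓ - β) (b + ℓ - α), ∀ w₂ ∈ Set.Ioo (a + ℓ - β) (b + ℓ - α),
      φ w₁ = φ w₂ := by
  set x₀ := (a + b)/2 with hx₀
  have hx₀mem : x₀ ∈ Set.Ioo a b := ⟨by rw [hx₀]; linarith, by rw [hx₀]; linarith⟩
  -- psi is constant on the plateau
  have hψconst : ∀ x ∈ Set.Ioo a b, psi S φ (x + ℓ) = psi S φ (x₀ + ℓ) := by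
    intro x hx
    have hφ : φ x = φ x₀ := hconst x hx x₀ hx₀mem
    have h1 := wave h x
    have h2 := wave h x₀
    have hP : S.P.eval (psi S φ (x + ℓ)) = S.P.eval (psi S φ (x₀ + ℓ)) := by
      rw [← g_eq_P S (psi_nonneg h _) (psi_le_one h _),
        ← g_eq_P S (psi_nonneg h _) (psi_le_one h _), ← h1, ← h2, hφ]
    exact (P_strictMono S).injOn
      (Set.mem_Icc.mpr ⟨psi_nonneg h _, psi_le_one h _⟩)
      (Set.mem_Icc.mpr ⟨psi_nonneg h _, psi_le_one h _⟩) hP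
  -- φ translates agree
  have hφeq : ∀ x ∈ Set.Ioo a b, ∀ y ∈ Set.Ioo α β, φ (x + ℓ - y) = φ (x₀ + ℓ - y) := by
    intro x hx y hy
    rcases le_total x₀ x with hle | hle
    · exact vanish_diff h hle (by rw [hψconst x hx]) y (hq y hy)
    · exact (vanish_diff h hle (by rw [hψconst x hx]) y (hq y hy)).symm
  -- derivative vanishes on the new interval
  have hderiv0 : ∀ w ∈ Set.Ioo (a + ℓ - β) (b + ℓ - α), deriv φ w = 0 := by
    intro w hw
    have h1 : α < b + ℓ - w := by linarith [hw.2]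
    have h2 : a + ℓ - w < β := by linarith [hw.1]
    have h3 : a + ℓ - w < b + ℓ - w := by linarith
    have hmaxmin : max α (a + ℓ - w) < min β (b + ℓ - w) :=
      max_lt (lt_min hαβ h1) (lt_min h2 h3)
    set y := (max α (a + ℓ - w) + min β (b + ℓ - w))/2 with hy
    have hy1 : max α (a + ℓ - w) < y := by rw [hy]; linarith
    have hy2 : y < min β (b + ℓ - w) := by rw [hy]; linarith
    have hyαβ : y ∈ Set.Ioo α β :=
      ⟨lt_of_le_of_lt (le_max_left _ _) hy1, lt_of_lt_of_le hy2 (min_le_left _ _)⟩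
    have hxw : w - ℓ + y ∈ Set.Ioo a b := by
      constructor
      · have := lt_of_le_of_lt (le_max_right α (a + ℓ - w)) hy1; linarith
      · have := lt_of_lt_of_le hy2 (min_le_right β (b + ℓ - w)); linarith
    have hev : φ =ᶠ[𝓝 w] fun _ => φ (x₀ + ℓ - y) := by
      have hmem : Set.Ioo (a + ℓ - y) (b + ℓ - y) ∈ 𝓝 w := by
        apply Ioo_mem_nhds
        · linarith [hxw.1]
        · linarith [hxw.2]
      filter_upwards [hmem] with u hu
      have hxu : u - ℓ + y ∈ Set.Ioo a b := ⟨by linarith [hu.1], by linarith [hu.2]⟩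
      have := hφeq (u - ℓ + y) hxu y hyαβ
      rw [show u - ℓ + y + ℓ - y = u by ring] at this
      exact this
    rw [hev.deriv_eq, deriv_const]
  exact const_of_deriv_zero_Ioo h hderiv0

/-- no interior plateau -/
theorem no_plateau {a b : ℝ} (hab : a < b)
    (hconst : ∀ w₁ ∈ Set.Ioo a b, ∀ w₂ ∈ Set.Ioo a b, φ w₁ = φ w₂) : False := by
  obtain ⟨α, β, hαβ, hq⟩ := qpos_interval S
  set u : ℕ → ℝ := fun k => a + k * (ℓ - β) with hu
  set v : ℕ → ℝ := fun k => b + k * (ℓ - α) with hv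
  have hlen : ∀ k : ℕ, v k - u k = (b - a) + k * (β - α) := by
    intro k; rw [hu, hv]; ring
  have hd : 0 < β - α := by linarith
  have huv : ∀ k : ℕ, u k < v k := by
    intro k
    have : (0:ℝ) ≤ k * (β - α) := mul_nonneg (Nat.cast_nonneg k) hd.le
    nlinarith [hlen k]
  have hplat : ∀ k : ℕ, ∀ w₁ ∈ Set.Ioo (u k) (v k), ∀ w₂ ∈ Set.Ioo (u k) (v k), φ w₁ = φ w₂ := by
    intro k
    induction k with
    | zero => simpa [hu, hv] using hconst
    | succ n ih =>
      have := plateau_step h (huv n) hαβ hq ih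
      have hueq : u n + ℓ - β = u (n+1) := by rw [hu]; push_cast; ring
      have hveq : v n + ℓ - α = v (n+1) := by rw [hv]; push_cast; ring
      rw [hueq, hveq] at this
      exact this
  set c : ℕ → ℝ := fun k => φ (u k + (b - a)/2) with hc
  have hmemc : ∀ k : ℕ, u k + (b - a)/2 ∈ Set.Ioo (u k) (v k) := by
    intro k
    constructor
    · linarith
    · have : (0:ℝ) ≤ k * (β - α) := mul_nonneg (Nat.cast_nonneg k) hd.le
      nlinarith [hlen k]
  obtain ⟨K, hK⟩ := exists_nat_gt ((|ℓ - α| + |ℓ - β|) / (β - α))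
  have hKmul : ∀ k : ℕ, K ≤ k → |ℓ - α| + |ℓ - β| < k * (β - α) := by
    intro k hk
    have h1 : (|ℓ - α| + |ℓ - β|) < K * (β - α) := by
      rw [div_lt_iff₀ hd] at hK
      exact hK
    have h2 : (K:ℝ) * (β - α) ≤ k * (β - α) :=
      mul_le_mul_of_nonneg_right (Nat.cast_le.mpr hk) hd.le
    linarith
  have hover : ∀ k : ℕ, K ≤ k → c (k+1) = c k := by
    intro k hk
    have hs := hKmul k hk
    have habs1 : ℓ - β ≤ |ℓ - β| := le_abs_self _
    have habs2 : -(ℓ - α) ≤ |ℓ - α| := neg_le_abs _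
    have ho1 : u (k+1) < v k := by
      have : u (k+1) = u k + (ℓ - β) := by rw [hu]; push_cast; ring
      rw [this]
      nlinarith [hlen k, abs_nonneg (ℓ - α)]
    have ho2 : u k < v (k+1) := by
      have : v (k+1) = v k + (ℓ - α) := by rw [hv]; push_cast; ring
      rw [this]
      nlinarith [hlen k, abs_nonneg (ℓ - β)]
    set w := (max (u k) (u (k+1)) + min (v k) (v (k+1)))/2 with hwdef
    have hmm : max (u k) (u (k+1)) < min (v k) (v (k+1)) :=
      max_lt (lt_min (huv k) ho2) (lt_min ho1 (huv (k+1)))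
    have hw1 : max (u k) (u (k+1)) < w := by rw [hwdef]; linarith
    have hw2 : w < min (v k) (v (k+1)) := by rw [hwdef]; linarith
    have hwk : w ∈ Set.Ioo (u k) (v k) :=
      ⟨lt_of_le_of_lt (le_max_left _ _) hw1, lt_of_lt_of_le hw2 (min_le_left _ _)⟩
    have hwk1 : w ∈ Set.Ioo (u (k+1)) (v (k+1)) :=
      ⟨lt_of_le_of_lt (le_max_right _ _) hw1, lt_of_lt_of_le hw2 (min_le_right _ _)⟩
    calc c (k+1) = φ w := (hplat (k+1) _ (hmemc (k+1)) w hwk1).symm ▸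
        (hplat (k+1) (u (k+1) + (b-a)/2) (hmemc (k+1)) w hwk1)
      _ = c k := hplat k w hwk _ (hmemc k)
  have hceq : ∀ k : ℕ, K ≤ k → c k = c K := by
    intro k hk
    induction k, hk using Nat.le_induction with
    | base => rfl
    | succ n hn ih => rw [hover n hn, ih]
  rcases lt_or_ge ℓ β with hlβ | hlβ
  · -- plateaus march left, value = 0, contradiction with positivity
    have htend : Tendsto (fun k : ℕ => u k + (b - a)/2) atTop atBot := by
      rw [hu]
      have : (fun k : ℕ => a + k * (ℓ - β) + (b - a)/2) =
          fun k : ℕ => (k : ℝ) * (ℓ - β) + (a + (b - a)/2) := by funext k; ring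
      rw [this]
      apply tendsto_atBot_add_const_right
      exact Tendsto.atTop_mul_const_of_neg (by linarith) tendsto_natCast_atTop_atTop
    have h0 : Tendsto (fun k : ℕ => c k) atTop (𝓝 0) := h.limit_bot.comp htend
    have h1 : Tendsto (fun k : ℕ => c k) atTop (𝓝 (c K)) := by
      apply Tendsto.congr' _ tendsto_const_nhds
      filter_upwards [eventually_atTop.mpr ⟨K, fun k hk => (hceq k hk)⟩] with k hk
      exact hk.symm
    have := tendsto_nhds_unique h1 h0
    exact absurd this (ne_of_gt (phi_pos h _))
  · -- ℓ ≥ β > α, plateaus march right, value = 1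
    have hlα : α < ℓ := lt_of_lt_of_le hαβ hlβ
    have hmem2 : ∀ k : ℕ, v k - (b - a)/2 ∈ Set.Ioo (u k) (v k) := by
      intro k
      constructor
      · have : (0:ℝ) ≤ k * (β - α) := mul_nonneg (Nat.cast_nonneg k) hd.le
        nlinarith [hlen k]
      · linarith [huv k]
    have hceq2 : ∀ k : ℕ, c k = φ (v k - (b - a)/2) :=
      fun k => hplat k _ (hmemc k) _ (hmem2 k)
    have htend : Tendsto (fun k : ℕ => v k - (b - a)/2) atTop atTop := by
      rw [hv]
      have : (fun k : ℕ => b + k * (ℓ - α) - (b - a)/2) =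
          fun k : ℕ => (k : ℝ) * (ℓ - α) + (b - (b - a)/2) := by funext k; ring
      rw [this]
      apply tendsto_atTop_add_const_right
      exact Tendsto.atTop_mul_const (by linarith) tendsto_natCast_atTop_atTop
    have h1t : Tendsto (fun k : ℕ => φ (v k - (b - a)/2)) atTop (𝓝 1) := h.limit_top.comp htend
    have h1c : Tendsto (fun k : ℕ => c k) atTop (𝓝 1) := by
      apply Tendsto.congr _ h1t
      intro k
      exact (hceq2 k).symm
    have h2 : Tendsto (fun k : ℕ => c k) atTop (𝓝 (c K)) := by
      apply Tendsto.congr' _ tendsto_const_nhds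
      filter_upwards [eventually_atTop.mpr ⟨K, fun k hk => (hceq k hk)⟩] with k hk
      exact hk.symm
    have := tendsto_nhds_unique h2 h1c
    exact absurd this (ne_of_lt (phi_lt_one h _))

end TWaux2

namespace TWaux2
open TWaux

variable {S : BistableSetting} {ℓ : ℝ} {φ : ℝ → ℝ}

variable (h : IsTravelingWave S ℓ φ)
include h

/-- local lower bound for φ increments in terms of ψ increments -/
lemma incr_bound (z : ℝ) : ∃ m > 0, ∀ t ∈ Set.Ioc (0:ℝ) 1,
    m * (psi S φ (z + t + ℓ) - psi S φ (z + ℓ)) ≤ φ (z + t) - φ z := by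
  set s₁ := psi S φ (z + ℓ) with hs₁
  set s₂ := psi S φ (z + ℓ + 1) with hs₂
  have hs12 : s₁ ≤ s₂ := psi_mono h (by linarith)
  have hs₁pos : 0 < s₁ := psi_pos h _
  have hs₂lt : s₂ < 1 := psi_lt_one h _
  obtain ⟨t₀, ht₀, hmin⟩ := isCompact_Icc.exists_isMinOn (Set.nonempty_Icc.mpr hs12)
    (dP_cont S).continuousOn
  rw [isMinOn_iff] at hmin
  set m := dP S t₀ with hm
  have hmpos : 0 < m := by
    apply S.hP_mono
    rcases Set.mem_Icc.mp ht₀ with ⟨h1, h2⟩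
    exact ⟨lt_of_lt_of_le hs₁pos h1, lt_of_le_of_lt h2 hs₂lt⟩
  refine ⟨m, hmpos, fun t ht => ?_⟩
  have hmono1 : s₁ ≤ psi S φ (z + t + ℓ) := psi_mono h (by linarith [ht.1])
  have hmono2 : psi S φ (z + t + ℓ) ≤ s₂ := psi_mono h (by linarith [ht.2])
  have hkey := g_sub_ge S hs₁pos.le hmono1 (psi_lt_one h (z + t + ℓ)).le
    (fun u hu => hmin u (Set.mem_Icc.mpr ⟨hu.1, le_trans hu.2 hmono2⟩))
  rw [← wave h z, ← wave h (z + t)] at hkey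
  exact hkey

/-- zero derivative propagates through the kernel -/
lemma deriv_step {z : ℝ} (hz : deriv φ z = 0) :
    ∀ y₀, 0 < S.q y₀ → deriv φ (z + ℓ - y₀) = 0 := by
  intro y₀ hq₀
  by_contra hne
  have hdpos : 0 < deriv φ (z + ℓ - y₀) :=
    lt_of_le_of_ne (deriv_nonneg h _) (Ne.symm hne)
  set x₀ := z + ℓ - y₀ with hx₀
  set d := deriv φ x₀ with hd
  -- deriv φ ≥ d/2 near x₀
  obtain ⟨r, hr, hball⟩ : ∃ r > 0, ∀ u, |u - x₀| ≤ r → d/2 ≤ deriv φ u := by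
    have hc := (deriv_cont h).continuousAt (x := x₀)
    rw [Metric.continuousAt_iff] at hc
    obtain ⟨δ, hδ, hb⟩ := hc (d/2) (by linarith)
    refine ⟨δ/2, by linarith, fun u hu => ?_⟩
    have := hb (show dist u x₀ < δ by rw [Real.dist_eq]; linarith)
    rw [Real.dist_eq, abs_lt] at this
    rw [← hd] at this
    linarith [this.1]
  -- q ≥ q y₀ / 2 near y₀
  obtain ⟨r', hr', hr'r, hqball⟩ : ∃ r' > 0, r' ≤ r/2 ∧
      ∀ y, |y - y₀| ≤ r' → S.q y₀ / 2 ≤ S.q y := by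
    have hc := (q_cont S).continuousAt (x := y₀)
    rw [Metric.continuousAt_iff] at hc
    obtain ⟨δ, hδ, hb⟩ := hc (S.q y₀/2) (by linarith)
    refine ⟨min (δ/2) (r/2), lt_min (by linarith) (by linarith), min_le_right _ _, fun y hy => ?_⟩
    have := hb (show dist y y₀ < δ by
      rw [Real.dist_eq]; exact lt_of_le_of_lt (le_trans hy (min_le_left _ _)) (by linarith))
    rw [Real.dist_eq, abs_lt] at this
    linarith [this.1]
  -- increment bound on the ball
  have hincr : ∀ t, 0 < t → t ≤ r/2 → ∀ y, |y - y₀| ≤ r' →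
      (d/2) * t ≤ φ (z + ℓ - y + t) - φ (z + ℓ - y) := by
    intro t ht htr y hy
    have hder : ∀ u : ℝ, HasDerivAt (fun w => φ w - d/2 * w) (deriv φ u - d/2) u := fun u => by
      exact ((phi_hasDeriv h u).sub ((hasDerivAt_id u).const_mul (d/2))).congr_deriv (by simp)
    have hFmono : MonotoneOn (fun w => φ w - d/2 * w) (Set.Icc (x₀ - r) (x₀ + r)) := by
      refine monotoneOn_of_deriv_nonneg (convex_Icc _ _) ?_ ?_ ?_
      · exact ((phi_cont h).sub (continuous_const.mul continuous_id)).continuousOn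
      · exact fun u _ => ((hder u).differentiableAt).differentiableWithinAt
      intro u hu
      rw [interior_Icc] at hu
      rw [(hder u).deriv]
      have := hball u (by rw [abs_le]; constructor <;> linarith [hu.1, hu.2])
      linarith
    have hmem1 : z + ℓ - y ∈ Set.Icc (x₀ - r) (x₀ + r) := by
      rw [Set.mem_Icc, hx₀]
      rw [abs_le] at hy
      constructor <;> linarith [hy.1, hy.2, hr'r]
    have hmem2 : z + ℓ - y + t ∈ Set.Icc (x₀ - r) (x₀ + r) := by
      rw [Set.mem_Icc, hx₀]
      rw [abs_le] at hy
      constructor <;> linarith [hy.1, hy.2, hr'r]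
    have hfin : φ (z + ℓ - y) - d/2 * (z + ℓ - y) ≤
        φ (z + ℓ - y + t) - d/2 * (z + ℓ - y + t) := hFmono hmem1 hmem2 (by linarith)
    linarith
  -- integral lower bound ⇒ psi increment bound
  have hpsikey : ∀ t, 0 < t → t ≤ r/2 →
      (2*r') * (S.q y₀/2 * ((d/2) * t)) ≤ psi S φ (z + t + ℓ) - psi S φ (z + ℓ) := by
    intro t ht htr
    have hrw : psi S φ (z + t + ℓ) - psi S φ (z + ℓ) =
        ∫ y, S.q y * (φ (z + t + ℓ - y) - φ (z + ℓ - y)) := by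
      have := psi_diff h (z + ℓ) (z + t + ℓ)
      rw [this]
    rw [hrw]
    have hpt : ∀ y, (Set.Icc (y₀ - r') (y₀ + r')).indicator
        (fun _ => S.q y₀/2 * ((d/2) * t)) y ≤ S.q y * (φ (z + t + ℓ - y) - φ (z + ℓ - y)) := by
      intro y
      by_cases hy : y ∈ Set.Icc (y₀ - r') (y₀ + r')
      · rw [Set.indicator_of_mem hy]
        rcases Set.mem_Icc.mp hy with ⟨h1, h2⟩
        have habs : |y - y₀| ≤ r' := by rw [abs_le]; constructor <;> linarith
        have hi := hincr t ht htr y habs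
        rw [show z + ℓ - y + t = z + t + ℓ - y by ring] at hi
        apply mul_le_mul (hqball y habs) hi (by positivity) (S.hq_nonneg y)
      · rw [Set.indicator_of_notMem hy]
        apply mul_nonneg (S.hq_nonneg y) (sub_nonneg.mpr (h.mono (by linarith)))
    have hintr : Integrable (fun y => S.q y * (φ (z + t + ℓ - y) - φ (z + ℓ - y))) := by
      have heq : (fun y => S.q y * (φ (z + t + ℓ - y) - φ (z + ℓ - y))) =
          fun y => S.q y * φ (z + t + ℓ - y) - S.q y * φ (z + ℓ - y) := by funext y; ring
      rw [heq]
      exact (integ_phi h (z + t + ℓ)).sub (integ_phi h (z + ℓ))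
    have hintl : Integrable ((Set.Icc (y₀ - r') (y₀ + r')).indicator
        (fun _ => S.q y₀/2 * ((d/2) * t))) := by
      rw [integrable_indicator_iff measurableSet_Icc]
      exact integrableOn_const (by rw [Real.volume_Icc]; exact ENNReal.ofReal_ne_top)
    have := integral_mono hintl hintr hpt
    rw [integral_indicator measurableSet_Icc, setIntegral_const, Real.volume_real_Icc_of_le (by linarith : y₀ - r' ≤ y₀ + r')] at this
    calc (2*r') * (S.q y₀/2 * ((d/2) * t))
        = (y₀ + r' - (y₀ - r')) • (S.q y₀/2 * ((d/2) * t)) := by rw [smul_eq_mul]; ring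
      _ ≤ _ := this
  -- φ increment bound via incr_bound
  obtain ⟨m, hmpos, hmb⟩ := incr_bound h z
  set c0 := m * ((2*r') * (S.q y₀/2 * (d/2))) with hc0
  have hc0pos : 0 < c0 := by positivity
  have hslope : ∀ t, 0 < t → t ≤ min (r/2) 1 → c0 * t ≤ φ (z + t) - φ z := by
    intro t ht htm
    have h1 := hpsikey t ht (le_trans htm (min_le_left _ _))
    have h2 := hmb t ⟨ht, le_trans htm (min_le_right _ _)⟩
    calc c0 * t = m * ((2*r') * (S.q y₀/2 * ((d/2) * t))) := by rw [hc0]; ring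
      _ ≤ m * (psi S φ (z + t + ℓ) - psi S φ (z + ℓ)) :=
          mul_le_mul_of_nonneg_left h1 hmpos.le
      _ ≤ φ (z + t) - φ z := h2
  -- conclude deriv φ z ≥ c0 > 0, contradiction
  have hder := hasDerivAt_iff_tendsto_slope.mp (phi_hasDeriv h z)
  have hderR : Tendsto (slope φ z) (𝓝[>] z) (𝓝 (deriv φ z)) :=
    hder.mono_left (nhdsWithin_mono z fun u hu => ne_of_gt hu)
  have hev : ∀ᶠ u in 𝓝[>] z, c0 ≤ slope φ z u := by
    have hmin0 : 0 < min (r/2) 1 := lt_min (by linarith) one_pos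
    have hmem : Set.Ioc z (z + min (r/2) 1) ∈ 𝓝[>] z :=
      Ioc_mem_nhdsGT_of_mem ⟨le_rfl, by linarith⟩
    filter_upwards [hmem] with u hu
    have ht : 0 < u - z := by linarith [hu.1]
    have := hslope (u - z) ht (by linarith [hu.2])
    rw [show z + (u - z) = u by ring] at this
    rw [slope_def_field]
    rw [le_div_iff₀ ht]
    linarith
  have : c0 ≤ deriv φ z := ge_of_tendsto hderR hev
  rw [hz] at this
  linarith

theorem deriv_pos (z : ℝ) : 0 < deriv φ z := by
  rcases lt_or_eq_of_le (deriv_nonneg h z) with hpos | heq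
  · exact hpos
  exfalso
  obtain ⟨α, β, hαβ, hq⟩ := qpos_interval S
  have hzero : ∀ w ∈ Set.Ioo (z + ℓ - β) (z + ℓ - α), deriv φ w = 0 := by
    intro w hw
    have hy : z + ℓ - w ∈ Set.Ioo α β := ⟨by linarith [hw.2], by linarith [hw.1]⟩
    have := deriv_step h heq.symm (z + ℓ - w) (hq _ hy)
    rw [show z + ℓ - (z + ℓ - w) = w by ring] at this
    exact this
  exact no_plateau h (show z + ℓ - β < z + ℓ - α by linarith)
    (const_of_deriv_zero_Ioo h hzero)

end TWaux2

namespace TWaux2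
open TWaux

variable {S : BistableSetting} {ℓ : ℝ} {φ : ℝ → ℝ}

lemma eta_exists (S : BistableSetting) : ∃ κ η : ℝ, 0 < κ ∧ κ < 1 ∧ 0 < η ∧ η ≤ 1/4 ∧
    dP S 0 ≤ 1 - κ ∧ dP S 1 ≤ 1 - κ ∧
    (∀ t, 0 ≤ t → t ≤ 2*η → dP S t ≤ 1 - κ) ∧
    (∀ t, 1 - 2*η ≤ t → t ≤ 1 → dP S t ≤ 1 - κ) := by
  set ρ := max (dP S 0) (dP S 1) with hρ
  have hρ0 : 0 ≤ ρ := le_trans (dP0_nonneg S) (le_max_left _ _)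
  have hρ1 : ρ < 1 := max_lt S.hf'0 S.hf'1
  set κ := (1 - ρ)/2 with hκ
  have hκpos : 0 < κ := by rw [hκ]; linarith
  have hκlt : κ < 1 := by rw [hκ]; linarith
  have hρκ : ρ < 1 - κ := by rw [hκ]; linarith
  have hd0 : dP S 0 ≤ ρ := le_max_left _ _
  have hd1 : dP S 1 ≤ ρ := le_max_right _ _
  obtain ⟨δ0, hδ0, hb0⟩ : ∃ δ0 > 0, ∀ t, |t - 0| < δ0 → dP S t < 1 - κ := by
    have hc := (dP_cont S).continuousAt (x := (0:ℝ))
    rw [Metric.continuousAt_iff] at hc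
    obtain ⟨δ, hδ, hb⟩ := hc ((1 - κ) - dP S 0) (by linarith)
    refine ⟨δ, hδ, fun t ht => ?_⟩
    have := hb (show dist t 0 < δ by rwa [Real.dist_eq])
    rw [Real.dist_eq, abs_lt] at this
    linarith [this.2]
  obtain ⟨δ1, hδ1, hb1⟩ : ∃ δ1 > 0, ∀ t, |t - 1| < δ1 → dP S t < 1 - κ := by
    have hc := (dP_cont S).continuousAt (x := (1:ℝ))
    rw [Metric.continuousAt_iff] at hc
    obtain ⟨δ, hδ, hb⟩ := hc ((1 - κ) - dP S 1) (by linarith)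
    refine ⟨δ, hδ, fun t ht => ?_⟩
    have := hb (show dist t 1 < δ by rwa [Real.dist_eq])
    rw [Real.dist_eq, abs_lt] at this
    linarith [this.2]
  set η := min (min (δ0/4) (δ1/4)) (1/4) with hη
  have hηpos : 0 < η := lt_min (lt_min (by linarith) (by linarith)) (by norm_num)
  have hη4 : η ≤ 1/4 := min_le_right _ _
  have hηδ0 : η ≤ δ0/4 := le_trans (min_le_left _ _) (min_le_left _ _)
  have hηδ1 : η ≤ δ1/4 := le_trans (min_le_left _ _) (min_le_right _ _)
  refine ⟨κ, η, hκpos, hκlt, hηpos, hη4, by linarith, by linarith, ?_, ?_⟩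
  · intro t ht0 ht2
    apply le_of_lt
    apply hb0
    rw [sub_zero, abs_of_nonneg ht0]
    linarith
  · intro t ht1 ht2
    apply le_of_lt
    apply hb1
    rw [abs_lt]
    constructor <;> linarith

variable (h : IsTravelingWave S ℓ φ)
include h

set_option maxHeartbeats 1000000 in
/-- The main super/sub-solution estimate. -/
lemma main_est : ∃ β₀ δ₀ σ : ℝ, 0 < β₀ ∧ 0 < δ₀ ∧ 0 < σ ∧ ∀ β, 0 < β → β ≤ β₀ → ∀ z,
    (S.g (psi S φ (z + ℓ) + β) ≤ φ (z + σ*β) + Real.exp (-δ₀) * β) ∧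
    (φ (z - σ*β) - Real.exp (-δ₀) * β ≤ S.g (psi S φ (z + ℓ) - β)) := by
  obtain ⟨κ, η, hκpos, hκlt, hηpos, hη4, hd0κ, hd1κ, hlow, hhigh⟩ := eta_exists S
  obtain ⟨L, hL1, hLd0, hLd1, hLP⟩ := exists_L S
  set c₁ := S.P.eval η with hc₁
  set c₂ := S.P.eval (1 - η) with hc₂
  have hηmem : η ∈ Set.Ioo (0:ℝ) 1 := ⟨hηpos, by linarith⟩
  have h1ηmem : (1 - η) ∈ Set.Ioo (0:ℝ) 1 := ⟨by linarith, by linarith⟩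
  have hc₁pos : 0 < c₁ := (S.hP_range η hηmem).1
  have hc₂lt : c₂ < 1 := (S.hP_range _ h1ηmem).2
  have hPmono : MonotoneOn (fun t => S.P.eval t) (Set.Icc (0:ℝ) 1) :=
    (P_strictMono S).monotoneOn
  obtain ⟨A, hA⟩ : ∃ A, ∀ x ≤ A, φ x < c₁ := by
    have := h.limit_bot.eventually (eventually_lt_nhds hc₁pos)
    rwa [eventually_atBot] at this
  obtain ⟨B, hB⟩ : ∃ B, ∀ x ≥ B, c₂ < φ x := by
    have := h.limit_top.eventually (eventually_gt_nhds hc₂lt)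
    rwa [eventually_atTop] at this
  set M := max (max (-A) B) 0 with hM
  have hM0 : 0 ≤ M := le_max_right _ _
  have hNA : -A ≤ M := le_trans (le_max_left _ _) (le_max_left _ _)
  have hNB : B ≤ M := le_trans (le_max_right _ _) (le_max_left _ _)
  clear_value M
  have hKne : (-M - 1 : ℝ) ≤ M + 1 := by linarith
  obtain ⟨tm, htm, hmin⟩ := isCompact_Icc.exists_isMinOn (Set.nonempty_Icc.mpr hKne)
    (deriv_cont h).continuousOn
  rw [isMinOn_iff] at hmin
  set m := deriv φ tm with hm
  have hmpos : 0 < m := deriv_pos h tm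
  have hminK : ∀ u ∈ Set.Icc (-M - 1) (M + 1), m ≤ deriv φ u := fun u hu => hmin u hu
  clear_value m
  set σ := L/m with hσ
  have hσpos : 0 < σ := by rw [hσ]; positivity
  set β₀ := min η (m/L) with hβ₀
  have hβ₀pos : 0 < β₀ := lt_min hηpos (by positivity)
  have hβ₀le1 : β₀ ≤ η := min_le_left _ _
  have hβ₀le2 : β₀ ≤ m/L := min_le_right _ _
  clear_value β₀
  set δ₀ := -Real.log (1 - κ) with hδ₀
  have h1κpos : 0 < 1 - κ := by linarith
  have hδ₀pos : 0 < δ₀ := by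
    rw [hδ₀, neg_pos]
    exact Real.log_neg h1κpos (by linarith)
  have hexp : Real.exp (-δ₀) = 1 - κ := by
    rw [hδ₀, neg_neg, Real.exp_log h1κpos]
  clear_value δ₀
  -- increment lemma on the compact set
  have hstep : ∀ a b : ℝ, -M - 1 ≤ a → b ≤ M + 1 → a ≤ b → m * (b - a) ≤ φ b - φ a := by
    intro a b ha hb hab
    have hder : ∀ u : ℝ, HasDerivAt (fun w => φ w - m * w) (deriv φ u - m) u := fun u => by
      exact ((phi_hasDeriv h u).sub ((hasDerivAt_id u).const_mul m)).congr_deriv (by simp)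
    have hmono : MonotoneOn (fun w => φ w - m * w) (Set.Icc (-M - 1) (M + 1)) := by
      refine monotoneOn_of_deriv_nonneg (convex_Icc _ _) ?_ ?_ ?_
      · exact ((phi_cont h).sub (continuous_const.mul continuous_id)).continuousOn
      · exact fun u _ => ((hder u).differentiableAt).differentiableWithinAt
      · intro u hu
        rw [interior_Icc] at hu
        rw [(hder u).deriv]
        have h1 := hminK u ⟨hu.1.le, hu.2.le⟩
        linarith
    have := hmono (Set.mem_Icc.mpr ⟨ha, by linarith⟩) (Set.mem_Icc.mpr ⟨by linarith, hb⟩) hab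
    simp only at this
    linarith
  refine ⟨β₀, δ₀, σ, hβ₀pos, hδ₀pos, hσpos, fun β hβpos hββ₀ z => ?_⟩
  have hβη : β ≤ η := le_trans hββ₀ hβ₀le1
  have hσβ : σ * β ≤ 1 := by
    rw [hσ]
    have : β ≤ m/L := le_trans hββ₀ hβ₀le2
    rw [div_mul_eq_mul_div, div_le_one (by linarith)]
    calc L * β ≤ L * (m/L) := mul_le_mul_of_nonneg_left this (by linarith)
      _ = m := by field_simp
  have hσβpos : 0 < σ * β := by positivity
  set s := psi S φ (z + ℓ) with hs
  have hs01 : 0 < s ∧ s < 1 := ⟨psi_pos h _, psi_lt_one h _⟩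
  have hwz : φ z = S.g s := wave h z
  clear_value s
  rcases le_or_gt s η with hcase1 | hcase1'
  · -- low region
    constructor
    · have hgs := g_sub_le S (by linarith : s ≤ s + β) hd0κ hd1κ
        (fun t ht0 ht1 hta htb => hlow t ht0 (by linarith))
      have hmono := h.mono (by linarith : z ≤ z + σ*β)
      rw [hexp]
      nlinarith [hgs]
    · have hgs := g_sub_le S (by linarith : s - β ≤ s) hd0κ hd1κ
        (fun t ht0 ht1 hta htb => hlow t ht0 (by linarith))
      have hmono := h.mono (by linarith : z - σ*β ≤ z)
      rw [hexp]
      nlinarith [hgs]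
  rcases le_or_gt (1 - η) s with hcase2 | hcase2'
  · -- high region
    constructor
    · have hgs := g_sub_le S (by linarith : s ≤ s + β) hd0κ hd1κ
        (fun t ht0 ht1 hta htb => hhigh t (by linarith) ht1)
      have hmono := h.mono (by linarith : z ≤ z + σ*β)
      rw [hexp]
      nlinarith [hgs]
    · have hgs := g_sub_le S (by linarith : s - β ≤ s) hd0κ hd1κ
        (fun t ht0 ht1 hta htb => hhigh t (by linarith) ht1)
      have hmono := h.mono (by linarith : z - σ*β ≤ z)
      rw [hexp]
      nlinarith [hgs]
  -- middle region
  have hgP : S.g s = S.P.eval s := g_eq_P S hs01.1.le hs01.2.le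
  have hφz1 : c₁ ≤ φ z := by
    rw [hwz, hgP]
    exact hPmono (Set.mem_Icc.mpr ⟨hηpos.le, by linarith⟩)
      (Set.mem_Icc.mpr ⟨hs01.1.le, hs01.2.le⟩) hcase1'.le
  have hφz2 : φ z ≤ c₂ := by
    rw [hwz, hgP]
    exact hPmono (Set.mem_Icc.mpr ⟨hs01.1.le, hs01.2.le⟩)
      (Set.mem_Icc.mpr ⟨by linarith, by linarith⟩) hcase2'.le
  have hzM1 : -M ≤ z := by
    by_contra hc
    push_neg at hc
    have := hA z (by linarith)
    linarith
  have hzM2 : z ≤ M := by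
    by_contra hc
    push_neg at hc
    have := hB z (by linarith)
    linarith
  have hLβ : m * (σ * β) = L * β := by
    rw [hσ]; field_simp
  constructor
  · have hgs := g_sub_le S (by linarith : s ≤ s + β) (le_trans hLd0 le_rfl) hLd1
      (fun t ht0 ht1 hta htb => hLP t ⟨ht0, ht1⟩)
    have hst := hstep z (z + σ*β) (by linarith) (by linarith) (by linarith)
    rw [hexp]
    have hexpβ : 0 ≤ (1 - κ) * β := by positivity
    nlinarith [hgs, hst]
  · have hgs := g_sub_le S (by linarith : s - β ≤ s) (le_trans hLd0 le_rfl) hLd1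
      (fun t ht0 ht1 hta htb => hLP t ⟨ht0, ht1⟩)
    have hst := hstep (z - σ*β) z (by linarith) (by linarith) (by linarith)
    rw [hexp]
    have hexpβ : 0 ≤ (1 - κ) * β := by positivity
    nlinarith [hgs, hst]

end TWaux2

namespace TWaux2

lemma gsum_le {r : ℝ} (h0 : 0 ≤ r) (h1 : r < 1) (n : ℕ) :
    ∑ i ∈ Finset.range n, r^i ≤ (1 - r)⁻¹ := by
  have hlt : (0:ℝ) < 1 - r := by linarith
  rw [geom_sum_eq (ne_of_lt h1)]
  rw [div_le_iff_of_neg (by linarith : r - 1 < 0)]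
  have hpow : 0 ≤ r^n := pow_nonneg h0 n
  have hinv : (1 - r)⁻¹ * (1 - r) = 1 := inv_mul_cancel₀ (ne_of_gt hlt)
  nlinarith [inv_nonneg.mpr hlt.le]

end TWaux2


/-- Construction of super- and sub-solutions of the recursion `w_{n+1} = g(q * w_n)` by
perturbing a traveling wave: there are `β₀^± > 0`, `δ₀^± > 0` such that for any initial
shift one finds a bounded monotone sequence of shifts making
`φ(x - nℓ + ξ_n^+) + β₀^+ e^{-δ₀^+ n}` a super-solution and
`φ(x - nℓ + ξ_n^-) - β₀^- e^{-δ₀^- n}` a sub-solution. -/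
theorem traveling_wave_sub_super_solutions (S : BistableSetting) (ℓ : ℝ) (φ : ℝ → ℝ)
    (h : IsTravelingWave S ℓ φ) :
    ∃ βp δp βm δm : ℝ, 0 < βp ∧ 0 < δp ∧ 0 < βm ∧ 0 < δm ∧
      (∀ ξ₀ : ℝ, ∃ ξ : ℕ → ℝ, ξ 0 = ξ₀ ∧ Monotone ξ ∧ (∃ C, ∀ n, |ξ n| ≤ C) ∧
        ∀ (n : ℕ) (x : ℝ),
          S.g (conv S.q (fun y => φ (y - n * ℓ + ξ n) + βp * Real.exp (-δp * n)) x) ≤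
            φ (x - (n + 1 : ℕ) * ℓ + ξ (n + 1)) + βp * Real.exp (-δp * (n + 1 : ℕ))) ∧
      (∀ ξ₀ : ℝ, ∃ ξ : ℕ → ℝ, ξ 0 = ξ₀ ∧ Antitone ξ ∧ (∃ C, ∀ n, |ξ n| ≤ C) ∧
        ∀ (n : ℕ) (x : ℝ),
          φ (x - (n + 1 : ℕ) * ℓ + ξ (n + 1)) - βm * Real.exp (-δm * (n + 1 : ℕ)) ≤
            S.g (conv S.q (fun y => φ (y - n * ℓ + ξ n) - βm * Real.exp (-δm * n)) x)) := by
  obtain ⟨β₀, δ₀, σ, hβ₀, hδ₀, hσ, hmain⟩ := TWaux2.main_est h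
  set r := Real.exp (-δ₀) with hr
  have hr0 : 0 < r := Real.exp_pos _
  have hr1 : r < 1 := by
    rw [hr]
    have := Real.exp_lt_exp.mpr (show -δ₀ < 0 by linarith)
    rwa [Real.exp_zero] at this
  have hrpow : ∀ n : ℕ, r^n = Real.exp (-δ₀ * n) := by
    intro n
    rw [hr, ← Real.exp_nat_mul]
    congr 1
    ring
  have hβn_pos : ∀ n : ℕ, 0 < β₀ * Real.exp (-δ₀ * n) := fun n => by positivity
  have hβn_le : ∀ n : ℕ, β₀ * Real.exp (-δ₀ * n) ≤ β₀ := by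
    intro n
    have h1 : Real.exp (-δ₀ * n) ≤ 1 := by
      have := Real.exp_le_exp.mpr (show -δ₀ * (n:ℝ) ≤ 0 by
        apply mul_nonpos_of_nonpos_of_nonneg (by linarith) (Nat.cast_nonneg n))
      rwa [Real.exp_zero] at this
    nlinarith
  refine ⟨β₀, δ₀, β₀, δ₀, hβ₀, hδ₀, hβ₀, hδ₀, ?_, ?_⟩
  · -- super-solutions
    intro ξ₀
    set ξ : ℕ → ℝ := fun n => ξ₀ + σ * β₀ * ∑ i ∈ Finset.range n, r^i with hξ
    have hξsucc : ∀ n : ℕ, ξ (n+1) = ξ n + σ * β₀ * r^n := by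
      intro n
      rw [hξ]
      simp only [Finset.sum_range_succ]
      ring
    refine ⟨ξ, by simp [hξ], ?_, ⟨|ξ₀| + σ * β₀ * (1 - r)⁻¹, ?_⟩, ?_⟩
    · apply monotone_nat_of_le_succ
      intro n
      rw [hξsucc n]
      have : 0 ≤ σ * β₀ * r^n := by positivity
      linarith
    · intro n
      have hsum0 : 0 ≤ ∑ i ∈ Finset.range n, r^i :=
        Finset.sum_nonneg fun i _ => pow_nonneg hr0.le i
      have hsum1 : ∑ i ∈ Finset.range n, r^i ≤ (1 - r)⁻¹ := TWaux2.gsum_le hr0.le hr1 n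
      rw [hξ]
      calc |ξ₀ + σ * β₀ * ∑ i ∈ Finset.range n, r^i|
          ≤ |ξ₀| + |σ * β₀ * ∑ i ∈ Finset.range n, r^i| := abs_add_le _ _
        _ = |ξ₀| + σ * β₀ * ∑ i ∈ Finset.range n, r^i := by
            rw [abs_of_nonneg (show (0:ℝ) ≤ σ * β₀ * ∑ i ∈ Finset.range n, r^i by positivity)]
        _ ≤ |ξ₀| + σ * β₀ * (1 - r)⁻¹ := by
            have := mul_le_mul_of_nonneg_left hsum1 (show (0:ℝ) ≤ σ * β₀ by positivity)
            linarith
    · intro n x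
      push_cast
      set β := β₀ * Real.exp (-δ₀ * n) with hβ
      set z := x - ((n:ℝ) + 1) * ℓ + ξ n with hz
      have hconv : conv S.q (fun y => φ (y - n * ℓ + ξ n) + β) x =
          TWaux2.psi S φ (x + (ξ n - n * ℓ)) + β := by
        rw [show (fun y => φ (y - n * ℓ + ξ n) + β) =
            (fun y => φ (y + (ξ n - n * ℓ)) + β) from
          funext fun y => by rw [show y - n * ℓ + ξ n = y + (ξ n - n * ℓ) by ring]]
        exact TWaux2.conv_shift_add h x _ β
      have hx : x + (ξ n - (n:ℝ) * ℓ) = z + ℓ := by rw [hz]; ring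
      rw [hconv, hx]
      have hineq := (hmain β (hβn_pos n) (hβn_le n) z).1
      have e1 : x - ((n:ℝ) + 1) * ℓ + ξ (n+1) = z + σ * β := by
        rw [hξsucc n, hz, hβ, hrpow n]; ring
      have e2 : β₀ * Real.exp (-δ₀ * ((n:ℝ) + 1)) = Real.exp (-δ₀) * β := by
        rw [hβ, show -δ₀ * ((n:ℝ) + 1) = (-δ₀ * n) + (-δ₀) by ring, Real.exp_add]
        ring
      rw [e1, e2]
      exact hineq
  · -- sub-solutions
    intro ξ₀
    set ξ : ℕ → ℝ := fun n => ξ₀ - σ * β₀ * ∑ i ∈ Finset.range n, r^i with hξ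
    have hξsucc : ∀ n : ℕ, ξ (n+1) = ξ n - σ * β₀ * r^n := by
      intro n
      rw [hξ]
      simp only [Finset.sum_range_succ]
      ring
    refine ⟨ξ, by simp [hξ], ?_, ⟨|ξ₀| + σ * β₀ * (1 - r)⁻¹, ?_⟩, ?_⟩
    · apply antitone_nat_of_succ_le
      intro n
      rw [hξsucc n]
      have : 0 ≤ σ * β₀ * r^n := by positivity
      linarith
    · intro n
      have hsum0 : 0 ≤ ∑ i ∈ Finset.range n, r^i :=
        Finset.sum_nonneg fun i _ => pow_nonneg hr0.le i
      have hsum1 : ∑ i ∈ Finset.range n, r^i ≤ (1 - r)⁻¹ := TWaux2.gsum_le hr0.le hr1 n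
      rw [hξ]
      calc |ξ₀ - σ * β₀ * ∑ i ∈ Finset.range n, r^i|
          ≤ |ξ₀| + |σ * β₀ * ∑ i ∈ Finset.range n, r^i| := abs_sub _ _
        _ = |ξ₀| + σ * β₀ * ∑ i ∈ Finset.range n, r^i := by
            rw [abs_of_nonneg (show (0:ℝ) ≤ σ * β₀ * ∑ i ∈ Finset.range n, r^i by positivity)]
        _ ≤ |ξ₀| + σ * β₀ * (1 - r)⁻¹ := by
            have := mul_le_mul_of_nonneg_left hsum1 (show (0:ℝ) ≤ σ * β₀ by positivity)
            linarith
    · intro n x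
      push_cast
      set β := β₀ * Real.exp (-δ₀ * n) with hβ
      set z := x - ((n:ℝ) + 1) * ℓ + ξ n with hz
      have hconv : conv S.q (fun y => φ (y - n * ℓ + ξ n) - β) x =
          TWaux2.psi S φ (x + (ξ n - n * ℓ)) + (-β) := by
        rw [show (fun y => φ (y - n * ℓ + ξ n) - β) =
            (fun y => φ (y + (ξ n - n * ℓ)) + (-β)) from
          funext fun y => by
            rw [show y - n * ℓ + ξ n = y + (ξ n - n * ℓ) by ring]; ring]
        exact TWaux2.conv_shift_add h x _ (-β)
      have hx : x + (ξ n - (n:ℝ) * ℓ) = z + ℓ := by rw [hz]; ring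
      rw [hconv, hx]
      have hineq := (hmain β (hβn_pos n) (hβn_le n) z).2
      have e1 : x - ((n:ℝ) + 1) * ℓ + ξ (n+1) = z - σ * β := by
        rw [hξsucc n, hz, hβ, hrpow n]; ring
      have e2 : β₀ * Real.exp (-δ₀ * ((n:ℝ) + 1)) = Real.exp (-δ₀) * β := by
        rw [hβ, show -δ₀ * ((n:ℝ) + 1) = (-δ₀ * n) + (-δ₀) by ring, Real.exp_add]
        ring
      rw [e1, e2]
      rw [show TWaux2.psi S φ (z + ℓ) + (-β) = TWaux2.psi S φ (z + ℓ) - β by ring]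
      exact hineq
end

section
/- Let φ be a traveling wave with speed ℓ. Suppose (ζ_n)_{n∈ℤ} is a two-sided sequence of functions ℝ → ℝ satisfying ζ_{n+1}(x) = g((q_ℓ * ζ_n)(x)) for all n ∈ ℤ and x ∈ ℝ, and suppose there exist real numbers ξ̄_− ≤ ξ̄_+ with φ(x + ξ̄_−) ≤ ζ_n(x) ≤ φ(x + ξ̄_+) for all n ∈ ℤ and x ∈ ℝ. If, for some ξ ∈ ℝ, ζ_n(x) ≤ φ(x + ξ) for all n ∈ ℤ and x ∈ ℝ, and there exist n_0 ∈ ℤ and y_0 ∈ ℝ with ζ_{n_0}(y_0) = φ(y_0 + ξ), then ζ_n(x) = φ(x + ξ) for all n ∈ ℤ and x ∈ ℝ. -/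
open MeasureTheory Filter Topology

section
open Set
namespace SMPaux

lemma gP (S : BistableSetting) {z : ℝ} (h0 : 0 ≤ z) (h1 : z ≤ 1) : S.g z = S.P.eval z := by
  unfold BistableSetting.g
  rw [if_neg (not_lt.mpr h0), if_pos h1]

lemma g0 (S : BistableSetting) : S.g 0 = 0 := by
  rw [gP S le_rfl zero_le_one, S.hP0]

lemma g1 (S : BistableSetting) : S.g 1 = 1 := by
  rw [gP S zero_le_one le_rfl, S.hP1]

lemma Pmono (S : BistableSetting) : StrictMonoOn (fun x => S.P.eval x) (Icc (0:ℝ) 1) := by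
  apply strictMonoOn_of_deriv_pos (convex_Icc 0 1) S.P.continuous.continuousOn
  intro x hx
  rw [interior_Icc] at hx
  rw [Polynomial.deriv]
  exact S.hP_mono x hx

lemma exists_lt_low (S : BistableSetting) : ∃ x₀, 0 < x₀ ∧ x₀ < S.θ ∧ S.P.eval x₀ < x₀ := by
  have hd := S.P.hasDerivAt (0:ℝ)
  have hslope : Tendsto (slope (fun x => S.P.eval x) 0) (𝓝[>] 0)
      (𝓝 ((Polynomial.derivative S.P).eval 0)) :=
    (hasDerivAt_iff_tendsto_slope.mp hd).mono_left
      (nhdsWithin_mono _ (fun x hx => ne_of_gt hx))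
  have h1 : ∀ᶠ x in 𝓝[>] (0:ℝ), slope (fun x => S.P.eval x) 0 x < 1 :=
    hslope.eventually_lt_const S.hf'0
  have h2 : Ioo (0:ℝ) S.θ ∈ 𝓝[>] (0:ℝ) :=
    Ioo_mem_nhdsGT_of_mem ⟨le_rfl, S.hθ_mem.1⟩
  obtain ⟨x, hx1, hx2⟩ := (h1.and h2).exists
  refine ⟨x, hx2.1, hx2.2, ?_⟩
  rw [slope_def_field] at hx1
  simp only [S.hP0, sub_zero] at hx1
  have hx' : S.P.eval x < x := by
    have := (div_lt_one hx2.1).mp hx1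
    exact this
  exact hx'

lemma exists_gt_high (S : BistableSetting) : ∃ x₁, S.θ < x₁ ∧ x₁ < 1 ∧ x₁ < S.P.eval x₁ := by
  have hd := S.P.hasDerivAt (1:ℝ)
  have hslope : Tendsto (slope (fun x => S.P.eval x) 1) (𝓝[<] 1)
      (𝓝 ((Polynomial.derivative S.P).eval 1)) :=
    (hasDerivAt_iff_tendsto_slope.mp hd).mono_left
      (nhdsWithin_mono _ (fun x hx => ne_of_lt hx))
  have h1 : ∀ᶠ x in 𝓝[<] (1:ℝ), slope (fun x => S.P.eval x) 1 x < 1 :=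
    hslope.eventually_lt_const S.hf'1
  have h2 : Ioo S.θ (1:ℝ) ∈ 𝓝[<] (1:ℝ) :=
    Ioo_mem_nhdsLT_of_mem ⟨S.hθ_mem.2, le_rfl⟩
  obtain ⟨x, hx1, hx2⟩ := (h1.and h2).exists
  refine ⟨x, hx2.1, hx2.2, ?_⟩
  rw [slope_def_field] at hx1
  simp only [S.hP1] at hx1
  -- (P x - 1)/(x - 1) < 1, x - 1 < 0 ⇒ P x - 1 > x - 1
  have hx1' : S.P.eval x - 1 > x - 1 := by
    have hneg : x - 1 < 0 := by linarith [hx2.2]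
    have := (div_lt_one_of_neg hneg).mp hx1
    linarith [this]
  linarith

lemma PltLow (S : BistableSetting) : ∀ z, 0 < z → z < S.θ → S.P.eval z < z := by
  intro z hz0 hzθ
  by_contra hcon
  push_neg at hcon
  rcases eq_or_lt_of_le hcon with heq | hlt
  · have := S.hθ_unique z ⟨hz0, lt_trans hzθ S.hθ_mem.2⟩ heq.symm
    rw [this] at hzθ; exact lt_irrefl _ hzθ
  · obtain ⟨x₀, hx0, hx0θ, hPx0⟩ := exists_lt_low S
    set f : ℝ → ℝ := fun x => S.P.eval x - x with hf
    have hfc : Continuous f := S.P.continuous.sub continuous_id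
    have hfz : 0 < f z := by simp [hf]; linarith
    have hfx0 : f x₀ < 0 := by simp [hf]; linarith
    rcases lt_trichotomy x₀ z with hlt2 | heq2 | hgt2
    · obtain ⟨w, hw, hfw⟩ :=
        intermediate_value_Ioo (le_of_lt hlt2) hfc.continuousOn (a := x₀) (b := z)
          (show (0:ℝ) ∈ Ioo (f x₀) (f z) from ⟨hfx0, hfz⟩)
      have hPw : S.P.eval w = w := by have : f w = 0 := hfw; simp [hf] at this; linarith
      have hwθ := S.hθ_unique w ⟨lt_trans hx0 hw.1, lt_trans hw.2 (lt_trans hzθ S.hθ_mem.2)⟩ hPw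
      rw [hwθ] at hw
      exact absurd (lt_trans hw.2 hzθ) (lt_irrefl _)
    · rw [heq2] at hPx0; linarith
    · obtain ⟨w, hw, hfw⟩ :=
        intermediate_value_Ioo' (le_of_lt hgt2) hfc.continuousOn (a := z) (b := x₀)
          (show (0:ℝ) ∈ Ioo (f x₀) (f z) from ⟨hfx0, hfz⟩)
      have hPw : S.P.eval w = w := by have : f w = 0 := hfw; simp [hf] at this; linarith
      have hwθ := S.hθ_unique w ⟨lt_trans hz0 hw.1, lt_trans hw.2 (lt_trans hx0θ S.hθ_mem.2)⟩ hPw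
      rw [hwθ] at hw
      exact absurd (lt_trans hw.2 hx0θ) (lt_irrefl _)

lemma PgtHigh (S : BistableSetting) : ∀ z, S.θ < z → z < 1 → z < S.P.eval z := by
  intro z hzθ hz1
  by_contra hcon
  push_neg at hcon
  rcases eq_or_lt_of_le hcon with heq | hlt
  · have := S.hθ_unique z ⟨lt_trans S.hθ_mem.1 hzθ, hz1⟩ heq
    rw [this] at hzθ; exact lt_irrefl _ hzθ
  · obtain ⟨x₁, hθx1, hx11, hPx1⟩ := exists_gt_high S
    set f : ℝ → ℝ := fun x => S.P.eval x - x with hf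
    have hfc : Continuous f := S.P.continuous.sub continuous_id
    have hfz : f z < 0 := by simp [hf]; linarith
    have hfx1 : 0 < f x₁ := by simp [hf]; linarith
    rcases lt_trichotomy z x₁ with hlt2 | heq2 | hgt2
    · obtain ⟨w, hw, hfw⟩ :=
        intermediate_value_Ioo (le_of_lt hlt2) hfc.continuousOn (a := z) (b := x₁)
          (show (0:ℝ) ∈ Ioo (f z) (f x₁) from ⟨hfz, hfx1⟩)
      have hPw : S.P.eval w = w := by have : f w = 0 := hfw; simp [hf] at this; linarith
      have hwθ := S.hθ_unique w ⟨lt_trans S.hθ_mem.1 (lt_trans hzθ hw.1), lt_trans hw.2 hx11⟩ hPw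
      rw [hwθ] at hw
      exact absurd (lt_trans hzθ hw.1) (lt_irrefl _)
    · rw [heq2] at hlt; linarith
    · obtain ⟨w, hw, hfw⟩ :=
        intermediate_value_Ioo' (le_of_lt hgt2) hfc.continuousOn (a := x₁) (b := z)
          (show (0:ℝ) ∈ Ioo (f z) (f x₁) from ⟨hfz, hfx1⟩)
      have hPw : S.P.eval w = w := by have : f w = 0 := hfw; simp [hf] at this; linarith
      have hwθ := S.hθ_unique w ⟨lt_trans S.hθ_mem.1 (lt_trans hθx1 hw.1), lt_trans hw.2 hz1⟩ hPw
      rw [hwθ] at hw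
      exact absurd (lt_trans hθx1 hw.1) (lt_irrefl _)

end SMPaux
namespace SMPaux

lemma Pcontr (S : BistableSetting) : ∃ η κ : ℝ, 0 < η ∧ η ≤ 1/2 ∧ 0 ≤ κ ∧ κ < 1 ∧
    (∀ a b, 0 ≤ a → a ≤ b → b ≤ η → S.P.eval b - S.P.eval a ≤ κ * (b - a)) ∧
    (∀ a b, 1 - η ≤ a → a ≤ b → b ≤ 1 → S.P.eval b - S.P.eval a ≤ κ * (b - a)) := by
  set d0 := (Polynomial.derivative S.P).eval 0 with hd0def
  set d1 := (Polynomial.derivative S.P).eval 1 with hd1def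
  set m := max (max d0 d1) 0 with hmdef
  set κ := (m + 1) / 2 with hκdef
  have hm1 : m < 1 := by
    apply max_lt (max_lt S.hf'0 S.hf'1) one_pos
  have hm0 : 0 ≤ m := le_max_right _ _
  have hκ0 : 0 ≤ κ := by rw [hκdef]; linarith
  have hκ1 : κ < 1 := by rw [hκdef]; linarith
  have hmκ : m < κ := by rw [hκdef]; linarith
  have hd0κ : d0 < κ := lt_of_le_of_lt (le_trans (le_max_left _ _) (le_max_left _ _)) hmκ
  have hd1κ : d1 < κ := lt_of_le_of_lt (le_trans (le_max_right _ _) (le_max_left _ _)) hmκ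
  have hc : Continuous fun z => (Polynomial.derivative S.P).eval z :=
    (Polynomial.derivative S.P).continuous
  have h0ev : ∀ᶠ z in 𝓝 (0:ℝ), (Polynomial.derivative S.P).eval z < κ :=
    (hc.continuousAt).eventually_lt_const hd0κ
  have h1ev : ∀ᶠ z in 𝓝 (1:ℝ), (Polynomial.derivative S.P).eval z < κ :=
    (hc.continuousAt).eventually_lt_const hd1κ
  rw [Metric.eventually_nhds_iff] at h0ev h1ev
  obtain ⟨η0, hη0, hball0⟩ := h0ev
  obtain ⟨η1, hη1, hball1⟩ := h1ev
  refine ⟨min (min (η0/2) (η1/2)) (1/2), κ, ?_, ?_, hκ0, hκ1, ?_, ?_⟩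
  · positivity
  · exact min_le_right _ _
  · intro a b ha hab hb
    rcases eq_or_lt_of_le hab with heq | hlt
    · rw [heq]; simp
    · obtain ⟨c, hc2, hcs⟩ := exists_hasDerivAt_eq_slope (fun x => S.P.eval x)
        (fun x => (Polynomial.derivative S.P).eval x) hlt
        S.P.continuous.continuousOn (fun x _ => S.P.hasDerivAt x)
      have hcκ : (Polynomial.derivative S.P).eval c < κ := by
        apply hball0
        rw [Real.dist_eq, sub_zero]
        have h1 : 0 < c := lt_of_le_of_lt ha hc2.1
        have h2 : c < η0 := by
          have := lt_of_lt_of_le hc2.2 hb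
          have h3 : min (min (η0/2) (η1/2)) (1/2) ≤ η0/2 :=
            le_trans (min_le_left _ _) (min_le_left _ _)
          linarith
        rw [abs_of_pos h1]; linarith
      rw [hcs] at hcκ
      have hba : 0 < b - a := by linarith
      calc S.P.eval b - S.P.eval a = (S.P.eval b - S.P.eval a) / (b - a) * (b - a) := by
            field_simp
      _ ≤ κ * (b - a) := by
            apply mul_le_mul_of_nonneg_right (le_of_lt hcκ) (le_of_lt hba)
  · intro a b ha hab hb
    rcases eq_or_lt_of_le hab with heq | hlt
    · rw [heq]; simp
    · obtain ⟨c, hc2, hcs⟩ := exists_hasDerivAt_eq_slope (fun x => S.P.eval x)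
        (fun x => (Polynomial.derivative S.P).eval x) hlt
        S.P.continuous.continuousOn (fun x _ => S.P.hasDerivAt x)
      have hcκ : (Polynomial.derivative S.P).eval c < κ := by
        apply hball1
        rw [Real.dist_eq]
        have h1 : c < 1 := lt_of_lt_of_le hc2.2 hb
        have h2 : 1 - η1 < c := by
          have h3 : min (min (η0/2) (η1/2)) (1/2) ≤ η1/2 :=
            le_trans (min_le_left _ _) (min_le_right _ _)
          have := lt_of_le_of_lt ha hc2.1
          linarith
        rw [abs_of_nonpos (by linarith)]; linarith
      rw [hcs] at hcκ
      have hba : 0 < b - a := by linarith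
      calc S.P.eval b - S.P.eval a = (S.P.eval b - S.P.eval a) / (b - a) * (b - a) := by
            field_simp
      _ ≤ κ * (b - a) := by
            apply mul_le_mul_of_nonneg_right (le_of_lt hcκ) (le_of_lt hba)

end SMPaux
namespace SMPaux

variable (S : BistableSetting) (ℓ : ℝ)

lemma q'_cont : Continuous (qshift S.q ℓ) :=
  S.hq_diff.continuous.comp (continuous_id.add continuous_const)

lemma q'_supp : HasCompactSupport (qshift S.q ℓ) :=
  S.hq_supp.comp_homeomorph (Homeomorph.addRight ℓ)

lemma q'_nonneg : ∀ y, 0 ≤ qshift S.q ℓ y := fun y => S.hq_nonneg _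

lemma q'_integrable : Integrable (qshift S.q ℓ) :=
  (q'_cont S ℓ).integrable_of_hasCompactSupport (q'_supp S ℓ)

lemma q'_int_one : ∫ y, qshift S.q ℓ y = 1 := by
  unfold qshift
  rw [integral_add_right_eq_self]
  exact S.hq_int

lemma q'_Dbound : ∃ D : ℝ, 0 < D ∧ ∀ y : ℝ, D ≤ |y| → qshift S.q ℓ y = 0 := by
  obtain ⟨K, hK⟩ := (q'_supp S ℓ).isBounded.subset_closedBall 0
  refine ⟨|K| + 1, by positivity, fun y hy => ?_⟩
  by_contra hne
  have : y ∈ tsupport (qshift S.q ℓ) := subset_tsupport _ hne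
  have := hK this
  rw [Metric.mem_closedBall, Real.dist_eq, sub_zero] at this
  have : |y| ≤ |K| := le_trans this (le_abs_self K)
  linarith

lemma slice_integrable (u : ℝ → ℝ) (hu : Continuous u) (x : ℝ) :
    Integrable (fun y => qshift S.q ℓ y * u (x - y)) := by
  apply Continuous.integrable_of_hasCompactSupport
  · exact (q'_cont S ℓ).mul (hu.comp (continuous_const.sub continuous_id))
  · exact (q'_supp S ℓ).mul_right

variable (φ : ℝ → ℝ)

lemma phi_nonneg (h : IsTravelingWave S ℓ φ) : ∀ x, 0 ≤ φ x := by
  intro x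
  apply le_of_tendsto h.limit_bot
  exact eventually_atBot.mpr ⟨x, fun t ht => h.mono ht⟩

lemma phi_le_one (h : IsTravelingWave S ℓ φ) : ∀ x, φ x ≤ 1 := by
  intro x
  apply ge_of_tendsto h.limit_top
  exact eventually_atTop.mpr ⟨x, fun t ht => h.mono ht⟩

lemma U_sign (h : IsTravelingWave S ℓ φ) :
    (∃ u, u < 0 ∧ 0 < qshift S.q ℓ u) ∧ (∃ u, 0 < u ∧ 0 < qshift S.q ℓ u) := by
  constructor
  · by_contra hno
    push_neg at hno
    have hzero : ∀ u, u < 0 → qshift S.q ℓ u = 0 := fun u hu =>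
      le_antisymm (hno u hu) (q'_nonneg S ℓ u)
    have hkey : ∀ x, conv (qshift S.q ℓ) φ x ≤ φ x := by
      intro x
      have : ∫ y, qshift S.q ℓ y * φ (x - y) ≤ ∫ y, qshift S.q ℓ y * φ x := by
        apply integral_mono (slice_integrable S ℓ φ h.smooth.continuous x)
          ((q'_integrable S ℓ).mul_const _)
        intro y
        rcases lt_or_ge y 0 with hy | hy
        · simp only; rw [hzero y hy]; simp
        · exact mul_le_mul_of_nonneg_left (h.mono (by linarith)) (q'_nonneg S ℓ y)
      calc conv (qshift S.q ℓ) φ x = ∫ y, qshift S.q ℓ y * φ (x - y) := rfl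
      _ ≤ ∫ y, qshift S.q ℓ y * φ x := this
      _ = (∫ y, qshift S.q ℓ y) * φ x := by rw [integral_mul_const]
      _ = φ x := by rw [q'_int_one]; ring
    have hsub : {x | φ x < S.θ} ⊆ {x | φ x = 0} := by
      intro x hx
      simp only [mem_setOf_eq] at hx ⊢
      set z := conv (qshift S.q ℓ) φ x with hz
      have hz0 : 0 ≤ z := integral_nonneg fun y =>
        mul_nonneg (q'_nonneg S ℓ y) (phi_nonneg S ℓ φ h _)
      have hzφ : z ≤ φ x := hkey x
      have hgz : φ x = S.g z := h.wave_eq x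
      rcases eq_or_lt_of_le hz0 with heq | hlt
      · rw [hgz, ← heq, g0]
      · exfalso
        have hzθ : z < S.θ := lt_of_le_of_lt hzφ hx
        have : S.g z = S.P.eval z := gP S (le_of_lt hlt)
          (le_trans (le_trans hzφ (phi_le_one S ℓ φ h x)) le_rfl)
        rw [this] at hgz
        have := PltLow S z hlt hzθ
        linarith
    have hsup : {x | φ x = 0} ⊆ {x | φ x < S.θ} := by
      intro x hx
      simp only [mem_setOf_eq] at hx ⊢
      rw [hx]; exact S.hθ_mem.1
    have hseteq : {x | φ x < S.θ} = {x | φ x = 0} := Subset.antisymm hsub hsup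
    have hopen : IsOpen {x | φ x < S.θ} := isOpen_lt h.smooth.continuous continuous_const
    have hclosed : IsClosed {x | φ x = 0} := isClosed_eq h.smooth.continuous continuous_const
    have hne : {x | φ x < S.θ}.Nonempty := by
      obtain ⟨x, hx⟩ := (h.limit_bot.eventually_lt_const S.hθ_mem.1).exists
      exact ⟨x, hx⟩
    have huniv : {x | φ x < S.θ} = univ := by
      apply IsClopen.eq_univ _ hne
      exact ⟨hseteq ▸ hclosed, hopen⟩
    have hzeroall : ∀ x, φ x = 0 := by
      intro x
      have : x ∈ {x | φ x < S.θ} := huniv ▸ mem_univ x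
      exact hsub this
    have : Tendsto φ atTop (𝓝 0) := by
      rw [show φ = fun _ => 0 from funext hzeroall]
      exact tendsto_const_nhds
    have := tendsto_nhds_unique this h.limit_top
    norm_num at this
  · by_contra hno
    push_neg at hno
    have hzero : ∀ u, 0 < u → qshift S.q ℓ u = 0 := fun u hu =>
      le_antisymm (hno u hu) (q'_nonneg S ℓ u)
    have hkey : ∀ x, φ x ≤ conv (qshift S.q ℓ) φ x := by
      intro x
      have : ∫ y, qshift S.q ℓ y * φ x ≤ ∫ y, qshift S.q ℓ y * φ (x - y) := by
        apply integral_mono ((q'_integrable S ℓ).mul_const _)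
          (slice_integrable S ℓ φ h.smooth.continuous x)
        intro y
        rcases lt_or_ge 0 y with hy | hy
        · simp only; rw [hzero y hy]; simp
        · exact mul_le_mul_of_nonneg_left (h.mono (by linarith)) (q'_nonneg S ℓ y)
      calc φ x = (∫ y, qshift S.q ℓ y) * φ x := by rw [q'_int_one]; ring
      _ = ∫ y, qshift S.q ℓ y * φ x := by rw [integral_mul_const]
      _ ≤ ∫ y, qshift S.q ℓ y * φ (x - y) := this
      _ = conv (qshift S.q ℓ) φ x := rfl
    have hsub : {x | S.θ < φ x} ⊆ {x | φ x = 1} := by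
      intro x hx
      simp only [mem_setOf_eq] at hx ⊢
      set z := conv (qshift S.q ℓ) φ x with hz
      have hz1 : z ≤ 1 := by
        have : ∫ y, qshift S.q ℓ y * φ (x - y) ≤ ∫ y, qshift S.q ℓ y * 1 := by
          apply integral_mono (slice_integrable S ℓ φ h.smooth.continuous x)
            ((q'_integrable S ℓ).mul_const _)
          intro y
          exact mul_le_mul_of_nonneg_left (phi_le_one S ℓ φ h _) (q'_nonneg S ℓ y)
        calc z = ∫ y, qshift S.q ℓ y * φ (x - y) := rfl
        _ ≤ ∫ y, qshift S.q ℓ y * 1 := this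
        _ = 1 := by rw [integral_mul_const, q'_int_one]; ring
      have hzφ : φ x ≤ z := hkey x
      have hgz : φ x = S.g z := h.wave_eq x
      rcases eq_or_lt_of_le hz1 with heq | hlt
      · rw [hgz, heq, g1]
      · exfalso
        have hzθ : S.θ < z := lt_of_lt_of_le hx hzφ
        have : S.g z = S.P.eval z := gP S
          (le_trans (le_of_lt (lt_trans S.hθ_mem.1 hzθ)) le_rfl) (le_of_lt hlt)
        rw [this] at hgz
        have := PgtHigh S z hzθ hlt
        linarith
    have hsup : {x | φ x = 1} ⊆ {x | S.θ < φ x} := by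
      intro x hx
      simp only [mem_setOf_eq] at hx ⊢
      rw [hx]; exact S.hθ_mem.2
    have hseteq : {x | S.θ < φ x} = {x | φ x = 1} := Subset.antisymm hsub hsup
    have hopen : IsOpen {x | S.θ < φ x} := isOpen_lt continuous_const h.smooth.continuous
    have hclosed : IsClosed {x | φ x = 1} := isClosed_eq h.smooth.continuous continuous_const
    have hne : {x | S.θ < φ x}.Nonempty := by
      obtain ⟨x, hx⟩ := (h.limit_top.eventually_const_lt S.hθ_mem.2).exists
      exact ⟨x, hx⟩
    have huniv : {x | S.θ < φ x} = univ := by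
      apply IsClopen.eq_univ _ hne
      exact ⟨hseteq ▸ hclosed, hopen⟩
    have honeall : ∀ x, φ x = 1 := by
      intro x
      have : x ∈ {x | S.θ < φ x} := huniv ▸ mem_univ x
      exact hsub this
    have : Tendsto φ atBot (𝓝 1) := by
      rw [show φ = fun _ => 1 from funext honeall]
      exact tendsto_const_nhds
    have := tendsto_nhds_unique this h.limit_bot
    norm_num at this

end SMPaux
end

set_option maxHeartbeats 4000000 in
/-- Strong maximum principle for eternal solutions of the recursion in the wave frame:
a two-sided solution trapped between shifts of the traveling wave, lying below `φ(· + ξ)`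
and touching it at one point, is identically equal to `φ(· + ξ)`. -/
theorem eternal_solution_touching_wave (S : BistableSetting) (ℓ : ℝ) (φ : ℝ → ℝ)
    (h : IsTravelingWave S ℓ φ) (ζ : ℤ → ℝ → ℝ)
    (hrec : ∀ (n : ℤ) (x : ℝ), ζ (n + 1) x = S.g (conv (qshift S.q ℓ) (ζ n) x))
    (ξm ξp : ℝ) (hξ : ξm ≤ ξp)
    (hbound : ∀ (n : ℤ) (x : ℝ), φ (x + ξm) ≤ ζ n x ∧ ζ n x ≤ φ (x + ξp))
    (ξ : ℝ) (hup : ∀ (n : ℤ) (x : ℝ), ζ n x ≤ φ (x + ξ))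
    (n₀ : ℤ) (y₀ : ℝ) (htouch : ζ n₀ y₀ = φ (y₀ + ξ)) :
    ∀ (n : ℤ) (x : ℝ), ζ n x = φ (x + ξ) := by
  classical
  open SMPaux in
  -- basic facts
  have hcontφ : Continuous φ := h.smooth.continuous
  have hφ0 : ∀ x, 0 ≤ φ x := SMPaux.phi_nonneg S ℓ φ h
  have hφ1 : ∀ x, φ x ≤ 1 := SMPaux.phi_le_one S ℓ φ h
  have hq'c : Continuous (qshift S.q ℓ) := SMPaux.q'_cont S ℓ
  have hq'nn : ∀ y, 0 ≤ qshift S.q ℓ y := SMPaux.q'_nonneg S ℓ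
  have hq'int : Integrable (qshift S.q ℓ) := SMPaux.q'_integrable S ℓ
  have hq'one : ∫ y, qshift S.q ℓ y = 1 := SMPaux.q'_int_one S ℓ
  obtain ⟨D, hD, hDsupp⟩ := SMPaux.q'_Dbound S ℓ
  obtain ⟨⟨um, humneg, humq⟩, ⟨up, huppos, hupq⟩⟩ := SMPaux.U_sign S ℓ φ h
  obtain ⟨η, κ, hη0, hη12, hκ0, hκ1, hLipLow, hLipHigh⟩ := SMPaux.Pcontr S
  -- δ such that balls around um, up are in the positivity set
  obtain ⟨δ, hδ0, hδball⟩ : ∃ δ : ℝ, 0 < δ ∧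
      (∀ y, |y - um| < δ → 0 < qshift S.q ℓ y) ∧
      (∀ y, |y - up| < δ → 0 < qshift S.q ℓ y) := by
    have hop : IsOpen {y : ℝ | 0 < qshift S.q ℓ y} := isOpen_lt continuous_const hq'c
    obtain ⟨δ1, hδ1, hb1⟩ := Metric.isOpen_iff.mp hop um humq
    obtain ⟨δ2, hδ2, hb2⟩ := Metric.isOpen_iff.mp hop up hupq
    refine ⟨min δ1 δ2, lt_min hδ1 hδ2, fun y hy => ?_, fun y hy => ?_⟩
    · exact hb1 (by rw [Metric.mem_ball, Real.dist_eq]; exact lt_of_lt_of_le hy (min_le_left _ _))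
    · exact hb2 (by rw [Metric.mem_ball, Real.dist_eq]; exact lt_of_lt_of_le hy (min_le_right _ _))
  obtain ⟨hδm, hδp⟩ := hδball
  have hζ0 : ∀ n x, 0 ≤ ζ n x := fun n x => le_trans (hφ0 _) (hbound n x).1
  -- ψ slice integrability
  have hψint : ∀ x : ℝ, Integrable (fun y => qshift S.q ℓ y * φ ((x - y) + ξ)) := fun x =>
    SMPaux.slice_integrable S ℓ (fun t => φ (t + ξ))
      (hcontφ.comp (continuous_id.add continuous_const)) x
  -- the wave identity in the ψ frame
  have hψwave : ∀ x, φ (x + ξ) = S.g (∫ y, qshift S.q ℓ y * φ ((x - y) + ξ)) := by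
    intro x
    have := h.wave_eq (x + ξ)
    rw [this]
    congr 1
    unfold conv
    congr 1
    funext y
    congr 2
    ring
  have hQ0 : ∀ x, 0 ≤ ∫ y, qshift S.q ℓ y * φ ((x - y) + ξ) := fun x =>
    integral_nonneg fun y => mul_nonneg (hq'nn y) (hφ0 _)
  have hQ1 : ∀ x, (∫ y, qshift S.q ℓ y * φ ((x - y) + ξ)) ≤ 1 := by
    intro x
    have hmono : (∫ y, qshift S.q ℓ y * φ ((x - y) + ξ)) ≤ ∫ y, qshift S.q ℓ y * 1 := by
      apply integral_mono (hψint x) (hq'int.mul_const _)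
      intro y
      exact mul_le_mul_of_nonneg_left (hφ1 _) (hq'nn y)
    calc (∫ y, qshift S.q ℓ y * φ ((x - y) + ξ)) ≤ ∫ y, qshift S.q ℓ y * 1 := hmono
    _ = 1 := by rw [integral_mul_const, hq'one]; ring
  -- injectivity of g on [0,1]
  have hinj : ∀ a b : ℝ, 0 ≤ a → a ≤ 1 → 0 ≤ b → b ≤ 1 → S.g a = S.g b → a = b := by
    intro a b ha0 ha1 hb0 hb1 hg
    rw [SMPaux.gP S ha0 ha1, SMPaux.gP S hb0 hb1] at hg
    exact (SMPaux.Pmono S).injOn ⟨ha0, ha1⟩ ⟨hb0, hb1⟩ hg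
  -- null-set transfer
  have htrans : ∀ (z : ℝ) (p : ℝ → Prop), (∀ᵐ y, p y) → (∀ᵐ w, p (z - w)) := by
    intro z p hp
    have hmp : MeasurePreserving (fun x : ℝ => z - x) volume volume := by
      have h1 : (fun x : ℝ => z - x) = (fun x : ℝ => z + x) ∘ (fun x : ℝ => -x) := by
        funext x; simp [sub_eq_add_neg]
      rw [h1]
      exact (measurePreserving_add_left volume z).comp (Measure.measurePreserving_neg volume)
    rw [ae_iff] at hp ⊢
    exact hmp.quasiMeasurePreserving.preimage_null hp
  -- junk
  have hjunk : ∀ (r : ℤ) (x : ℝ), ¬ Integrable (fun y => qshift S.q ℓ y * ζ r (x - y)) →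
      ζ (r + 1) x = 0 ∧ φ (x + ξm) = 0 := by
    intro r x hni
    have h1 : ζ (r + 1) x = S.g (conv (qshift S.q ℓ) (ζ r) x) := hrec r x
    have h2 : conv (qshift S.q ℓ) (ζ r) x = 0 := integral_undef hni
    rw [h2, SMPaux.g0] at h1
    refine ⟨h1, le_antisymm (by rw [← h1]; exact (hbound (r+1) x).1) (hφ0 _)⟩
  -- backward point propagation
  have hback : ∀ (r : ℤ) (z : ℝ), ζ r z = φ (z + ξ) →
      ∀ᵐ y, qshift S.q ℓ y ≠ 0 → ζ (r - 1) (z - y) = φ ((z - y) + ξ) := by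
    intro r z hz
    have hrz : ζ r z = S.g (∫ y, qshift S.q ℓ y * ζ (r - 1) (z - y)) := by
      have := hrec (r - 1) z
      rw [sub_add_cancel] at this
      exact this
    by_cases hint : Integrable (fun y => qshift S.q ℓ y * ζ (r - 1) (z - y))
    · -- honest case
      have hA0 : 0 ≤ ∫ y, qshift S.q ℓ y * ζ (r - 1) (z - y) :=
        integral_nonneg fun y => mul_nonneg (hq'nn y) (hζ0 _ _)
      have hAle : (∫ y, qshift S.q ℓ y * ζ (r - 1) (z - y)) ≤
          ∫ y, qshift S.q ℓ y * φ ((z - y) + ξ) := by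
        apply integral_mono hint (hψint z)
        intro y
        exact mul_le_mul_of_nonneg_left (hup _ _) (hq'nn y)
      have hgeq : S.g (∫ y, qshift S.q ℓ y * ζ (r - 1) (z - y)) =
          S.g (∫ y, qshift S.q ℓ y * φ ((z - y) + ξ)) := by
        rw [← hrz, hz, hψwave z]
      have hAeq := hinj _ _ hA0 (le_trans hAle (hQ1 z)) (hQ0 z) (hQ1 z) hgeq
      have hzero : (∫ y, qshift S.q ℓ y * (φ ((z - y) + ξ) - ζ (r - 1) (z - y))) = 0 := by
        have : (fun y => qshift S.q ℓ y * (φ ((z - y) + ξ) - ζ (r - 1) (z - y)))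
            = fun y => qshift S.q ℓ y * φ ((z - y) + ξ) - qshift S.q ℓ y * ζ (r - 1) (z - y) := by
          funext y; ring
        rw [this, integral_sub (hψint z) hint, ← hAeq]
        ring
      have hnn : ∀ y, 0 ≤ qshift S.q ℓ y * (φ ((z - y) + ξ) - ζ (r - 1) (z - y)) := fun y =>
        mul_nonneg (hq'nn y) (sub_nonneg.mpr (hup _ _))
      have hintd : Integrable (fun y => qshift S.q ℓ y * (φ ((z - y) + ξ) - ζ (r - 1) (z - y))) := by
        have : (fun y => qshift S.q ℓ y * (φ ((z - y) + ξ) - ζ (r - 1) (z - y)))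
            = fun y => qshift S.q ℓ y * φ ((z - y) + ξ) - qshift S.q ℓ y * ζ (r - 1) (z - y) := by
          funext y; ring
        rw [this]
        exact (hψint z).sub hint
      have hae := (integral_eq_zero_iff_of_nonneg hnn hintd).mp hzero
      filter_upwards [hae] with y hy hqy
      have hqypos : 0 < qshift S.q ℓ y := lt_of_le_of_ne (hq'nn y) (Ne.symm hqy)
      have : φ ((z - y) + ξ) - ζ (r - 1) (z - y) = 0 := by
        by_contra hne
        have : qshift S.q ℓ y * (φ ((z - y) + ξ) - ζ (r - 1) (z - y)) ≠ 0 :=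
          mul_ne_zero (ne_of_gt hqypos) hne
        exact this hy
      linarith [this]
    · -- junk case
      obtain ⟨hz0', hφm0⟩ := hjunk (r - 1) z hint
      rw [sub_add_cancel] at hz0'
      have hψz : φ (z + ξ) = 0 := by rw [← hz]; exact hz0'
      have hQz : (∫ y, qshift S.q ℓ y * φ ((z - y) + ξ)) = 0 := by
        apply hinj _ _ (hQ0 z) (hQ1 z) le_rfl zero_le_one
        rw [← hψwave z, hψz, SMPaux.g0]
      have hnn : ∀ y, 0 ≤ qshift S.q ℓ y * φ ((z - y) + ξ) := fun y =>
        mul_nonneg (hq'nn y) (hφ0 _)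
      have hae := (integral_eq_zero_iff_of_nonneg hnn (hψint z)).mp hQz
      filter_upwards [hae] with y hy hqy
      have hqypos : 0 < qshift S.q ℓ y := lt_of_le_of_ne (hq'nn y) (Ne.symm hqy)
      have hψ0 : φ ((z - y) + ξ) = 0 := by
        by_contra hne
        exact (mul_ne_zero (ne_of_gt hqypos) hne) hy
      have h1 : ζ (r - 1) (z - y) ≤ 0 := by rw [← hψ0]; exact hup _ _
      have h2 : 0 ≤ ζ (r - 1) (z - y) := hζ0 _ _
      rw [hψ0]
      linarith
  -- ball step
  have hstep : ∀ (r : ℤ) (c ρ : ℝ), 0 < ρ → ∀ u : ℝ, (∀ y, |y - u| < δ → 0 < qshift S.q ℓ y) →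
      (∀ᵐ x, x ∈ Metric.ball c ρ → ζ r x = φ (x + ξ)) →
      (∀ᵐ x, x ∈ Metric.ball (c - u) (ρ + δ/4) → ζ (r - 1) x = φ (x + ξ)) := by
    intro r c ρ hρ u hU hAE
    -- for each suitable rational, pick a touching point in a small ball
    have hpick : ∀ s : ℚ, |(s : ℝ) - (c - u)| < ρ + δ/2 →
        ∃ z, z ∈ Metric.ball c ρ ∧ z ∈ Metric.ball ((s : ℝ) + u) (δ/2) ∧ ζ r z = φ (z + ξ) := by
      intro s hs
      set d := |(s : ℝ) + u - c| with hd
      have hdd : d = |(s : ℝ) - (c - u)| := by rw [hd]; congr 1; ring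
      have hdlt : d < ρ + δ/2 := by rw [hdd]; exact hs
      have hd0 : 0 ≤ d := abs_nonneg _
      set t := ρ / (ρ + δ/2) with ht
      have htpos : 0 < t := by apply div_pos hρ; linarith
      have ht1 : t < 1 := by
        rw [ht, div_lt_one (by linarith : (0:ℝ) < ρ + δ/2)]; linarith
      set p := c + t * (((s : ℝ) + u) - c) with hp
      have hp1 : p ∈ Metric.ball c ρ := by
        rw [Metric.mem_ball, Real.dist_eq]
        have : p - c = t * (((s : ℝ) + u) - c) := by rw [hp]; ring
        rw [this, abs_mul, abs_of_pos htpos]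
        calc t * |(s : ℝ) + u - c| ≤ t * d := le_refl _
        _ < t * (ρ + δ/2) := by
            rcases eq_or_lt_of_le hd0 with he | hl
            · rw [← he]; simp; positivity
            · exact (mul_lt_mul_iff_right₀ htpos).mpr hdlt
        _ = ρ := by rw [ht]; field_simp
      have hp2 : p ∈ Metric.ball ((s : ℝ) + u) (δ/2) := by
        rw [Metric.mem_ball, Real.dist_eq]
        have : p - ((s : ℝ) + u) = (1 - t) * (c - ((s : ℝ) + u)) := by rw [hp]; ring
        rw [this, abs_mul, abs_of_pos (by linarith : (0:ℝ) < 1 - t)]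
        have habs : |c - ((s : ℝ) + u)| = d := by rw [hd, abs_sub_comm]
        rw [habs]
        have h1t : 1 - t = (δ/2) / (ρ + δ/2) := by
          rw [ht]; field_simp; ring
        calc (1 - t) * d < (1 - t) * (ρ + δ/2) := by
              rcases eq_or_lt_of_le hd0 with he | hl
              · rw [← he]; simp; nlinarith
              · exact (mul_lt_mul_iff_right₀ (by linarith)).mpr hdlt
        _ = δ/2 := by rw [h1t]; field_simp
      -- positive measure intersection minus null bad set
      set V := Metric.ball c ρ ∩ Metric.ball ((s : ℝ) + u) (δ/2) with hV
      have hVopen : IsOpen V := Metric.isOpen_ball.inter Metric.isOpen_ball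
      have hVne : V.Nonempty := ⟨p, hp1, hp2⟩
      have hVpos : 0 < volume V := hVopen.measure_pos volume hVne
      have hNb : volume {x | ¬ (x ∈ Metric.ball c ρ → ζ r x = φ (x + ξ))} = 0 :=
        ae_iff.mp hAE
      have hns : ¬ (V ⊆ {x | ¬ (x ∈ Metric.ball c ρ → ζ r x = φ (x + ξ))}) := by
        intro hsub
        have hle : volume V ≤ volume {x | ¬ (x ∈ Metric.ball c ρ → ζ r x = φ (x + ξ))} :=
          measure_mono hsub
        rw [hNb] at hle
        exact absurd (lt_of_lt_of_le hVpos hle) (lt_irrefl _)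
      obtain ⟨z, hzV, hzn⟩ := Set.not_subset.mp hns
      simp only [Set.mem_setOf_eq, not_not] at hzn
      exact ⟨z, hzV.1, hzV.2, hzn hzV.1⟩
    choose zfun hz1 hz2 hz3 using hpick
    have hAEs : ∀ s : ℚ, ∀ᵐ w : ℝ, ∀ (hs : |(s : ℝ) - (c - u)| < ρ + δ/2),
        qshift S.q ℓ (zfun s hs - w) ≠ 0 → ζ (r - 1) w = φ (w + ξ) := by
      intro s
      by_cases hs : |(s : ℝ) - (c - u)| < ρ + δ/2
      · have hb := hback r (zfun s hs) (hz3 s hs)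
        have hb2 := htrans (zfun s hs) _ hb
        filter_upwards [hb2] with w hw
        intro hs' hq
        have := hw hq
        rw [sub_sub_cancel] at this
        exact this
      · filter_upwards with w hs'
        exact absurd hs' hs
    have hAEall := ae_all_iff.mpr hAEs
    filter_upwards [hAEall] with w hw hwball
    obtain ⟨s, hs_near⟩ := exists_rat_near w (show (0:ℝ) < δ/8 by positivity)
    have hwc : |w - (c - u)| < ρ + δ/4 := by
      have := Metric.mem_ball.mp hwball
      rw [Real.dist_eq] at this
      exact this
    have hsadm : |(s : ℝ) - (c - u)| < ρ + δ/2 := by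
      calc |(s : ℝ) - (c - u)| = |((s : ℝ) - w) + (w - (c - u))| := by ring_nf
      _ ≤ |(s : ℝ) - w| + |w - (c - u)| := abs_add_le _ _
      _ < δ/8 + (ρ + δ/4) := by
          apply add_lt_add _ hwc
          rw [abs_sub_comm]; exact hs_near
      _ ≤ ρ + δ/2 := by linarith
    have hq'pos : 0 < qshift S.q ℓ (zfun s hsadm - w) := by
      apply hU
      have h1 : |zfun s hsadm - ((s : ℝ) + u)| < δ/2 := by
        have := Metric.mem_ball.mp (hz2 s hsadm)
        rw [Real.dist_eq] at this
        exact this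
      calc |zfun s hsadm - w - u| = |(zfun s hsadm - ((s : ℝ) + u)) + ((s : ℝ) - w)| := by ring_nf
      _ ≤ |zfun s hsadm - ((s : ℝ) + u)| + |(s : ℝ) - w| := abs_add_le _ _
      _ < δ/2 + δ/8 := by
          apply add_lt_add h1
          rw [abs_sub_comm]; exact hs_near
      _ < δ := by linarith
    exact hw s hsadm (ne_of_gt hq'pos)
  -- cone
  have hcone : ∀ (j : ℕ) (k : ℕ), k ≤ j + 1 →
      ∀ᵐ x, x ∈ Metric.ball (y₀ - ((k : ℝ) * up + (((j : ℝ) + 1) - (k : ℝ)) * um))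
        (((j : ℝ) + 1) * (δ/4)) → ζ (n₀ - ((j : ℤ) + 1)) x = φ (x + ξ) := by
    have hbase : ∀ u : ℝ, (∀ y, |y - u| < δ → 0 < qshift S.q ℓ y) →
        ∀ᵐ x, x ∈ Metric.ball (y₀ - u) (δ/4) → ζ (n₀ - 1) x = φ (x + ξ) := by
      intro u hU
      have hb2 := htrans y₀ _ (hback n₀ y₀ htouch)
      filter_upwards [hb2] with w hw hball
      have habs : |y₀ - w - u| < δ := by
        rw [Metric.mem_ball, Real.dist_eq] at hball
        calc |y₀ - w - u| = |-(w - (y₀ - u))| := by ring_nf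
        _ = |w - (y₀ - u)| := abs_neg _
        _ < δ := by linarith
      have := hw (ne_of_gt (hU _ habs))
      rw [sub_sub_cancel] at this
      exact this
    intro j
    induction j with
    | zero =>
      intro k hk
      interval_cases k
      · have hb := hbase um hδm
        have hc : y₀ - ((↑(0:ℕ) : ℝ) * up + (((0:ℕ) : ℝ) + 1 - ((0:ℕ) : ℝ)) * um) = y₀ - um := by
          push_cast; ring
        have hr : (((0:ℕ) : ℝ) + 1) * (δ/4) = δ/4 := by push_cast; ring
        rw [hc, hr]
        have hl : n₀ - (((0:ℕ) : ℤ) + 1) = n₀ - 1 := by push_cast; ring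
        rw [hl]
        exact hb
      · have hb := hbase up hδp
        have hc : y₀ - ((↑(1:ℕ) : ℝ) * up + (((0:ℕ) : ℝ) + 1 - ((1:ℕ) : ℝ)) * um) = y₀ - up := by
          push_cast; ring
        have hr : (((0:ℕ) : ℝ) + 1) * (δ/4) = δ/4 := by push_cast; ring
        rw [hc, hr]
        have hl : n₀ - (((0:ℕ) : ℤ) + 1) = n₀ - 1 := by push_cast; ring
        rw [hl]
        exact hb
    | succ jj ih =>
      intro k hk
      rcases Nat.lt_or_ge k (jj + 2) with hklt | hkge
      · -- k ≤ jj + 1 : step left with um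
        have hk' : k ≤ jj + 1 := by omega
        have hs := hstep (n₀ - ((jj : ℤ) + 1))
          (y₀ - ((k : ℝ) * up + (((jj : ℝ) + 1) - (k : ℝ)) * um)) (((jj : ℝ) + 1) * (δ/4))
          (by positivity) um hδm (ih k hk')
        have hc : y₀ - ((k : ℝ) * up + (((jj : ℝ) + 1) - (k : ℝ)) * um) - um
            = y₀ - ((k : ℝ) * up + ((((jj+1:ℕ)) : ℝ) + 1 - (k : ℝ)) * um) := by
          push_cast; ring
        have hr : ((jj : ℝ) + 1) * (δ/4) + δ/4 = ((((jj+1:ℕ)) : ℝ) + 1) * (δ/4) := by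
          push_cast; ring
        have hl : n₀ - ((jj : ℤ) + 1) - 1 = n₀ - ((((jj+1:ℕ)) : ℤ) + 1) := by
          push_cast; ring
        rw [hc, hr, hl] at hs
        exact hs
      · -- k = jj + 2 : step right with up
        have hkeq : k = jj + 2 := by omega
        subst hkeq
        have hs := hstep (n₀ - ((jj : ℤ) + 1))
          (y₀ - (((jj+1:ℕ) : ℝ) * up + (((jj : ℝ) + 1) - ((jj+1:ℕ) : ℝ)) * um))
          (((jj : ℝ) + 1) * (δ/4))
          (by positivity) up hδp (ih (jj+1) le_rfl)
        have hc : y₀ - (((jj+1:ℕ) : ℝ) * up + (((jj : ℝ) + 1) - ((jj+1:ℕ) : ℝ)) * um) - up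
            = y₀ - ((((jj+2:ℕ)) : ℝ) * up + ((((jj+1:ℕ)) : ℝ) + 1 - (((jj+2:ℕ)) : ℝ)) * um) := by
          push_cast; ring
        have hr : ((jj : ℝ) + 1) * (δ/4) + δ/4 = ((((jj+1:ℕ)) : ℝ) + 1) * (δ/4) := by
          push_cast; ring
        have hl : n₀ - ((jj : ℤ) + 1) - 1 = n₀ - ((((jj+1:ℕ)) : ℤ) + 1) := by
          push_cast; ring
        rw [hc, hr, hl] at hs
        exact hs
  -- drift constant
  set τ := min up (-um) with hτdef
  have hτ0 : 0 < τ := lt_min huppos (by linarith)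
  have hτup : τ ≤ up := min_le_left _ _
  have hτum : τ ≤ -um := min_le_right _ _
  -- covering lemma
  have hcover : ∀ j : ℕ, up - um ≤ ((j : ℝ) + 1) * (δ/4) → ∀ x : ℝ,
      |x - y₀| < ((j : ℝ) + 1) * τ → ∃ k : ℕ, k ≤ j + 1 ∧
      |x - (y₀ - ((k : ℝ) * up + (((j : ℝ) + 1) - (k : ℝ)) * um))| < ((j : ℝ) + 1) * (δ/4) := by
    intro j hj x hx
    set J : ℝ := (j : ℝ) + 1 with hJ
    have hJ0 : 0 < J := by positivity
    set cc : ℕ → ℝ := fun k => y₀ - ((k : ℝ) * up + (J - (k : ℝ)) * um) with hcc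
    set P : ℕ → Prop := fun k => x ≤ cc k with hP
    have hP0 : P 0 := by
      show x ≤ cc 0
      have h1 : cc 0 = y₀ + J * (-um) := by rw [hcc]; push_cast; ring
      have h2 : x - y₀ < J * τ := lt_of_le_of_lt (le_abs_self _) hx
      have h3 : J * τ ≤ J * (-um) := by
        apply mul_le_mul_of_nonneg_left hτum (le_of_lt hJ0)
      rw [h1]; linarith
    set ks := Nat.findGreatest P (j + 1) with hks
    have hksle : ks ≤ j + 1 := Nat.findGreatest_le (j + 1)
    have hPks : P ks := Nat.findGreatest_spec (Nat.zero_le _) hP0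
    have hkslt : ks < j + 1 := by
      rcases Nat.lt_or_ge ks (j + 1) with hlt | hge
      · exact hlt
      · exfalso
        have hkeq : ks = j + 1 := le_antisymm hksle hge
        have h1 : cc (j + 1) = y₀ - J * up := by rw [hcc]; push_cast [hJ]; ring
        have h2 : y₀ - x < J * τ := by
          have := neg_abs_le (x - y₀)
          have h3 : -(J * τ) < x - y₀ := by linarith [hx, neg_abs_le (x - y₀)]
          linarith
        have h4 : J * τ ≤ J * up := mul_le_mul_of_nonneg_left hτup (le_of_lt hJ0)
        have h5 : x ≤ cc (j + 1) := by rw [← hkeq]; exact hPks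
        rw [h1] at h5
        linarith
    have hnot : ¬ P (ks + 1) :=
      Nat.findGreatest_is_greatest (Nat.lt_succ_self ks) (by omega)
    have hdiff : cc ks - cc (ks + 1) = up - um := by rw [hcc]; push_cast; ring
    have hup2 : cc (ks + 1) < x := by
      by_contra hcon
      push_neg at hcon
      exact hnot hcon
    refine ⟨ks, by omega, ?_⟩
    have h1 : x ≤ cc ks := hPks
    have h2 : cc ks - x < up - um := by linarith
    have h3 : |x - cc ks| = cc ks - x := by
      rw [abs_sub_comm, abs_of_nonneg (by linarith)]
    show |x - cc ks| < J * (δ/4)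
    rw [h3]
    exact lt_of_lt_of_le h2 hj
  -- asymptotic constants
  obtain ⟨T1, hT1⟩ : ∃ T1 : ℝ, ∀ t, T1 ≤ t → 1 - η ≤ φ t := by
    have := h.limit_top.eventually_const_lt (show 1 - η < 1 by linarith)
    obtain ⟨a, ha⟩ := eventually_atTop.mp this
    exact ⟨a, fun t ht => le_of_lt (ha t ht)⟩
  obtain ⟨T0, hT0⟩ : ∃ T0 : ℝ, ∀ t, t ≤ T0 → φ t ≤ η := by
    have := h.limit_bot.eventually_lt_const hη0
    obtain ⟨a, ha⟩ := eventually_atBot.mp this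
    exact ⟨a, fun t ht => le_of_lt (ha t ht)⟩
  set R := max 1 (max (T1 + D + |ξm| + 1) (D + |ξ| + |T0| + 1)) with hRdef
  have hR1 : (1:ℝ) ≤ R := le_max_left _ _
  have hRright : ∀ x : ℝ, R ≤ x → 1 - η ≤ φ (x - D + ξm) := by
    intro x hx
    apply hT1
    have h1 : T1 + D + |ξm| + 1 ≤ R := le_trans (le_max_left _ _) (le_max_right _ _)
    have h2 : -|ξm| ≤ ξm := neg_abs_le ξm
    linarith
  have hRleft : ∀ x : ℝ, x ≤ -R → φ (x + D + ξ) ≤ η := by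
    intro x hx
    apply hT0
    have h1 : D + |ξ| + |T0| + 1 ≤ R := le_trans (le_max_right _ _) (le_max_right _ _)
    have h2 : ξ ≤ |ξ| := le_abs_self ξ
    have h3 : -|T0| ≤ T0 := neg_abs_le T0
    linarith
  -- junk strip bound
  obtain ⟨Cstrip, hCs0, hstrip⟩ : ∃ C : ℝ, 0 ≤ C ∧
      ∀ x, φ (x + ξm) = 0 → 0 < φ (x + ξ) → |x - y₀| ≤ C := by
    by_cases hzset : ∃ t, φ t = 0
    · have hbdd : BddAbove {t | φ t = 0} := by
        refine ⟨T1, fun z hz => ?_⟩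
        by_contra hcon
        push_neg at hcon
        have := hT1 z (le_of_lt hcon)
        rw [Set.mem_setOf_eq] at hz
        rw [hz] at this
        linarith
      set β₀ := sSup {t | φ t = 0} with hβ₀
      have hβmem : φ β₀ = 0 :=
        (isClosed_eq hcontφ continuous_const).csSup_mem hzset hbdd
      refine ⟨|β₀ - ξ - y₀| + |β₀ - ξm - y₀| + 1, by positivity, ?_⟩
      intro x hxm hxξ
      have h1 : x + ξm ≤ β₀ := le_csSup hbdd hxm
      have h2 : β₀ < x + ξ := by
        by_contra hcon
        push_neg at hcon
        have : φ (x + ξ) ≤ φ β₀ := h.mono hcon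
        rw [hβmem] at this
        linarith
      rw [abs_le]
      constructor
      · have h3 := neg_abs_le (β₀ - ξ - y₀)
        have h4 := abs_nonneg (β₀ - ξm - y₀)
        linarith
      · have h3 := le_abs_self (β₀ - ξm - y₀)
        have h4 := abs_nonneg (β₀ - ξ - y₀)
        linarith
    · refine ⟨1, zero_le_one, fun x hxm _ => ?_⟩
      exact absurd ⟨x + ξm, hxm⟩ hzset
  -- choose j₀
  obtain ⟨j₀, hj₀⟩ := exists_nat_gt ((up - um)/(δ/4) + (R + |y₀| + Cstrip + 1)/τ)
  have hterm1 : 0 ≤ (up - um)/(δ/4) := by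
    apply div_nonneg (by linarith) (by positivity)
  have hterm2 : 0 ≤ (R + |y₀| + Cstrip + 1)/τ := by
    apply div_nonneg (by positivity) (le_of_lt hτ0)
  -- the one-step contraction
  have hcontr : ∀ (c : ℝ), 0 ≤ c → ∀ r : ℤ, r ≤ n₀ - ((j₀ : ℤ) + 1) →
      (∀ᵐ w, φ (w + ξ) - ζ (r - 1) w ≤ c) → (∀ᵐ w, φ (w + ξ) - ζ r w ≤ κ * c) := by
    intro c hc r hr hprev
    set jj : ℕ := (n₀ - r - 1).toNat with hjjdef
    have hjj1 : (jj : ℤ) = n₀ - r - 1 := Int.toNat_of_nonneg (by omega)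
    have hrlev : n₀ - ((jj : ℤ) + 1) = r := by omega
    have hJge : (j₀ : ℝ) ≤ (jj : ℝ) + 1 := by
      have h1 : (j₀ : ℤ) ≤ (jj : ℤ) + 1 := by omega
      exact_mod_cast h1
    have hJsum : (up - um)/(δ/4) + (R + |y₀| + Cstrip + 1)/τ ≤ (jj : ℝ) + 1 :=
      le_trans (le_of_lt hj₀) hJge
    have hδ4 : (0:ℝ) < δ/4 := by positivity
    have hA : up - um ≤ ((jj : ℝ) + 1) * (δ/4) := by
      have h1 : (up - um)/(δ/4) ≤ (jj : ℝ) + 1 := by linarith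
      calc up - um = (up - um)/(δ/4) * (δ/4) := (div_mul_cancel₀ _ (ne_of_gt hδ4)).symm
      _ ≤ ((jj : ℝ) + 1) * (δ/4) := mul_le_mul_of_nonneg_right h1 (le_of_lt hδ4)
    have hB : R + |y₀| + Cstrip + 1 ≤ ((jj : ℝ) + 1) * τ := by
      have h1 : (R + |y₀| + Cstrip + 1)/τ ≤ (jj : ℝ) + 1 := by linarith
      calc R + |y₀| + Cstrip + 1 = (R + |y₀| + Cstrip + 1)/τ * τ :=
            (div_mul_cancel₀ _ (ne_of_gt hτ0)).symm
      _ ≤ ((jj : ℝ) + 1) * τ := mul_le_mul_of_nonneg_right h1 (le_of_lt hτ0)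
    have hconeAll : ∀ᵐ x : ℝ, ∀ k : ℕ, k ≤ jj + 1 →
        (x ∈ Metric.ball (y₀ - ((k : ℝ) * up + (((jj : ℝ) + 1) - (k : ℝ)) * um))
          (((jj : ℝ) + 1) * (δ/4)) → ζ (n₀ - ((jj : ℤ) + 1)) x = φ (x + ξ)) := by
      rw [ae_all_iff]
      intro k
      by_cases hk : k ≤ jj + 1
      · filter_upwards [hcone jj k hk] with x hx
        intro _ hmem
        exact hx hmem
      · filter_upwards with x hk2
        exact absurd hk2 hk
    filter_upwards [hconeAll] with x hxcone
    by_cases hxball : |x - y₀| < ((jj : ℝ) + 1) * τ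
    · obtain ⟨k, hk, hxk⟩ := hcover jj hA x hxball
      have hz := hxcone k hk (by rw [Metric.mem_ball, Real.dist_eq]; exact hxk)
      rw [hrlev] at hz
      rw [hz, sub_self]
      exact mul_nonneg hκ0 hc
    · push_neg at hxball
      have htri : |x - y₀| ≤ |x| + |y₀| := by
        calc |x - y₀| = |x + (-y₀)| := by ring_nf
        _ ≤ |x| + |-y₀| := abs_add_le _ _
        _ = |x| + |y₀| := by rw [abs_neg]
      have hxR : R ≤ |x| := by
        have h9 := le_trans hB hxball
        linarith
      have hxCs : Cstrip + 1 ≤ |x - y₀| := by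
        have h9 := le_trans hB hxball
        have hR0 : (0:ℝ) < R := lt_of_lt_of_le one_pos hR1
        have h8 := abs_nonneg y₀
        linarith
      rcases le_or_gt R x with hxpos | hxy
      · -- right contraction zone
        have hnj : Integrable (fun y => qshift S.q ℓ y * ζ (r - 1) (x - y)) := by
          by_contra hni
          obtain ⟨_, hφm⟩ := hjunk (r - 1) x hni
          have h1 : 1 - η ≤ φ (x + ξm) :=
            le_trans (hRright x hxpos) (h.mono (by linarith : x - D + ξm ≤ x + ξm))
          rw [hφm] at h1
          linarith
        have hA0 : 0 ≤ ∫ y, qshift S.q ℓ y * ζ (r - 1) (x - y) :=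
          integral_nonneg fun y => mul_nonneg (hq'nn y) (hζ0 _ _)
        have hAle : (∫ y, qshift S.q ℓ y * ζ (r - 1) (x - y)) ≤
            ∫ y, qshift S.q ℓ y * φ ((x - y) + ξ) := by
          apply integral_mono hnj (hψint x)
          intro y
          exact mul_le_mul_of_nonneg_left (hup _ _) (hq'nn y)
        have hAlb : 1 - η ≤ ∫ y, qshift S.q ℓ y * ζ (r - 1) (x - y) := by
          have hmono : (∫ y, qshift S.q ℓ y * (1 - η)) ≤
              ∫ y, qshift S.q ℓ y * ζ (r - 1) (x - y) := by
            apply integral_mono (hq'int.mul_const _) hnj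
            intro y
            by_cases hqy : qshift S.q ℓ y = 0
            · simp only; rw [hqy]; simp
            · have hyD : |y| < D := by
                by_contra hcon
                push_neg at hcon
                exact hqy (hDsupp y hcon)
              apply mul_le_mul_of_nonneg_left _ (hq'nn y)
              have h6 : -|y| ≤ y ∧ y ≤ |y| := ⟨neg_abs_le y, le_abs_self y⟩
              have h5 : x - D + ξm ≤ (x - y) + ξm := by
                have := h6.2
                linarith
              exact le_trans (hRright x hxpos) (le_trans (h.mono h5) (hbound (r-1) (x-y)).1)
          calc 1 - η = ∫ y, qshift S.q ℓ y * (1 - η) := by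
                rw [integral_mul_const, hq'one]; ring
          _ ≤ _ := hmono
        have hζrx : ζ r x = S.g (∫ y, qshift S.q ℓ y * ζ (r - 1) (x - y)) := by
          have := hrec (r - 1) x
          rw [sub_add_cancel] at this
          exact this
        have hQx1 := hQ1 x
        have hQx0 := hQ0 x
        have hgoal : φ (x + ξ) - ζ r x ≤ κ * ((∫ y, qshift S.q ℓ y * φ ((x - y) + ξ)) -
            ∫ y, qshift S.q ℓ y * ζ (r - 1) (x - y)) := by
          rw [hψwave x, hζrx, SMPaux.gP S hQx0 hQx1, SMPaux.gP S hA0 (le_trans hAle hQx1)]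
          exact hLipHigh _ _ hAlb hAle hQx1
        have hdiffle : (∫ y, qshift S.q ℓ y * φ ((x - y) + ξ)) -
            (∫ y, qshift S.q ℓ y * ζ (r - 1) (x - y)) ≤ c := by
          rw [← integral_sub (hψint x) hnj]
          have hbnd : ∀ᵐ y, qshift S.q ℓ y * φ ((x - y) + ξ) -
              qshift S.q ℓ y * ζ (r - 1) (x - y) ≤ qshift S.q ℓ y * c := by
            have hpp := htrans x _ hprev
            filter_upwards [hpp] with y hy
            have h7 : qshift S.q ℓ y * (φ ((x - y) + ξ) - ζ (r - 1) (x - y)) ≤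
                qshift S.q ℓ y * c := mul_le_mul_of_nonneg_left hy (hq'nn y)
            linarith [h7, mul_sub (qshift S.q ℓ y) (φ ((x - y) + ξ)) (ζ (r - 1) (x - y))]
          calc (∫ y, (qshift S.q ℓ y * φ ((x - y) + ξ) - qshift S.q ℓ y * ζ (r - 1) (x - y)))
              ≤ ∫ y, qshift S.q ℓ y * c :=
                integral_mono_ae ((hψint x).sub hnj) (hq'int.mul_const _) hbnd
          _ = c := by rw [integral_mul_const, hq'one]; ring
        calc φ (x + ξ) - ζ r x ≤ _ := hgoal
        _ ≤ κ * c := mul_le_mul_of_nonneg_left hdiffle hκ0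
      · -- left zone
        have hxneg : x ≤ -R := by
          rcases le_abs.mp hxR with h1 | h1
          · linarith
          · linarith
        by_cases hnj : Integrable (fun y => qshift S.q ℓ y * ζ (r - 1) (x - y))
        · have hA0 : 0 ≤ ∫ y, qshift S.q ℓ y * ζ (r - 1) (x - y) :=
            integral_nonneg fun y => mul_nonneg (hq'nn y) (hζ0 _ _)
          have hAle : (∫ y, qshift S.q ℓ y * ζ (r - 1) (x - y)) ≤
              ∫ y, qshift S.q ℓ y * φ ((x - y) + ξ) := by
            apply integral_mono hnj (hψint x)
            intro y
            exact mul_le_mul_of_nonneg_left (hup _ _) (hq'nn y)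
          have hQub : (∫ y, qshift S.q ℓ y * φ ((x - y) + ξ)) ≤ η := by
            have hmono : (∫ y, qshift S.q ℓ y * φ ((x - y) + ξ)) ≤
                ∫ y, qshift S.q ℓ y * φ (x + D + ξ) := by
              apply integral_mono (hψint x) (hq'int.mul_const _)
              intro y
              by_cases hqy : qshift S.q ℓ y = 0
              · simp only; rw [hqy]; simp
              · have hyD : |y| < D := by
                  by_contra hcon
                  push_neg at hcon
                  exact hqy (hDsupp y hcon)
                apply mul_le_mul_of_nonneg_left _ (hq'nn y)
                apply h.mono
                have h6 := neg_abs_le y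
                linarith
            calc (∫ y, qshift S.q ℓ y * φ ((x - y) + ξ)) ≤
                ∫ y, qshift S.q ℓ y * φ (x + D + ξ) := hmono
            _ = φ (x + D + ξ) := by rw [integral_mul_const, hq'one]; ring
            _ ≤ η := hRleft x hxneg
          have hζrx : ζ r x = S.g (∫ y, qshift S.q ℓ y * ζ (r - 1) (x - y)) := by
            have := hrec (r - 1) x
            rw [sub_add_cancel] at this
            exact this
          have hQx1 := hQ1 x
          have hQx0 := hQ0 x
          have hgoal : φ (x + ξ) - ζ r x ≤ κ * ((∫ y, qshift S.q ℓ y * φ ((x - y) + ξ)) -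
              ∫ y, qshift S.q ℓ y * ζ (r - 1) (x - y)) := by
            rw [hψwave x, hζrx, SMPaux.gP S hQx0 hQx1, SMPaux.gP S hA0 (le_trans hAle hQx1)]
            exact hLipLow _ _ hA0 hAle hQub
          have hdiffle : (∫ y, qshift S.q ℓ y * φ ((x - y) + ξ)) -
              (∫ y, qshift S.q ℓ y * ζ (r - 1) (x - y)) ≤ c := by
            rw [← integral_sub (hψint x) hnj]
            have hbnd : ∀ᵐ y, qshift S.q ℓ y * φ ((x - y) + ξ) -
                qshift S.q ℓ y * ζ (r - 1) (x - y) ≤ qshift S.q ℓ y * c := by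
              have hpp := htrans x _ hprev
              filter_upwards [hpp] with y hy
              have h7 : qshift S.q ℓ y * (φ ((x - y) + ξ) - ζ (r - 1) (x - y)) ≤
                  qshift S.q ℓ y * c := mul_le_mul_of_nonneg_left hy (hq'nn y)
              linarith [h7, mul_sub (qshift S.q ℓ y) (φ ((x - y) + ξ)) (ζ (r - 1) (x - y))]
            calc (∫ y, (qshift S.q ℓ y * φ ((x - y) + ξ) - qshift S.q ℓ y * ζ (r - 1) (x - y)))
                ≤ ∫ y, qshift S.q ℓ y * c :=
                  integral_mono_ae ((hψint x).sub hnj) (hq'int.mul_const _) hbnd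
            _ = c := by rw [integral_mul_const, hq'one]; ring
          calc φ (x + ξ) - ζ r x ≤ _ := hgoal
          _ ≤ κ * c := mul_le_mul_of_nonneg_left hdiffle hκ0
        · obtain ⟨hz0', hφm0⟩ := hjunk (r - 1) x hnj
          rw [sub_add_cancel] at hz0'
          rw [hz0', sub_zero]
          by_cases hψx : φ (x + ξ) ≤ 0
          · exact le_trans hψx (mul_nonneg hκ0 hc)
          · push_neg at hψx
            exfalso
            have := hstrip x hφm0 hψx
            linarith
  -- bounded by 1
  have hh1 : ∀ (r : ℤ) (w : ℝ), φ (w + ξ) - ζ r w ≤ 1 := by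
    intro r w
    have := hζ0 r w
    have := hφ1 (w + ξ)
    linarith
  -- geometric decay
  have hpow : ∀ i : ℕ, ∀ r : ℤ, r ≤ n₀ - ((j₀ : ℤ) + 1) → ∀ᵐ w, φ (w + ξ) - ζ r w ≤ κ ^ i := by
    intro i
    induction i with
    | zero => intro r _; exact ae_of_all _ (fun w => by simpa using hh1 r w)
    | succ ii ih =>
      intro r hr
      have hmain := hcontr (κ ^ ii) (by positivity) r hr (ih (r - 1) (by omega))
      have hpoweq : κ * κ ^ ii = κ ^ (ii + 1) := by ring
      rw [hpoweq] at hmain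
      exact hmain
  have hlow : ∀ r : ℤ, r ≤ n₀ - ((j₀ : ℤ) + 1) → ∀ᵐ w, ζ r w = φ (w + ξ) := by
    intro r hr
    have hall := ae_all_iff.mpr (fun i : ℕ => hpow i r hr)
    filter_upwards [hall] with w hw
    have hle : φ (w + ξ) - ζ r w ≤ 0 := by
      apply ge_of_tendsto (tendsto_pow_atTop_nhds_zero_of_lt_one hκ0 hκ1)
      exact Filter.Eventually.of_forall hw
    exact le_antisymm (hup r w) (by linarith)
  have hFstep : ∀ r : ℤ, (∀ᵐ w, ζ r w = φ (w + ξ)) → ∀ x, ζ (r + 1) x = φ (x + ξ) := by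
    intro r hae x
    have h1 : ζ (r + 1) x = S.g (conv (qshift S.q ℓ) (ζ r) x) := hrec r x
    have h2 : conv (qshift S.q ℓ) (ζ r) x = ∫ y, qshift S.q ℓ y * φ ((x - y) + ξ) := by
      apply integral_congr_ae
      have := htrans x _ hae
      filter_upwards [this] with y hy
      rw [hy]
    rw [h1, h2, ← hψwave x]
  have hQstep : ∀ i : ℕ, ∀ r : ℤ, r ≤ n₀ - ((j₀ : ℤ) + 1) + i → ∀ᵐ w, ζ r w = φ (w + ξ) := by
    intro i
    induction i with
    | zero => intro r hr; exact hlow r (by omega)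
    | succ ii ih =>
      intro r hr
      have hr1 : r - 1 ≤ n₀ - ((j₀ : ℤ) + 1) + ii := by omega
      have h2 := hFstep (r - 1) (ih (r - 1) hr1)
      have h3 : ∀ x, ζ r x = φ (x + ξ) := by
        intro x
        have h4 := h2 x
        rw [sub_add_cancel] at h4
        exact h4
      exact ae_of_all _ h3
  intro n x
  have hi : n - 1 ≤ n₀ - ((j₀ : ℤ) + 1) + ((n - 1 - (n₀ - ((j₀ : ℤ) + 1))).toNat : ℤ) := by
    have := Int.self_le_toNat (n - 1 - (n₀ - ((j₀ : ℤ) + 1)))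
    omega
  have hfin := hFstep (n - 1) (hQstep _ (n - 1) hi) x
  rw [sub_add_cancel] at hfin
  exact hfin
end
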